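/- arXiv:2601.10910 — 6 statements merged into one kernel-verified Lean document; each statement's English description precedes it below -/
import Mathlib

section
/- Assume in addition a ≥ 1. Then for every t, η ∈ ℝ one has 0 ≤ (e^{−π²σ²(η−ξ₀)²} + a·e^{−π²σ²(η−ξ₁)²}) − |V(t,η)| ≤ 2a·e^{−π²σ²(Δ/2)²}; in particular the modulus |V(t,η)| differs from the sum of the moduli of the two single-component STFTs, e^{−π²σ²(η−ξ₀)²} and a·e^{−π²σ²(η−ξ₁)²}, by at most 2a·e^{−π²σ²Δ²/4} uniformly in (t,η). -/
noncomputable section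

open MeasureTheory

/-- The closed-form STFT of the two-component harmonic signal
`f(x) = e^{2πiξ₀x} + a e^{2πiξ₁x}` with Gaussian window of bandwidth parameter `σ`. -/
def Vst (ξ₀ ξ₁ a σ t η : ℝ) : ℂ :=
  Complex.exp (2 * Real.pi * Complex.I * ξ₀ * t) *
    ((Real.exp (-(Real.pi ^ 2 * σ ^ 2 * (η - ξ₀) ^ 2)) : ℂ) +
      (a : ℂ) * Complex.exp (2 * Real.pi * Complex.I * (ξ₁ - ξ₀) * t) *
        (Real.exp (-(Real.pi ^ 2 * σ ^ 2 * (η - ξ₁) ^ 2)) : ℂ))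

lemma norm_exp_I_mul (r : ℝ) : ‖Complex.exp (2 * Real.pi * Complex.I * r)‖ = 1 := by
  rw [Complex.norm_exp]
  have : (2 * Real.pi * Complex.I * r).re = 0 := by simp [Complex.ext_iff]
  simp [this]

/-- for `a ≥ 1`, the modulus of the two-component STFT differs from the sum of
the moduli of the single-component STFTs by at most `2a·e^{−π²σ²(Δ/2)²}`, uniformly in `(t,η)`,
and the difference is nonnegative. -/
theorem stmt0 (ξ₀ ξ₁ a σ : ℝ) (hξ : ξ₀ < ξ₁) (ha : 0 < a) (ha1 : 1 ≤ a) (hσ : 0 < σ) :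
    ∀ t η : ℝ,
      0 ≤ (Real.exp (-(Real.pi ^ 2 * σ ^ 2 * (η - ξ₀) ^ 2)) +
            a * Real.exp (-(Real.pi ^ 2 * σ ^ 2 * (η - ξ₁) ^ 2))) - ‖Vst ξ₀ ξ₁ a σ t η‖ ∧
      (Real.exp (-(Real.pi ^ 2 * σ ^ 2 * (η - ξ₀) ^ 2)) +
            a * Real.exp (-(Real.pi ^ 2 * σ ^ 2 * (η - ξ₁) ^ 2))) - ‖Vst ξ₀ ξ₁ a σ t η‖
        ≤ 2 * a * Real.exp (-(Real.pi ^ 2 * σ ^ 2 * ((ξ₁ - ξ₀) / 2) ^ 2)) := by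
  intro t η
  set c : ℝ := Real.pi ^ 2 * σ ^ 2 with hc
  set A : ℝ := Real.exp (-(c * (η - ξ₀) ^ 2)) with hA
  set B : ℝ := a * Real.exp (-(c * (η - ξ₁) ^ 2)) with hB
  have hApos : 0 < A := Real.exp_pos _
  have hBpos : 0 < B := mul_pos ha (Real.exp_pos _)
  set z : ℂ := Complex.exp (2 * Real.pi * Complex.I * ((ξ₁ : ℂ) - ξ₀) * t) with hz
  have hznorm : ‖z‖ = 1 := by
    have : (2 * Real.pi * Complex.I * ((ξ₁ : ℂ) - ξ₀) * t) =
        (2 * Real.pi * Complex.I * (((ξ₁ - ξ₀) * t : ℝ) : ℂ)) := by push_cast; ring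
    rw [hz, this, norm_exp_I_mul]
  have hVnorm : ‖Vst ξ₀ ξ₁ a σ t η‖ = ‖(A : ℂ) + (B : ℂ) * z‖ := by
    rw [Vst, norm_mul]
    have h1 : ‖Complex.exp (2 * Real.pi * Complex.I * (ξ₀ : ℂ) * t)‖ = 1 := by
      have : (2 * Real.pi * Complex.I * (ξ₀ : ℂ) * t) =
          (2 * Real.pi * Complex.I * ((ξ₀ * t : ℝ) : ℂ)) := by push_cast; ring
      rw [this, norm_exp_I_mul]
    rw [h1, one_mul]
    congr 1
    rw [hA, hB, hz, hc]
    push_cast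
    ring
  have hnormB : ‖(B : ℂ) * z‖ = B := by
    rw [norm_mul, hznorm, mul_one, Complex.norm_real, Real.norm_eq_abs, abs_of_pos hBpos]
  have hnormA : ‖(A : ℂ)‖ = A := by
    rw [Complex.norm_real, Real.norm_eq_abs, abs_of_pos hApos]
  have hub : ‖Vst ξ₀ ξ₁ a σ t η‖ ≤ A + B := by
    rw [hVnorm]
    calc ‖(A : ℂ) + (B : ℂ) * z‖ ≤ ‖(A : ℂ)‖ + ‖(B : ℂ) * z‖ := norm_add_le _ _
    _ = A + B := by rw [hnormA, hnormB]
  have hlb : |A - B| ≤ ‖Vst ξ₀ ξ₁ a σ t η‖ := by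
    rw [hVnorm]
    have h := abs_norm_sub_norm_le ((A : ℂ)) (-((B : ℂ) * z))
    rw [sub_neg_eq_add, norm_neg, hnormA, hnormB] at h
    exact h
  refine ⟨by linarith, ?_⟩
  -- reduce to min bound
  have hmin : A + B - ‖Vst ξ₀ ξ₁ a σ t η‖ ≤ 2 * min A B := by
    rcases le_total A B with h | h
    · have : |A - B| = B - A := by rw [abs_sub_comm]; exact abs_of_nonneg (by linarith)
      rw [min_eq_left h]; linarith [hlb, this ▸ hlb]
    · have habs : |A - B| = A - B := abs_of_nonneg (by linarith)
      rw [min_eq_right h]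
      have := hlb; rw [habs] at this; linarith
  have hkey : min A B ≤ a * Real.exp (-(c * ((ξ₁ - ξ₀) / 2) ^ 2)) := by
    have hcpos : 0 < c := by positivity
    rcases le_total η ((ξ₀ + ξ₁) / 2) with h | h
    · -- (η - ξ₁)² ≥ ((ξ₁-ξ₀)/2)²
      have hsq : ((ξ₁ - ξ₀) / 2) ^ 2 ≤ (η - ξ₁) ^ 2 := by
        have h1 : (ξ₁ - ξ₀) / 2 ≤ ξ₁ - η := by linarith
        have h2 : 0 ≤ (ξ₁ - ξ₀) / 2 := by linarith
        calc ((ξ₁ - ξ₀) / 2) ^ 2 ≤ (ξ₁ - η) ^ 2 := by nlinarith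
        _ = (η - ξ₁) ^ 2 := by ring
      calc min A B ≤ B := min_le_right _ _
      _ ≤ a * Real.exp (-(c * ((ξ₁ - ξ₀) / 2) ^ 2)) := by
          apply mul_le_mul_of_nonneg_left _ ha.le
          apply Real.exp_le_exp.mpr
          nlinarith
    · have hsq : ((ξ₁ - ξ₀) / 2) ^ 2 ≤ (η - ξ₀) ^ 2 := by
        have h1 : (ξ₁ - ξ₀) / 2 ≤ η - ξ₀ := by linarith
        have h2 : 0 ≤ (ξ₁ - ξ₀) / 2 := by linarith
        nlinarith
      calc min A B ≤ A := min_le_left _ _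
      _ ≤ Real.exp (-(c * ((ξ₁ - ξ₀) / 2) ^ 2)) := by
          apply Real.exp_le_exp.mpr; nlinarith
      _ ≤ a * Real.exp (-(c * ((ξ₁ - ξ₀) / 2) ^ 2)) := by
          nlinarith [Real.exp_pos (-(c * ((ξ₁ - ξ₀) / 2) ^ 2))]
  calc A + B - ‖Vst ξ₀ ξ₁ a σ t η‖ ≤ 2 * min A B := hmin
  _ ≤ 2 * a * Real.exp (-(c * ((ξ₁ - ξ₀) / 2) ^ 2)) := by linarith
end
end

section
/- There is a unique s > 0 satisfying ln(s/a) = (1/2)(s − 1/s). Set Δ_c = (1+s)/(πσ√(2s)). Then the function g(η) = e^{−π²σ²(η−ξ₀)²} + a·e^{−π²σ²(η−ξ₁)²} (which equals |V(t_k⁺, η)| at every constructive time t_k⁺) has exactly one local-maximum point on ℝ when Δ ≤ Δ_c, and exactly two local-maximum points on ℝ when Δ > Δ_c. -/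
noncomputable section

open MeasureTheory

/-- The modulus of the STFT at constructive times: sum of two Gaussian bumps. -/
def gSum (ξ₀ ξ₁ a σ η : ℝ) : ℝ :=
  Real.exp (-(Real.pi ^ 2 * σ ^ 2 * (η - ξ₀) ^ 2)) +
    a * Real.exp (-(Real.pi ^ 2 * σ ^ 2 * (η - ξ₁) ^ 2))

set_option linter.unusedSectionVars false
set_option linter.unusedVariables false

namespace Stmt1Aux
open Real Set Filter Topology





/-! ### Generic local-max helpers -/

lemma not_isLocalMax_of_strictMonoOn {g : ℝ → ℝ} {α β η : ℝ}
    (h : StrictMonoOn g (Set.Icc α β)) (h1 : α ≤ η) (h2 : η < β) : ¬ IsLocalMax g η := by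
  intro hmax
  have h' : ∀ᶠ x in 𝓝[>] η, g x ≤ g η := hmax.filter_mono nhdsWithin_le_nhds
  have hmem : Set.Ioo η β ∈ 𝓝[>] η := Ioo_mem_nhdsGT_of_mem ⟨le_refl _, h2⟩
  obtain ⟨x, hx1, hx2⟩ := (h'.and (eventually_mem_set.mpr hmem)).exists
  have : g η < g x := h ⟨h1, h2.le⟩ ⟨h1.trans (le_of_lt hx2.1), hx2.2.le⟩ hx2.1
  linarith

lemma not_isLocalMax_of_strictAntiOn {g : ℝ → ℝ} {α β η : ℝ}
    (h : StrictAntiOn g (Set.Icc α β)) (h1 : α < η) (h2 : η ≤ β) : ¬ IsLocalMax g η := by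
  intro hmax
  have h' : ∀ᶠ x in 𝓝[<] η, g x ≤ g η := hmax.filter_mono nhdsWithin_le_nhds
  have hmem : Set.Ioo α η ∈ 𝓝[<] η := Ioo_mem_nhdsLT_of_mem ⟨h1, le_refl _⟩
  obtain ⟨x, hx1, hx2⟩ := (h'.and (eventually_mem_set.mpr hmem)).exists
  have : g η < g x := h ⟨hx2.1.le, hx2.2.le.trans h2⟩ ⟨h1.le, h2⟩ hx2.2
  linarith

lemma isLocalMax_of_mono_anti {g : ℝ → ℝ} {α r β : ℝ} (hα : α < r) (hβ : r < β)
    (hm : MonotoneOn g (Set.Ioc α r)) (ha : AntitoneOn g (Set.Ico r β)) : IsLocalMax g r := by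
  filter_upwards [Ioo_mem_nhds hα hβ] with x hx
  rcases le_total x r with h | h
  · exact hm ⟨hx.1, h⟩ ⟨hα, le_refl _⟩ h
  · exact ha ⟨le_refl _, hβ⟩ ⟨h, hx.2⟩ h

lemma unique_max_of {g : ℝ → ℝ} {r : ℝ} (hmono : StrictMonoOn g (Set.Iic r))
    (hanti : StrictAntiOn g (Set.Ici r)) : ∃! u : ℝ, IsLocalMax g u := by
  refine ⟨r, ?_, ?_⟩
  · exact isLocalMax_of_mono_anti (show r - 1 < r by linarith) (show r < r + 1 by linarith)
      ((hmono.monotoneOn).mono (by intro x hx; exact hx.2))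
      ((hanti.antitoneOn).mono (by intro x hx; exact hx.1))
  · intro η hη
    by_contra hne
    rcases lt_or_gt_of_ne hne with h | h
    · exact not_isLocalMax_of_strictMonoOn
        (hmono.mono (by intro x hx; exact hx.2 : Set.Icc (η - 1) r ⊆ Set.Iic r))
        (by linarith) h hη
    · exact not_isLocalMax_of_strictAntiOn
        (hanti.mono (by intro x hx; exact hx.1 : Set.Icc r (η + 1) ⊆ Set.Ici r))
        h (by linarith) hη

lemma two_max_of {g : ℝ → ℝ} {r₁ r₂ r₃ : ℝ} (h12 : r₁ < r₂) (h23 : r₂ < r₃)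
    (hm1 : StrictMonoOn g (Set.Iic r₁)) (ha1 : StrictAntiOn g (Set.Icc r₁ r₂))
    (hm2 : StrictMonoOn g (Set.Icc r₂ r₃)) (ha2 : StrictAntiOn g (Set.Ici r₃)) :
    ∃ η₁ η₂ : ℝ, η₁ ≠ η₂ ∧ IsLocalMax g η₁ ∧ IsLocalMax g η₂ ∧
      ∀ η : ℝ, IsLocalMax g η → η = η₁ ∨ η = η₂ := by
  refine ⟨r₁, r₃, by linarith, ?_, ?_, ?_⟩
  · exact isLocalMax_of_mono_anti (show r₁ - 1 < r₁ by linarith) h12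
      ((hm1.monotoneOn).mono (by intro x hx; exact hx.2))
      ((ha1.antitoneOn).mono (by intro x hx; exact ⟨hx.1, hx.2.le⟩))
  · exact isLocalMax_of_mono_anti h23 (show r₃ < r₃ + 1 by linarith)
      ((hm2.monotoneOn).mono (by intro x hx; exact ⟨hx.1.le, hx.2⟩))
      ((ha2.antitoneOn).mono (by intro x hx; exact hx.1))
  · intro η hη
    by_contra hne
    push_neg at hne
    obtain ⟨hne1, hne3⟩ := hne
    rcases lt_trichotomy η r₁ with h | h | h
    · exact not_isLocalMax_of_strictMonoOn
        (hm1.mono (by intro x hx; exact hx.2 : Set.Icc (η - 1) r₁ ⊆ Set.Iic r₁))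
        (by linarith) h hη
    · exact hne1 h
    rcases le_or_gt η r₂ with h2 | h2
    · exact not_isLocalMax_of_strictAntiOn ha1 h h2 hη
    rcases lt_trichotomy η r₃ with h3 | h3 | h3
    · exact not_isLocalMax_of_strictMonoOn hm2 h2.le h3 hη
    · exact hne3 h3
    · exact not_isLocalMax_of_strictAntiOn
        (ha2.mono (by intro x hx; exact hx.1 : Set.Icc r₃ (η + 1) ⊆ Set.Ici r₃))
        h3 (by linarith) hη


/-- normalized form of the transition function -/
noncomputable def phi0 (a s : ℝ) : ℝ := Real.log s - Real.log a - (1/2) * (s - 1/s)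

lemma hasDerivAt_phi0 {a s : ℝ} (hs : s ≠ 0) :
    HasDerivAt (phi0 a) (s⁻¹ - (1/2) * (1 - (-(1/s^2)))) s := by
  have h1 : HasDerivAt (fun x : ℝ => 1/x) (-(1/s^2)) s := by
    simpa using (hasDerivAt_inv hs)
  have h2 : HasDerivAt (fun x : ℝ => x - 1/x) (1 - (-(1/s^2))) s := (hasDerivAt_id s).sub h1
  exact ((Real.hasDerivAt_log hs).sub_const (Real.log a)).sub (h2.const_mul (1/2))

lemma deriv_phi0_neg {a s : ℝ} (hs : 0 < s) (hne : s ≠ 1) : deriv (phi0 a) s < 0 := by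
  rw [(hasDerivAt_phi0 (ne_of_gt hs)).deriv]
  have key : s⁻¹ - (1/2) * (1 - (-(1/s^2))) = -((s-1)^2 / (2*s^2)) := by
    field_simp; ring
  rw [key]
  have h1 : 0 < (s-1)^2 := by
    have : s - 1 ≠ 0 := sub_ne_zero.mpr hne
    positivity
  have h2 : 0 < 2*s^2 := by positivity
  have := div_pos h1 h2
  linarith

lemma phi0_strictAntiOn {a : ℝ} : StrictAntiOn (phi0 a) (Set.Ioi 0) := by
  have hca : ∀ x : ℝ, 0 < x → ContinuousAt (phi0 a) x := fun x hx =>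
    (hasDerivAt_phi0 (ne_of_gt hx)).continuousAt
  have h1 : StrictAntiOn (phi0 a) (Set.Ioc 0 1) := by
    apply strictAntiOn_of_deriv_neg (convex_Ioc 0 1)
      (fun x hx => (hca x hx.1).continuousWithinAt)
    intro x hx
    rw [interior_Ioc] at hx
    exact deriv_phi0_neg hx.1 (ne_of_lt hx.2)
  have h2 : StrictAntiOn (phi0 a) (Set.Ici 1) := by
    apply strictAntiOn_of_deriv_neg (convex_Ici 1)
      (fun x hx => (hca x (lt_of_lt_of_le one_pos hx)).continuousWithinAt)
    intro x hx
    rw [interior_Ici] at hx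
    exact deriv_phi0_neg (lt_trans one_pos hx) (ne_of_gt hx)
  have := h1.union h2 (isGreatest_Ioc one_pos) isLeast_Ici
  rwa [Set.Ioc_union_Ici_eq_Ioi one_pos] at this

lemma phi0_pos_witness {a : ℝ} : ∃ s : ℝ, 0 < s ∧ s < 1 ∧ 0 < phi0 a s := by
  set L := max 1 (Real.log a) with hL
  have hL1 : 1 ≤ L := le_max_left _ _
  have hLa : Real.log a ≤ L := le_max_right _ _
  set t := 3 + 2*L with ht
  have ht5 : 5 ≤ t := by simp only [ht]; linarith
  have ht0 : 0 < t := by linarith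
  refine ⟨1/t^2, by positivity, ?_, ?_⟩
  · rw [div_lt_one (by positivity)]; nlinarith
  · have hlog : Real.log (1/t^2) = -(2 * Real.log t) := by
      rw [one_div, Real.log_inv, Real.log_pow]; push_cast; ring
    have hlt : Real.log t ≤ t - 1 := Real.log_le_sub_one_of_pos ht0
    have hinv : 1/(1/t^2) = t^2 := by field_simp
    have hsmall : (1/t^2) ≤ 1 := by rw [div_le_one (by positivity)]; nlinarith
    unfold phi0
    rw [hlog, hinv]
    nlinarith

lemma phi0_neg_witness {a : ℝ} : ∃ s : ℝ, 1 < s ∧ phi0 a s < 0 := by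
  set L := max 1 (-Real.log a) with hL
  have hL1 : 1 ≤ L := le_max_left _ _
  have hLa : -Real.log a ≤ L := le_max_right _ _
  set t := 3 + 2*L with ht
  have ht5 : 5 ≤ t := by simp only [ht]; linarith
  have ht0 : 0 < t := by linarith
  refine ⟨t^2, by nlinarith, ?_⟩
  have hlog : Real.log (t^2) = 2 * Real.log t := by
    rw [Real.log_pow]; push_cast; ring
  have hlt : Real.log t ≤ t - 1 := Real.log_le_sub_one_of_pos ht0
  have hinvle : 1/t^2 ≤ 1 := by rw [div_le_one (by positivity)]; nlinarith
  have hinvpos : 0 < 1/t^2 := by positivity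
  unfold phi0
  rw [hlog]
  nlinarith

lemma exists_unique_s {a : ℝ} (ha : 0 < a) :
    ∃! s : ℝ, 0 < s ∧ Real.log (s / a) = (1 / 2) * (s - 1 / s) := by
  have hiff : ∀ s : ℝ, 0 < s →
      (Real.log (s / a) = (1 / 2) * (s - 1 / s) ↔ phi0 a s = 0) := by
    intro s hs
    unfold phi0
    rw [Real.log_div (ne_of_gt hs) (ne_of_gt ha)]
    constructor <;> intro h <;> linarith
  obtain ⟨s₁, hs₁0, hs₁1, hs₁pos⟩ := phi0_pos_witness (a := a)
  obtain ⟨s₂, hs₂1, hs₂neg⟩ := phi0_neg_witness (a := a)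
  have hlt : s₁ ≤ s₂ := by linarith
  have hcont : ContinuousOn (phi0 a) (Set.Icc s₁ s₂) := fun x hx =>
    ((hasDerivAt_phi0 (by intro h; rw [h] at hx; exact absurd hx.1 (by linarith))).continuousAt).continuousWithinAt
  have := intermediate_value_Ioo' hlt hcont
  have h0 : (0:ℝ) ∈ Set.Ioo (phi0 a s₂) (phi0 a s₁) := ⟨hs₂neg, hs₁pos⟩
  obtain ⟨s, hsmem, hs0⟩ := this h0
  have hspos : 0 < s := lt_trans hs₁0 hsmem.1
  refine ⟨s, ⟨hspos, (hiff s hspos).mpr hs0⟩, ?_⟩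
  intro y hy
  have hy0 : phi0 a y = 0 := (hiff y hy.1).mp hy.2
  by_contra hne
  rcases lt_or_gt_of_ne hne with h | h
  · have := phi0_strictAntiOn (a := a) hy.1 hspos h
    rw [hy0, hs0] at this; exact lt_irrefl _ this
  · have := phi0_strictAntiOn (a := a) hspos hy.1 h
    rw [hy0, hs0] at this; exact lt_irrefl _ this


noncomputable def Gn (a D u : ℝ) : ℝ := Real.exp (-u^2) + a * Real.exp (-(u-D)^2)
noncomputable def Pd (a D u : ℝ) : ℝ :=
  u * Real.exp (-u^2) + a * (u-D) * Real.exp (-(u-D)^2)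
noncomputable def Fl (a D u : ℝ) : ℝ :=
  Real.log u - u^2 - Real.log a - Real.log (D-u) + (D-u)^2


lemma hasDerivAt_Gn (a D u : ℝ) : HasDerivAt (Gn a D) (-2 * Pd a D u) u := by
  have h1 : HasDerivAt (fun u : ℝ => -u^2) (-(2*u)) u := by
    simpa [Pi.neg_def, Pi.pow_def] using (hasDerivAt_pow 2 u).neg
  have h2 : HasDerivAt (fun u : ℝ => Real.exp (-u^2)) (Real.exp (-u^2) * (-(2*u))) u := h1.exp
  have h3 : HasDerivAt (fun u : ℝ => -(u-D)^2) (-(2*(u-D))) u := by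
    have := (((hasDerivAt_id u).sub_const D).pow 2).neg
    simpa [Pi.neg_def, Pi.pow_def] using this
  have h4 : HasDerivAt (fun u : ℝ => Real.exp (-(u-D)^2))
      (Real.exp (-(u-D)^2) * (-(2*(u-D)))) u := h3.exp
  have h5 := h2.add (h4.const_mul a)
  have e : -2 * Pd a D u = Real.exp (-u^2) * (-(2*u)) + a * (Real.exp (-(u-D)^2) * (-(2*(u-D)))) := by
    unfold Pd; ring
  rw [e]; exact h5

lemma deriv_Gn (a D u : ℝ) : deriv (Gn a D) u = -2 * Pd a D u := (hasDerivAt_Gn a D u).deriv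

lemma gn_cont (a D : ℝ) : Continuous (Gn a D) := by
  unfold Gn
  exact (Real.continuous_exp.comp (by continuity)).add
    (continuous_const.mul (Real.continuous_exp.comp (by continuity)))

lemma Pd_neg_left {a D u : ℝ} (ha : 0 < a) (hD : 0 < D) (hu : u ≤ 0) : Pd a D u < 0 := by
  unfold Pd
  have e1 := (Real.exp_pos (-u^2)).le
  have e2 := Real.exp_pos (-(u-D)^2)
  nlinarith [mul_nonneg (neg_nonneg.mpr hu) e1,
    mul_pos (mul_pos ha (show 0 < D - u by linarith)) e2]

lemma Pd_pos_right {a D u : ℝ} (ha : 0 < a) (hD : 0 < D) (hu : D ≤ u) : 0 < Pd a D u := by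
  unfold Pd
  have e1 := Real.exp_pos (-u^2)
  have e2 := (Real.exp_pos (-(u-D)^2)).le
  nlinarith [mul_pos (show (0:ℝ) < u by linarith) e1,
    mul_nonneg (mul_nonneg ha.le (show (0:ℝ) ≤ u - D by linarith)) e2]

lemma Fl_iff_Pd {a D u : ℝ} (ha : 0 < a) (hu : 0 < u) (huD : u < D) :
    (Pd a D u < 0 ↔ Fl a D u < 0) ∧ (0 < Pd a D u ↔ 0 < Fl a D u) := by
  have hDu : 0 < D - u := by linarith
  have hA : 0 < u * Real.exp (-u^2) := by positivity
  have hB : 0 < a * (D-u) * Real.exp (-(D-u)^2) := by positivity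
  have hPd : Pd a D u = u * Real.exp (-u^2) - a * (D-u) * Real.exp (-(D-u)^2) := by
    unfold Pd
    rw [show (u - D)^2 = (D - u)^2 by ring]
    ring
  have hFl : Fl a D u =
      Real.log (u * Real.exp (-u^2)) - Real.log (a * (D-u) * Real.exp (-(D-u)^2)) := by
    unfold Fl
    rw [Real.log_mul (ne_of_gt hu) (Real.exp_ne_zero _), Real.log_exp,
        Real.log_mul (by positivity) (Real.exp_ne_zero _),
        Real.log_mul (ne_of_gt ha) (ne_of_gt hDu), Real.log_exp]
    ring
  constructor
  · rw [hPd, hFl, sub_neg, sub_neg, Real.log_lt_log_iff hA hB]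
  · rw [hPd, hFl, sub_pos, sub_pos, Real.log_lt_log_iff hB hA]

lemma hasDerivAt_Fl {a D u : ℝ} (hu : 0 < u) (huD : u < D) :
    HasDerivAt (Fl a D)
      (u⁻¹ - 2*u^1 - (D-u)⁻¹ * (-1) + 2*(D-u)^1*(-1)) u := by
  have hDu : D - u ≠ 0 := ne_of_gt (by linarith)
  have hsub : HasDerivAt (fun x : ℝ => D - x) (-1) u := by
    simpa using (hasDerivAt_id u).const_sub D
  have hlog1 : HasDerivAt (fun x : ℝ => Real.log x) u⁻¹ u := Real.hasDerivAt_log (ne_of_gt hu)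
  have hpow1 : HasDerivAt (fun x : ℝ => x^2) (2*u^1) u := by simpa using hasDerivAt_pow 2 u
  have hlog2 : HasDerivAt (fun x : ℝ => Real.log (D - x)) ((D-u)⁻¹ * (-1)) u :=
    (Real.hasDerivAt_log hDu).comp u hsub
  have hpow2 : HasDerivAt (fun x : ℝ => (D - x)^2) (2*(D-u)^1*(-1)) u := by
    simpa [Pi.pow_def] using hsub.pow 2
  exact (((hlog1.sub hpow1).sub_const (Real.log a)).sub hlog2).add hpow2

lemma deriv_Fl {a D u : ℝ} (hu : 0 < u) (huD : u < D) :
    deriv (Fl a D) u = D*(2*u^2 - 2*D*u + 1)/(u*(D-u)) := by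
  rw [(hasDerivAt_Fl hu huD).deriv]
  have h1 : u ≠ 0 := ne_of_gt hu
  have h2 : D - u ≠ 0 := ne_of_gt (by linarith)
  field_simp
  ring

lemma fl_contAt {a D u : ℝ} (hu : 0 < u) (huD : u < D) : ContinuousAt (Fl a D) u :=
  (hasDerivAt_Fl hu huD).continuousAt

lemma gn_mono_of {a D : ℝ} {S : Set ℝ} (hconv : Convex ℝ S)
    (hsign : ∀ x ∈ interior S, Pd a D x < 0) : StrictMonoOn (Gn a D) S :=
  strictMonoOn_of_deriv_pos hconv (gn_cont a D).continuousOn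
    (fun x hx => by rw [deriv_Gn]; have := hsign x hx; linarith)

lemma gn_anti_of {a D : ℝ} {S : Set ℝ} (hconv : Convex ℝ S)
    (hsign : ∀ x ∈ interior S, 0 < Pd a D x) : StrictAntiOn (Gn a D) S :=
  strictAntiOn_of_deriv_neg hconv (gn_cont a D).continuousOn
    (fun x hx => by rw [deriv_Gn]; have := hsign x hx; linarith)

lemma fl_mono_of {a D : ℝ} {S : Set ℝ} (hS : S ⊆ Set.Ioo 0 D) (hconv : Convex ℝ S)
    (hsign : ∀ x ∈ interior S, 0 < 2*x^2 - 2*D*x + 1) : StrictMonoOn (Fl a D) S := by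
  apply strictMonoOn_of_deriv_pos hconv
    (fun x hx => (fl_contAt (hS hx).1 (hS hx).2).continuousWithinAt)
  intro x hx
  have hx' := hS (interior_subset hx)
  rw [deriv_Fl hx'.1 hx'.2]
  have hD : 0 < D := lt_trans hx'.1 hx'.2
  exact div_pos (mul_pos hD (hsign x hx)) (mul_pos hx'.1 (by linarith [hx'.2]))

lemma fl_anti_of {a D : ℝ} {S : Set ℝ} (hS : S ⊆ Set.Ioo 0 D) (hconv : Convex ℝ S)
    (hsign : ∀ x ∈ interior S, 2*x^2 - 2*D*x + 1 < 0) : StrictAntiOn (Fl a D) S := by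
  apply strictAntiOn_of_deriv_neg hconv
    (fun x hx => (fl_contAt (hS hx).1 (hS hx).2).continuousWithinAt)
  intro x hx
  have hx' := hS (interior_subset hx)
  rw [deriv_Fl hx'.1 hx'.2]
  have hD : 0 < D := lt_trans hx'.1 hx'.2
  exact div_neg_of_neg_of_pos (mul_neg_of_pos_of_neg hD (hsign x hx))
    (mul_pos hx'.1 (by linarith [hx'.2]))

lemma fl_neg_witness {a D b : ℝ} (ha : 0 < a) (hD : 0 < D) (hb : 0 < b) (hbD : b ≤ D) :
    ∃ x : ℝ, 0 < x ∧ x < b ∧ Fl a D x < 0 := by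
  set E := Real.log a + Real.log (D/2) - D^2 - 1 with hE
  set x := min (min (b/2) (D/2)) (Real.exp E) with hx
  have hx0 : 0 < x := lt_min (lt_min (by linarith) (by linarith)) (Real.exp_pos E)
  have hxb : x < b := lt_of_le_of_lt (le_trans (min_le_left _ _) (min_le_left _ _)) (by linarith)
  have hxD2 : x ≤ D/2 := le_trans (min_le_left _ _) (min_le_right _ _)
  have hxE : x ≤ Real.exp E := min_le_right _ _
  refine ⟨x, hx0, hxb, ?_⟩
  have h1 : Real.log x ≤ E := by
    have := (Real.log_le_log_iff hx0 (Real.exp_pos E)).mpr hxE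
    rwa [Real.log_exp] at this
  have h2 : Real.log (D/2) ≤ Real.log (D - x) :=
    (Real.log_le_log_iff (by linarith) (by linarith)).mpr (by linarith)
  have h3 : (D - x)^2 ≤ D^2 := by nlinarith
  have hx2 : (0:ℝ) ≤ x^2 := sq_nonneg x
  unfold Fl
  rw [hE] at h1
  linarith

lemma fl_pos_witness {a D b : ℝ} (ha : 0 < a) (hD : 0 < D) (hb : b < D) :
    ∃ x : ℝ, b < x ∧ x < D ∧ 0 < Fl a D x := by
  set E := Real.log (D/2) - D^2 - Real.log a - 1 with hE
  set ε := min (min ((D-b)/2) (D/2)) (Real.exp E) with hε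
  have hε0 : 0 < ε := lt_min (lt_min (by linarith) (by linarith)) (Real.exp_pos E)
  have hεD2 : ε ≤ D/2 := le_trans (min_le_left _ _) (min_le_right _ _)
  have hεb : ε < D - b := lt_of_le_of_lt (le_trans (min_le_left _ _) (min_le_left _ _)) (by linarith)
  have hεE : ε ≤ Real.exp E := min_le_right _ _
  refine ⟨D - ε, by linarith, by linarith, ?_⟩
  have h1 : Real.log (D/2) ≤ Real.log (D - ε) :=
    (Real.log_le_log_iff (by linarith) (by linarith)).mpr (by linarith)
  have h2 : Real.log ε ≤ E := by
    have := (Real.log_le_log_iff hε0 (Real.exp_pos E)).mpr hεE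
    rwa [Real.log_exp] at this
  have h3 : (D - ε)^2 ≤ D^2 := by nlinarith
  have h4 : (0:ℝ) ≤ (D - (D - ε))^2 := sq_nonneg _
  unfold Fl
  rw [show D - (D - ε) = ε by ring]
  rw [hE] at h2
  linarith

lemma fstrict {x y : ℝ} (hx : 0 < x) (h2 : 1 ≤ 2*x^2) (hxy : x < y) :
    x + 1/(2*x) < y + 1/(2*y) := by
  have hy : 0 < y := lt_trans hx hxy
  have hkey : y + 1/(2*y) - (x + 1/(2*x)) = (y - x)*(2*x*y - 1)/(2*x*y) := by
    field_simp; ring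
  have h1 : 0 < (y-x)*(2*x*y-1) := mul_pos (by linarith) (by nlinarith)
  have := div_pos h1 (by positivity : (0:ℝ) < 2*x*y)
  linarith

lemma Fl_at_crit {a D u : ℝ} (ha : 0 < a) (hu : 0 < u) (huD : u < D)
    (hq : 2*u^2 - 2*D*u + 1 = 0) : Fl a D u = phi0 a (2*u^2) := by
  have hu' : u ≠ 0 := ne_of_gt hu
  have hDu : D - u = 1/(2*u) := by
    field_simp
    nlinarith
  unfold Fl phi0
  rw [hDu, one_div, Real.log_inv, Real.log_mul two_ne_zero hu',
      Real.log_mul two_ne_zero (by positivity : u^2 ≠ 0), Real.log_pow]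
  push_cast
  field_simp
  ring


noncomputable def upr (D : ℝ) : ℝ := (D + Real.sqrt (D^2 - 2))/2
noncomputable def umr (D : ℝ) : ℝ := (D - Real.sqrt (D^2 - 2))/2

section quad
variable {D : ℝ} (h2 : 2 < D^2) (hD : 0 < D)
include h2 hD

lemma sq_sqrt' : Real.sqrt (D^2-2) ^ 2 = D^2 - 2 := Real.sq_sqrt (by linarith)

omit hD in
lemma sqrt_pos' : 0 < Real.sqrt (D^2-2) := Real.sqrt_pos.mpr (by linarith)

lemma sqrt_lt_D : Real.sqrt (D^2-2) < D := by
  nlinarith [sq_sqrt' h2 hD, sqrt_pos' h2]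

lemma umr_pos : 0 < umr D := by
  unfold umr; have := sqrt_lt_D h2 hD; linarith

lemma umr_lt_upr : umr D < upr D := by
  unfold umr upr; have := sqrt_pos' h2; linarith

lemma upr_lt_D : upr D < D := by
  unfold upr; have := sqrt_lt_D h2 hD; linarith

lemma upr_gt_half : D/2 < upr D := by
  unfold upr; have := sqrt_pos' h2; linarith

lemma upr_pos : 0 < upr D := lt_trans (umr_pos h2 hD) (umr_lt_upr h2 hD)

lemma quad_factor : ∀ u : ℝ, 2*u^2 - 2*D*u + 1 = 2*(u - umr D)*(u - upr D) := by
  intro u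
  have hsum : umr D + upr D = D := by unfold umr upr; ring
  have hprod : umr D * upr D = 1/2 := by
    have h := sq_sqrt' h2 hD
    unfold umr upr
    nlinarith
  linear_combination 2*u*hsum - 2*hprod

lemma quad_umr : 2*(umr D)^2 - 2*D*(umr D) + 1 = 0 := by
  rw [quad_factor h2 hD]; ring

lemma quad_upr : 2*(upr D)^2 - 2*D*(upr D) + 1 = 0 := by
  rw [quad_factor h2 hD]; ring

lemma umr_inv : umr D = 1/(2 * upr D) := by
  have hprod : umr D * upr D = 1/2 := by
    have h := sq_sqrt' h2 hD
    unfold umr upr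
    nlinarith
  have hupos : 0 < upr D := upr_pos h2 hD
  field_simp
  linarith

lemma upr_sum : upr D + 1/(2 * upr D) = D := by
  have hupos : 0 < upr D := upr_pos h2 hD
  have h := quad_upr h2 hD
  field_simp
  nlinarith

lemma fl_m1 {a : ℝ} : StrictMonoOn (Fl a D) (Set.Ioc 0 (umr D)) := by
  apply fl_mono_of ?_ (convex_Ioc _ _) ?_
  · intro x hx
    exact ⟨hx.1, lt_of_le_of_lt hx.2 (lt_trans (umr_lt_upr h2 hD) (upr_lt_D h2 hD))⟩
  · intro x hx
    rw [interior_Ioc] at hx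
    rw [quad_factor h2 hD x]
    have h1 : x < umr D := hx.2
    have h2' : x < upr D := lt_trans h1 (umr_lt_upr h2 hD)
    nlinarith [mul_pos (show 0 < umr D - x by linarith) (show 0 < upr D - x by linarith)]

lemma fl_fla {a : ℝ} : StrictAntiOn (Fl a D) (Set.Icc (umr D) (upr D)) := by
  apply fl_anti_of ?_ (convex_Icc _ _) ?_
  · intro x hx
    exact ⟨lt_of_lt_of_le (umr_pos h2 hD) hx.1, lt_of_le_of_lt hx.2 (upr_lt_D h2 hD)⟩
  · intro x hx
    rw [interior_Icc] at hx
    rw [quad_factor h2 hD x]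
    nlinarith [mul_pos (show 0 < x - umr D by linarith [hx.1]) (show 0 < upr D - x by linarith [hx.2])]

lemma fl_m2 {a : ℝ} : StrictMonoOn (Fl a D) (Set.Ico (upr D) D) := by
  apply fl_mono_of ?_ (convex_Ico _ _) ?_
  · intro x hx
    exact ⟨lt_of_lt_of_le (upr_pos h2 hD) hx.1, hx.2⟩
  · intro x hx
    rw [interior_Ico] at hx
    rw [quad_factor h2 hD x]
    nlinarith [mul_pos (show 0 < x - umr D by linarith [lt_trans (umr_lt_upr h2 hD) hx.1])
      (show 0 < x - upr D by linarith [hx.1])]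

end quad

/-! ### Gn monotonicity from Fl signs -/

lemma gn_mono_Iic {a D r : ℝ} (ha : 0 < a) (hD : 0 < D) (hrD : r < D)
    (hFl : ∀ x, 0 < x → x < r → Fl a D x < 0) : StrictMonoOn (Gn a D) (Set.Iic r) := by
  apply gn_mono_of (convex_Iic r)
  intro x hx
  rw [interior_Iic] at hx
  rcases le_or_gt x 0 with h0 | h0
  · exact Pd_neg_left ha hD h0
  · exact (Fl_iff_Pd ha h0 (lt_trans hx hrD)).1.mpr (hFl x h0 hx)

lemma gn_anti_Ici {a D r : ℝ} (ha : 0 < a) (hD : 0 < D) (hr0 : 0 < r)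
    (hFl : ∀ x, r < x → x < D → 0 < Fl a D x) : StrictAntiOn (Gn a D) (Set.Ici r) := by
  apply gn_anti_of (convex_Ici r)
  intro x hx
  rw [interior_Ici] at hx
  rcases lt_or_ge x D with h0 | h0
  · exact (Fl_iff_Pd ha (lt_trans hr0 hx) h0).2.mpr (hFl x hx h0)
  · exact Pd_pos_right ha hD h0

lemma gn_anti_Icc {a D r r' : ℝ} (ha : 0 < a) (hr0 : 0 < r) (hr'D : r' ≤ D)
    (hFl : ∀ x, r < x → x < r' → 0 < Fl a D x) : StrictAntiOn (Gn a D) (Set.Icc r r') := by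
  apply gn_anti_of (convex_Icc _ _)
  intro x hx
  rw [interior_Icc] at hx
  exact (Fl_iff_Pd ha (lt_trans hr0 hx.1) (lt_of_lt_of_le hx.2 hr'D)).2.mpr (hFl x hx.1 hx.2)

lemma gn_mono_Icc {a D r r' : ℝ} (ha : 0 < a) (hr0 : 0 < r) (hr'D : r' ≤ D)
    (hFl : ∀ x, r < x → x < r' → Fl a D x < 0) : StrictMonoOn (Gn a D) (Set.Icc r r') := by
  apply gn_mono_of (convex_Icc _ _)
  intro x hx
  rw [interior_Icc] at hx
  exact (Fl_iff_Pd ha (lt_trans hr0 hx.1) (lt_of_lt_of_le hx.2 hr'D)).1.mpr (hFl x hx.1 hx.2)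

/-! ### IVT wrappers -/

lemma fl_root {a D x₀ x₁ : ℝ} (h0 : 0 < x₀) (hlt : x₀ < x₁) (h1D : x₁ < D)
    (hneg : Fl a D x₀ < 0) (hpos : 0 < Fl a D x₁) :
    ∃ r : ℝ, x₀ < r ∧ r < x₁ ∧ Fl a D r = 0 := by
  have hcont : ContinuousOn (Fl a D) (Set.Icc x₀ x₁) := fun x hx =>
    (fl_contAt (lt_of_lt_of_le h0 hx.1) (lt_of_le_of_lt hx.2 h1D)).continuousWithinAt
  obtain ⟨r, hr, hFr⟩ := intermediate_value_Ioo (le_of_lt hlt) hcont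
    (show (0:ℝ) ∈ Set.Ioo (Fl a D x₀) (Fl a D x₁) from ⟨hneg, hpos⟩)
  exact ⟨r, hr.1, hr.2, hFr⟩

lemma fl_root' {a D x₀ x₁ : ℝ} (h0 : 0 < x₀) (hlt : x₀ < x₁) (h1D : x₁ < D)
    (hpos : 0 < Fl a D x₀) (hneg : Fl a D x₁ < 0) :
    ∃ r : ℝ, x₀ < r ∧ r < x₁ ∧ Fl a D r = 0 := by
  have hcont : ContinuousOn (Fl a D) (Set.Icc x₀ x₁) := fun x hx =>
    (fl_contAt (lt_of_lt_of_le h0 hx.1) (lt_of_le_of_lt hx.2 h1D)).continuousWithinAt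
  obtain ⟨r, hr, hFr⟩ := intermediate_value_Ioo' (le_of_lt hlt) hcont
    (show (0:ℝ) ∈ Set.Ioo (Fl a D x₁) (Fl a D x₀) from ⟨hneg, hpos⟩)
  exact ⟨r, hr.1, hr.2, hFr⟩

/-! ### critical parameters -/

lemma crit_lemma {s : ℝ} (hs : 0 < s) :
    ∃ w p : ℝ, 0 < w ∧ w^2 = s/2 ∧ 0 < p ∧ w ≤ p ∧ 1/(2*w) ≤ p ∧ 1 ≤ 2*p^2 ∧
      (1+s)/Real.sqrt (2*s) = p + 1/(2*p) ∧ (p = w ∨ p = 1/(2*w)) := by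
  set w := Real.sqrt (s/2) with hw
  have hw0 : 0 < w := Real.sqrt_pos.mpr (by linarith)
  have hw2 : w^2 = s/2 := Real.sq_sqrt (by linarith)
  set p := max w (1/(2*w)) with hp
  have hpw : w ≤ p := le_max_left _ _
  have hpiw : 1/(2*w) ≤ p := le_max_right _ _
  have hp0 : 0 < p := lt_of_lt_of_le hw0 hpw
  have hwiw : w * (1/(2*w)) = 1/2 := by field_simp
  have hp2 : 1 ≤ 2*p^2 := by
    have h := mul_le_mul hpw hpiw (by positivity) (le_of_lt hp0)
    nlinarith
  have hDc : (1+s)/Real.sqrt (2*s) = w + 1/(2*w) := by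
    have h2s : Real.sqrt (2*s) = 2*w := by
      rw [show 2*s = (2*w)^2 by nlinarith, Real.sqrt_sq (by linarith)]
    rw [h2s]
    field_simp
    nlinarith
  have hpsum : p + 1/(2*p) = w + 1/(2*w) := by
    rcases max_cases w (1/(2*w)) with ⟨hpe, hc⟩ | ⟨hpe, hc⟩ <;> rw [hp, hpe]
    · rw [show (2*(1/(2*w))) = w⁻¹ by field_simp, show (1/(w⁻¹) : ℝ) = w by simp]
      ring
  refine ⟨w, p, hw0, hw2, hp0, hpw, hpiw, hp2, by rw [hDc, hpsum], ?_⟩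
  rcases max_cases w (1/(2*w)) with ⟨hpe, _⟩ | ⟨hpe, _⟩
  · exact Or.inl hpe
  · exact Or.inr hpe


/-! ### main case lemmas -/

theorem gn_case_le {a D s : ℝ} (ha : 0 < a) (hD : 0 < D) (hs : 0 < s) (hroot : phi0 a s = 0)
    (hle : D ≤ (1+s)/Real.sqrt (2*s)) : ∃! u : ℝ, IsLocalMax (Gn a D) u := by
  obtain ⟨w, p, hw0, hw2, hp0, hpw, hpiw, hp2, hDc, hpor⟩ := crit_lemma hs
  rcases le_or_gt (D^2) 2 with hD2 | hD2
  · -- D² ≤ 2 : Fl strictly increasing on (0,D)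
    have hmono : StrictMonoOn (Fl a D) (Set.Ioo 0 D) := by
      have m1 : StrictMonoOn (Fl a D) (Set.Ioc 0 (D/2)) := by
        apply fl_mono_of ?_ (convex_Ioc _ _) ?_
        · intro x hx; exact ⟨hx.1, lt_of_le_of_lt hx.2 (by linarith)⟩
        · intro x hx
          rw [interior_Ioc] at hx
          nlinarith [mul_pos (show 0 < D - 2*x by linarith [hx.2]) (show 0 < D - 2*x by linarith [hx.2])]
      have m2 : StrictMonoOn (Fl a D) (Set.Ico (D/2) D) := by
        apply fl_mono_of ?_ (convex_Ico _ _) ?_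
        · intro x hx; exact ⟨lt_of_lt_of_le (by linarith) hx.1, hx.2⟩
        · intro x hx
          rw [interior_Ico] at hx
          nlinarith [mul_pos (show 0 < 2*x - D by linarith [hx.1]) (show 0 < 2*x - D by linarith [hx.1])]
      have := m1.union m2 (isGreatest_Ioc (by linarith)) (isLeast_Ico (by linarith))
      rwa [Set.Ioc_union_Ico_eq_Ioo (by linarith) (by linarith)] at this
    obtain ⟨x₀, hx₀0, hx₀D, hx₀neg⟩ := fl_neg_witness ha hD hD (le_refl D)
    obtain ⟨x₁, hx₁l, hx₁D, hx₁pos⟩ := fl_pos_witness ha hD hx₀D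
    obtain ⟨r, hr0, hr1, hFr⟩ := fl_root hx₀0 hx₁l hx₁D hx₀neg hx₁pos
    have hrmem : r ∈ Set.Ioo 0 D := ⟨by linarith, by linarith⟩
    apply unique_max_of (r := r)
    · apply gn_mono_Iic ha hD hrmem.2
      intro x hx0 hxr
      have := hmono (show x ∈ Set.Ioo 0 D from ⟨hx0, by linarith [hrmem.2]⟩) hrmem hxr
      rwa [hFr] at this
    · apply gn_anti_Ici ha hD hrmem.1
      intro x hxr hxD
      have := hmono hrmem ⟨by linarith [hrmem.1], hxD⟩ hxr
      rwa [hFr] at this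
  · -- D² > 2
    have hum0 := umr_pos hD2 hD
    have humup := umr_lt_upr hD2 hD
    have hupD := upr_lt_D hD2 hD
    have hup0 := upr_pos hD2 hD
    have humD : umr D < D := lt_trans humup hupD
    have m1 : StrictMonoOn (Fl a D) (Set.Ioc 0 (umr D)) := fl_m1 hD2 hD
    have fla : StrictAntiOn (Fl a D) (Set.Icc (umr D) (upr D)) := fl_fla hD2 hD
    have m2 : StrictMonoOn (Fl a D) (Set.Ico (upr D) D) := fl_m2 hD2 hD
    have hMval : Fl a D (umr D) = phi0 a (2*(umr D)^2) :=
      Fl_at_crit ha hum0 humD (quad_umr hD2 hD)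
    have hmval : Fl a D (upr D) = phi0 a (2*(upr D)^2) :=
      Fl_at_crit ha hup0 hupD (quad_upr hD2 hD)
    have hup_le_p : upr D ≤ p := by
      by_contra hcon
      push_neg at hcon
      have h1 := fstrict hp0 hp2 hcon
      rw [upr_sum hD2 hD] at h1
      rw [hDc] at hle
      linarith
    rcases hpor with hpe | hpe
    · -- p = w : up ≤ w, so Fl(up) ≥ 0
      have hupw : upr D ≤ w := by rw [hpe] at hup_le_p; exact hup_le_p
      have hm_ge : 0 ≤ Fl a D (upr D) := by
        rw [hmval, ← hroot]
        have harg : 2*(upr D)^2 ≤ s := by nlinarith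
        exact phi0_strictAntiOn.antitoneOn (Set.mem_Ioi.mpr (by positivity))
          (Set.mem_Ioi.mpr hs) harg
      obtain ⟨x₀, hx₀0, hx₀um, hx₀neg⟩ := fl_neg_witness ha hD hum0 (le_of_lt humD)
      have hM_pos : 0 < Fl a D (umr D) := by
        have := fla (Set.left_mem_Icc.mpr (le_of_lt humup))
          (Set.right_mem_Icc.mpr (le_of_lt humup)) humup
        linarith
      obtain ⟨r, hrx₀, hrum, hFr⟩ := fl_root hx₀0 hx₀um humD hx₀neg hM_pos
      have hr0 : 0 < r := by linarith
      have hrup : r < upr D := lt_trans hrum humup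
      have gmono : StrictMonoOn (Gn a D) (Set.Iic r) := by
        apply gn_mono_Iic ha hD (by linarith)
        intro x hx0 hxr
        have := m1 ⟨hx0, by linarith⟩ ⟨hr0, le_of_lt hrum⟩ hxr
        rwa [hFr] at this
      have ganti1 : StrictAntiOn (Gn a D) (Set.Icc r (upr D)) := by
        apply gn_anti_Icc ha hr0 (le_of_lt hupD)
        intro x hxr hxup
        rcases le_or_gt x (umr D) with hxu | hxu
        · have := m1 ⟨hr0, le_of_lt hrum⟩ ⟨by linarith, hxu⟩ hxr
          rwa [hFr] at this
        · have := fla ⟨le_of_lt hxu, le_of_lt hxup⟩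
            (Set.right_mem_Icc.mpr (le_of_lt humup)) hxup
          linarith
      have ganti2 : StrictAntiOn (Gn a D) (Set.Ici (upr D)) := by
        apply gn_anti_Ici ha hD hup0
        intro x hxup hxD
        have := m2 ⟨le_refl _, hupD⟩ ⟨le_of_lt hxup, hxD⟩ hxup
        linarith
      have ganti := ganti1.union ganti2 (isGreatest_Icc (le_of_lt hrup)) isLeast_Ici
      rw [Set.Icc_union_Ici_eq_Ici (le_of_lt hrup)] at ganti
      exact unique_max_of gmono ganti
    · -- p = 1/(2w) : up ≤ 1/(2w), so Fl(um) ≤ 0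
      have hupiw : upr D ≤ 1/(2*w) := by rw [hpe] at hup_le_p; exact hup_le_p
      have humw : w ≤ umr D := by
        rw [umr_inv hD2 hD]
        rw [le_div_iff₀ (by positivity)]
        have h1 := (le_div_iff₀ (by positivity : (0:ℝ) < 2*w)).mp hupiw
        nlinarith
      have hM_le : Fl a D (umr D) ≤ 0 := by
        rw [hMval, ← hroot]
        have harg : s ≤ 2*(umr D)^2 := by nlinarith
        exact phi0_strictAntiOn.antitoneOn (Set.mem_Ioi.mpr hs)
          (Set.mem_Ioi.mpr (by positivity)) harg
      have hm_lt : Fl a D (upr D) < 0 := by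
        have := fla (Set.left_mem_Icc.mpr (le_of_lt humup))
          (Set.right_mem_Icc.mpr (le_of_lt humup)) humup
        linarith
      obtain ⟨x₁, hx₁up, hx₁D, hx₁pos⟩ := fl_pos_witness ha hD hupD
      obtain ⟨r, hrup, hrx₁, hFr⟩ := fl_root hup0 hx₁up hx₁D hm_lt hx₁pos
      have hrD : r < D := by linarith
      have hr0 : 0 < r := by linarith
      have humr : umr D < r := lt_trans humup hrup
      have gmono1 : StrictMonoOn (Gn a D) (Set.Iic (umr D)) := by
        apply gn_mono_Iic ha hD humD
        intro x hx0 hxum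
        have := m1 ⟨hx0, le_of_lt hxum⟩ ⟨hum0, le_refl _⟩ hxum
        linarith
      have gmono2 : StrictMonoOn (Gn a D) (Set.Icc (umr D) r) := by
        apply gn_mono_Icc ha hum0 (le_of_lt hrD)
        intro x hxum hxr
        rcases lt_or_ge x (upr D) with hxu | hxu
        · have := fla (Set.left_mem_Icc.mpr (le_of_lt humup)) ⟨le_of_lt hxum, le_of_lt hxu⟩ hxum
          linarith
        · have := m2 ⟨hxu, by linarith⟩ ⟨le_of_lt hrup, hrD⟩ hxr
          rwa [hFr] at this
      have gmono := gmono1.union gmono2 isGreatest_Iic (isLeast_Icc (le_of_lt humr))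
      rw [Set.Iic_union_Icc_eq_Iic (le_of_lt humr)] at gmono
      have ganti : StrictAntiOn (Gn a D) (Set.Ici r) := by
        apply gn_anti_Ici ha hD hr0
        intro x hxr hxD
        have := m2 ⟨le_of_lt hrup, hrD⟩ ⟨by linarith, hxD⟩ hxr
        rwa [hFr] at this
      exact unique_max_of gmono ganti

set_option maxHeartbeats 1000000 in
theorem gn_case_gt {a D s : ℝ} (ha : 0 < a) (hD : 0 < D) (hs : 0 < s) (hroot : phi0 a s = 0)
    (hgt : (1+s)/Real.sqrt (2*s) < D) :
    ∃ η₁ η₂ : ℝ, η₁ ≠ η₂ ∧ IsLocalMax (Gn a D) η₁ ∧ IsLocalMax (Gn a D) η₂ ∧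
      ∀ η : ℝ, IsLocalMax (Gn a D) η → η = η₁ ∨ η = η₂ := by
  obtain ⟨w, p, hw0, hw2, hp0, hpw, hpiw, hp2, hDc, _⟩ := crit_lemma hs
  rw [hDc] at hgt
  -- D² > 2
  have hq0 : 0 < 1/(2*p) := by positivity
  have hpq : p * (1/(2*p)) * 2 = 1 := by field_simp
  have hD2 : 2 < D^2 := by nlinarith [sq_nonneg (p - 1/(2*p))]
  have hum0 := umr_pos hD2 hD
  have humup := umr_lt_upr hD2 hD
  have hupD := upr_lt_D hD2 hD
  have hup0 := upr_pos hD2 hD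
  have humD : umr D < D := lt_trans humup hupD
  have m1 : StrictMonoOn (Fl a D) (Set.Ioc 0 (umr D)) := fl_m1 hD2 hD
  have fla : StrictAntiOn (Fl a D) (Set.Icc (umr D) (upr D)) := fl_fla hD2 hD
  have m2 : StrictMonoOn (Fl a D) (Set.Ico (upr D) D) := fl_m2 hD2 hD
  have hMval : Fl a D (umr D) = phi0 a (2*(umr D)^2) :=
    Fl_at_crit ha hum0 humD (quad_umr hD2 hD)
  have hmval : Fl a D (upr D) = phi0 a (2*(upr D)^2) :=
    Fl_at_crit ha hup0 hupD (quad_upr hD2 hD)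
  -- p < upr D
  have hup2 : 1 ≤ 2*(upr D)^2 := by nlinarith [upr_gt_half hD2 hD]
  have hp_lt_up : p < upr D := by
    by_contra hcon
    push_neg at hcon
    rcases eq_or_lt_of_le hcon with he | hlt
    · rw [← he] at hgt
      rw [upr_sum hD2 hD] at hgt
      linarith
    · have h1 := fstrict hup0 hup2 hlt
      rw [upr_sum hD2 hD] at h1
      linarith
  -- Fl(up) < 0
  have hm_neg : Fl a D (upr D) < 0 := by
    rw [hmval, ← hroot]
    apply phi0_strictAntiOn (Set.mem_Ioi.mpr hs) (Set.mem_Ioi.mpr (by positivity))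
    nlinarith [lt_of_le_of_lt hpw hp_lt_up]
  -- Fl(um) > 0
  have hM_pos : 0 < Fl a D (umr D) := by
    rw [hMval, ← hroot]
    apply phi0_strictAntiOn (Set.mem_Ioi.mpr (by positivity)) (Set.mem_Ioi.mpr hs)
    have hiw_lt : 1/(2*w) < upr D := lt_of_le_of_lt hpiw hp_lt_up
    have h1 := (div_lt_iff₀ (by positivity : (0:ℝ) < 2*w)).mp hiw_lt
    have hum_eq := umr_inv hD2 hD
    have hum_lt_w : umr D < w := by
      rw [hum_eq, div_lt_iff₀ (by positivity)]
      nlinarith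
    nlinarith
  -- the three roots
  obtain ⟨x₀, hx₀0, hx₀um, hx₀neg⟩ := fl_neg_witness ha hD hum0 (le_of_lt humD)
  obtain ⟨r₁, hr₁x₀, hr₁um, hFr₁⟩ := fl_root hx₀0 hx₀um humD hx₀neg hM_pos
  obtain ⟨r₂, hr₂um, hr₂up, hFr₂⟩ := fl_root' hum0 humup hupD hM_pos hm_neg
  obtain ⟨x₁, hx₁up, hx₁D, hx₁pos⟩ := fl_pos_witness ha hD hupD
  obtain ⟨r₃, hr₃up, hr₃x₁, hFr₃⟩ := fl_root hup0 hx₁up hx₁D hm_neg hx₁pos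
  have hr₁0 : 0 < r₁ := by linarith
  have hr₃D : r₃ < D := by linarith
  have h12 : r₁ < r₂ := by linarith
  have h23 : r₂ < r₃ := by linarith
  -- four monotone pieces
  have A : StrictMonoOn (Gn a D) (Set.Iic r₁) := by
    apply gn_mono_Iic ha hD (by linarith)
    intro x hx0 hxr
    have := m1 ⟨hx0, by linarith⟩ ⟨hr₁0, le_of_lt hr₁um⟩ hxr
    rwa [hFr₁] at this
  have B : StrictAntiOn (Gn a D) (Set.Icc r₁ r₂) := by
    apply gn_anti_Icc ha hr₁0 (by linarith)
    intro x hxr₁ hxr₂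
    rcases le_or_gt x (umr D) with hxu | hxu
    · have := m1 ⟨hr₁0, le_of_lt hr₁um⟩ ⟨by linarith, hxu⟩ hxr₁
      rwa [hFr₁] at this
    · have := fla ⟨le_of_lt hxu, by linarith⟩ ⟨le_of_lt hr₂um, le_of_lt hr₂up⟩ hxr₂
      rwa [hFr₂] at this
  have C : StrictMonoOn (Gn a D) (Set.Icc r₂ r₃) := by
    apply gn_mono_Icc ha (by linarith) (le_of_lt hr₃D)
    intro x hxr₂ hxr₃
    rcases lt_or_ge x (upr D) with hxu | hxu
    · have := fla ⟨le_of_lt hr₂um, le_of_lt hr₂up⟩ ⟨by linarith, le_of_lt hxu⟩ hxr₂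
      rwa [hFr₂] at this
    · have := m2 ⟨hxu, by linarith⟩ ⟨by linarith, hr₃D⟩ hxr₃
      rwa [hFr₃] at this
  have E : StrictAntiOn (Gn a D) (Set.Ici r₃) := by
    apply gn_anti_Ici ha hD (by linarith)
    intro x hxr₃ hxD
    have := m2 ⟨le_of_lt hr₃up, hr₃D⟩ ⟨by linarith, hxD⟩ hxr₃
    rwa [hFr₃] at this
  exact two_max_of h12 h23 A B C E

lemma norm_Vst {ξ₀ ξ₁ a σ : ℝ} (hξ : ξ₀ < ξ₁) (ha : 0 < a) (k : ℤ) (η : ℝ) :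
    ‖Vst ξ₀ ξ₁ a σ ((k : ℝ) / (ξ₁ - ξ₀)) η‖ = gSum ξ₀ ξ₁ a σ η := by
  have hΔ : (ξ₁ - ξ₀) ≠ 0 := ne_of_gt (by linarith)
  have hΔ' : ((ξ₁ : ℂ) - ξ₀) ≠ 0 := by
    intro h
    apply hΔ
    have := congrArg Complex.re h
    simpa using this
  unfold Vst gSum
  have h1 : Complex.exp (2 * Real.pi * Complex.I * (ξ₁ - ξ₀) * ((k : ℝ) / (ξ₁ - ξ₀) : ℝ)) = 1 := by
    have harg : (2 * Real.pi * Complex.I * (ξ₁ - ξ₀) * (((k : ℝ) / (ξ₁ - ξ₀) : ℝ) : ℂ) : ℂ)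
        = (k : ℂ) * (2 * Real.pi * Complex.I) := by
      push_cast
      field_simp
    rw [harg]
    exact Complex.exp_int_mul_two_pi_mul_I k
  rw [h1, mul_one, norm_mul]
  have h2 : ‖Complex.exp (2 * Real.pi * Complex.I * ξ₀ * ((k : ℝ) / (ξ₁ - ξ₀) : ℝ))‖ = 1 := by
    have harg : (2 * Real.pi * Complex.I * ξ₀ * (((k : ℝ) / (ξ₁ - ξ₀) : ℝ) : ℂ) : ℂ)
        = ((2 * Real.pi * ξ₀ * ((k : ℝ) / (ξ₁ - ξ₀)) : ℝ) : ℂ) * Complex.I := by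
      push_cast
      ring
    rw [harg, Complex.norm_exp_ofReal_mul_I]
  rw [h2, one_mul]
  have h3 : ((Real.exp (-(Real.pi ^ 2 * σ ^ 2 * (η - ξ₀) ^ 2)) : ℝ) : ℂ) +
      (a : ℂ) * ((Real.exp (-(Real.pi ^ 2 * σ ^ 2 * (η - ξ₁) ^ 2)) : ℝ) : ℂ)
      = ((Real.exp (-(Real.pi ^ 2 * σ ^ 2 * (η - ξ₀) ^ 2)) +
          a * Real.exp (-(Real.pi ^ 2 * σ ^ 2 * (η - ξ₁) ^ 2)) : ℝ) : ℂ) := by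
    push_cast
    ring
  rw [h3, Complex.norm_real, Real.norm_eq_abs, abs_of_pos]
  positivity

lemma isLocalMax_comp_affine {f : ℝ → ℝ} {c x₀ : ℝ} (hc : c ≠ 0) (η : ℝ) :
    IsLocalMax (fun x => f (c * (x - x₀))) η ↔ IsLocalMax f (c * (η - x₀)) := by
  let L : ℝ ≃ₜ ℝ := (Homeomorph.subRight x₀).trans (Homeomorph.mulLeft₀ c hc)
  have hL : ∀ x, L x = c * (x - x₀) := fun x => rfl
  have key : 𝓝 (c * (η - x₀)) = Filter.map (fun x => c * (x - x₀)) (𝓝 η) := by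
    have h := L.map_nhds_eq η
    rw [show ⇑L = fun x => c * (x - x₀) from funext hL] at h
    exact h.symm
  unfold IsLocalMax IsMaxFilter
  rw [key, Filter.eventually_map]

lemma gSum_eq (ξ₀ ξ₁ a σ : ℝ) :
    gSum ξ₀ ξ₁ a σ =
      fun η => Gn a ((Real.pi*σ)*(ξ₁-ξ₀)) ((Real.pi*σ)*(η-ξ₀)) := by
  funext η
  unfold gSum Gn
  rw [show -(((Real.pi*σ)*(η-ξ₀))^2) = -(Real.pi^2*σ^2*(η-ξ₀)^2) by ring,
      show -(((Real.pi*σ)*(η-ξ₀) - (Real.pi*σ)*(ξ₁-ξ₀))^2) = -(Real.pi^2*σ^2*(η-ξ₁)^2) by ring]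


end Stmt1Aux

/-- there is a unique `s > 0` with `ln(s/a) = (1/2)(s − 1/s)`; setting
`Δ_c = (1+s)/(πσ√(2s))`, the function `g(η) = e^{−π²σ²(η−ξ₀)²} + a e^{−π²σ²(η−ξ₁)²}`
(which equals `|V(t_k⁺,η)|` at every constructive time `t_k⁺ = k/Δ`) has exactly one
local-maximum point when `Δ ≤ Δ_c` and exactly two when `Δ > Δ_c`. -/
theorem stmt1 (ξ₀ ξ₁ a σ : ℝ) (hξ : ξ₀ < ξ₁) (ha : 0 < a) (hσ : 0 < σ) :
    (∃! s : ℝ, 0 < s ∧ Real.log (s / a) = (1 / 2) * (s - 1 / s)) ∧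
    (∀ k : ℤ, ∀ η : ℝ, ‖Vst ξ₀ ξ₁ a σ ((k : ℝ) / (ξ₁ - ξ₀)) η‖ = gSum ξ₀ ξ₁ a σ η) ∧
    ∀ s : ℝ, 0 < s → Real.log (s / a) = (1 / 2) * (s - 1 / s) →
      ((ξ₁ - ξ₀ ≤ (1 + s) / (Real.pi * σ * Real.sqrt (2 * s)) →
          ∃! η : ℝ, IsLocalMax (gSum ξ₀ ξ₁ a σ) η) ∧
       ((1 + s) / (Real.pi * σ * Real.sqrt (2 * s)) < ξ₁ - ξ₀ →
          ∃ η₁ η₂ : ℝ, η₁ ≠ η₂ ∧ IsLocalMax (gSum ξ₀ ξ₁ a σ) η₁ ∧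
            IsLocalMax (gSum ξ₀ ξ₁ a σ) η₂ ∧
            ∀ η : ℝ, IsLocalMax (gSum ξ₀ ξ₁ a σ) η → η = η₁ ∨ η = η₂)) := by
  have hΔ : 0 < ξ₁ - ξ₀ := by linarith
  have hc : 0 < Real.pi * σ := mul_pos Real.pi_pos hσ
  refine ⟨Stmt1Aux.exists_unique_s ha, fun k η => Stmt1Aux.norm_Vst hξ ha k η, ?_⟩
  intro s hs hroot
  have hroot' : Stmt1Aux.phi0 a s = 0 := by
    unfold Stmt1Aux.phi0
    rw [← Real.log_div (ne_of_gt hs) (ne_of_gt ha)]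
    rw [hroot]
    ring
  set D := (Real.pi*σ)*(ξ₁-ξ₀) with hDdef
  have hD : 0 < D := mul_pos hc hΔ
  have hsq : 0 < Real.sqrt (2*s) := Real.sqrt_pos.mpr (by linarith)
  have hkey : (1+s)/(Real.pi*σ*Real.sqrt (2*s)) = ((1+s)/Real.sqrt (2*s))/(Real.pi*σ) := by
    rw [div_div, mul_comm (Real.pi*σ) (Real.sqrt (2*s))]
  have hcond1 : (ξ₁ - ξ₀ ≤ (1 + s) / (Real.pi * σ * Real.sqrt (2 * s))) ↔
      D ≤ (1+s)/Real.sqrt (2*s) := by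
    rw [hkey, le_div_iff₀ hc, hDdef, mul_comm (Real.pi*σ) (ξ₁-ξ₀)]
  have hcond2 : ((1 + s) / (Real.pi * σ * Real.sqrt (2 * s)) < ξ₁ - ξ₀) ↔
      (1+s)/Real.sqrt (2*s) < D := by
    rw [hkey, div_lt_iff₀ hc, hDdef, mul_comm (Real.pi*σ) (ξ₁-ξ₀)]
  have htrans : ∀ η, IsLocalMax (gSum ξ₀ ξ₁ a σ) η ↔
      IsLocalMax (Stmt1Aux.Gn a D) ((Real.pi*σ)*(η-ξ₀)) := by
    intro η
    rw [Stmt1Aux.gSum_eq]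
    exact Stmt1Aux.isLocalMax_comp_affine (ne_of_gt hc) η
  have hback : ∀ u : ℝ, (Real.pi*σ)*((ξ₀ + u/(Real.pi*σ)) - ξ₀) = u := by
    intro u; field_simp; ring
  constructor
  · intro hle
    obtain ⟨u, hu, huniq⟩ := Stmt1Aux.gn_case_le ha hD hs hroot' (hcond1.mp hle)
    refine ⟨ξ₀ + u/(Real.pi*σ), ?_, ?_⟩
    · show IsLocalMax (gSum ξ₀ ξ₁ a σ) _
      rw [htrans, hback]; exact hu
    · intro y hy
      have h := huniq _ ((htrans y).mp hy)
      have h2 := mul_div_cancel_left₀ (y - ξ₀) (ne_of_gt hc)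
      rw [h] at h2
      linarith [h2]
  · intro hgt
    obtain ⟨u₁, u₂, hne, h1, h2, huniq⟩ := Stmt1Aux.gn_case_gt ha hD hs hroot' (hcond2.mp hgt)
    refine ⟨ξ₀ + u₁/(Real.pi*σ), ξ₀ + u₂/(Real.pi*σ), ?_, ?_, ?_, ?_⟩
    · intro h
      apply hne
      have h' : (Real.pi*σ)*((ξ₀ + u₁/(Real.pi*σ)) - ξ₀) = (Real.pi*σ)*((ξ₀ + u₂/(Real.pi*σ)) - ξ₀) := by
        rw [h]
      rw [hback, hback] at h'
      exact h'
    · rw [htrans, hback]; exact h1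
    · rw [htrans, hback]; exact h2
    · intro η hη
      rcases huniq _ ((htrans η).mp hη) with h | h
      · left
        have h2 := mul_div_cancel_left₀ (η - ξ₀) (ne_of_gt hc)
        rw [h] at h2
        linarith [h2]
      · right
        have h2 := mul_div_cancel_left₀ (η - ξ₀) (ne_of_gt hc)
        rw [h] at h2
        linarith [h2]
end
end

section
/- Let a = 1. The function g(η) = e^{−π²σ²(η−ξ₀)²} + e^{−π²σ²(η−ξ₁)²} has exactly one local-maximum point on ℝ, located at η = ξ̄, if and only if Δ ≤ √2/(πσ); and when Δ > √2/(πσ), g has exactly two local-maximum points, symmetric about ξ̄, and a local minimum at ξ̄. -/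
noncomputable section

open MeasureTheory

/-- The balanced-amplitude (a = 1) constructive-time profile: sum of two unit Gaussian bumps. -/
def gSum1 (ξ₀ ξ₁ σ η : ℝ) : ℝ :=
  Real.exp (-(Real.pi ^ 2 * σ ^ 2 * (η - ξ₀) ^ 2)) +
    Real.exp (-(Real.pi ^ 2 * σ ^ 2 * (η - ξ₁) ^ 2))

namespace Stmt2Aux

open Real Set

/-- auxiliary profile factor -/
def G (c d t : ℝ) : ℝ := (d + t) * Real.exp (-(2*c*d*t)) - (d - t) * Real.exp (2*c*d*t)

/-- derivative of G -/
def P (c d t : ℝ) : ℝ := (1 - 2*c*d*d) * (Real.exp (2*c*d*t) + Real.exp (-(2*c*d*t)))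
    + 2*c*d*t * (Real.exp (2*c*d*t) - Real.exp (-(2*c*d*t)))

lemma hasDerivAt_G (c d t : ℝ) : HasDerivAt (G c d) (P c d t) t := by
  have h1 : HasDerivAt (fun t : ℝ => Real.exp (-(2*c*d*t))) (Real.exp (-(2*c*d*t)) * (-(2*c*d))) t := by
    have : HasDerivAt (fun t : ℝ => -(2*c*d*t)) (-(2*c*d)) t := by
      exact (((hasDerivAt_id t).const_mul (2*c*d)).neg).congr_deriv (by simp)
    exact this.exp
  have h2 : HasDerivAt (fun t : ℝ => Real.exp (2*c*d*t)) (Real.exp (2*c*d*t) * (2*c*d)) t := by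
    have : HasDerivAt (fun t : ℝ => 2*c*d*t) (2*c*d) t := by
      simpa using (hasDerivAt_id t).const_mul (2*c*d)
    exact this.exp
  have h3 : HasDerivAt (fun t : ℝ => d + t) 1 t := by
    simpa using (hasDerivAt_id t).const_add d
  have h4 : HasDerivAt (fun t : ℝ => d - t) (-1) t := by
    simpa using (hasDerivAt_id t).const_sub d
  have := ((h3.mul h1).sub (h4.mul h2))
  change HasDerivAt (G c d) _ t at this
  convert this using 1
  unfold P
  ring

lemma G_zero (c d : ℝ) : G c d 0 = 0 := by simp [G]

lemma G_odd (c d t : ℝ) : G c d (-t) = - G c d t := by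
  unfold G; ring_nf

lemma cont_G (c d : ℝ) : Continuous (G c d) := by
  unfold G; fun_prop

lemma cont_P (c d : ℝ) : Continuous (P c d) := by
  unfold P; fun_prop

lemma deriv_G (c d t : ℝ) : deriv (G c d) t = P c d t := (hasDerivAt_G c d t).deriv

lemma P_eq (c d t : ℝ) : P c d t
    = 2*((1 - 2*c*d*d) * Real.cosh (2*c*d*t) + 2*c*d*t * Real.sinh (2*c*d*t)) := by
  rw [Real.cosh_eq, Real.sinh_eq]; unfold P; ring

lemma P_zero (c d : ℝ) : P c d 0 = 2*(1 - 2*c*d*d) := by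
  rw [P_eq]; simp

variable {c d : ℝ}

lemma P_mono (hc : 0 < c) (hd : 0 < d) {s t : ℝ} (hs : 0 < s) (hst : s < t)
    (hPs : 0 ≤ P c d s) : 0 < P c d t := by
  have hk : 0 < 2*c*d := by positivity
  rw [P_eq] at hPs ⊢
  have hcs : 0 < Real.cosh (2*c*d*s) := Real.cosh_pos _
  have hct : 0 < Real.cosh (2*c*d*t) := Real.cosh_pos _
  have hss : 0 < Real.sinh (2*c*d*s) := Real.sinh_pos_iff.2 (by positivity)
  have hstt : 0 < Real.sinh (2*c*d*t) := Real.sinh_pos_iff.2 (by nlinarith)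
  have key : Real.sinh (2*c*d*s) * Real.cosh (2*c*d*t)
      < Real.sinh (2*c*d*t) * Real.cosh (2*c*d*s) := by
    have h := Real.sinh_pos_iff.2 (show (0:ℝ) < 2*c*d*t - 2*c*d*s by nlinarith)
    rw [Real.sinh_sub] at h
    linarith
  have hs2 : 0 ≤ (1 - 2*c*d*d) * Real.cosh (2*c*d*s) + 2*c*d*s * Real.sinh (2*c*d*s) := by
    linarith
  have goal : 0 < ((1 - 2*c*d*d) * Real.cosh (2*c*d*t) + 2*c*d*t * Real.sinh (2*c*d*t)) := by
    nlinarith [mul_nonneg hs2 hct.le, mul_pos (mul_pos hk hs) (sub_pos.2 key),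
      mul_pos (mul_pos hk (sub_pos.2 hst)) (mul_pos hstt hcs)]
  linarith

/-- At a positive zero of G, the derivative P is positive. -/
lemma P_pos_of_G_zero (hc : 0 < c) (hd : 0 < d) {t : ℝ} (ht : 0 < t)
    (hGt : G c d t = 0) : 0 < P c d t := by
  by_contra h
  push_neg at h
  have hanti : StrictAntiOn (G c d) (Icc 0 t) := by
    apply strictAntiOn_of_deriv_neg (convex_Icc 0 t) (cont_G c d).continuousOn
    intro s hs
    rw [interior_Icc] at hs
    rw [deriv_G]
    by_contra h2
    push_neg at h2
    exact absurd (P_mono hc hd hs.1 hs.2 h2) (not_lt.2 h)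
  have := hanti (left_mem_Icc.2 ht.le) (right_mem_Icc.2 ht.le) ht
  rw [G_zero, hGt] at this
  exact lt_irrefl 0 this

/-- G has at most one positive zero. -/
lemma G_zero_unique (hc : 0 < c) (hd : 0 < d) {s t : ℝ} (hs : 0 < s) (hst : s < t)
    (hGs : G c d s = 0) (hGt : G c d t = 0) : False := by
  have hmono : StrictMonoOn (G c d) (Icc s t) := by
    apply strictMonoOn_of_deriv_pos (convex_Icc s t) (cont_G c d).continuousOn
    intro r hr
    rw [interior_Icc] at hr
    rw [deriv_G]
    exact P_mono hc hd hs hr.1 (P_pos_of_G_zero hc hd hs hGs).le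
  have := hmono (left_mem_Icc.2 hst.le) (right_mem_Icc.2 hst.le) hst
  rw [hGs, hGt] at this
  exact lt_irrefl 0 this

/-- Supercritical case: existence of a positive zero of G. -/
lemma exists_G_zero (hc : 0 < c) (hd : 0 < d) (hα : 1 - 2*c*d*d < 0) :
    ∃ t2 : ℝ, 0 < t2 ∧ G c d t2 = 0 := by
  have hP0 : P c d 0 < 0 := by rw [P_zero]; linarith
  have hopen : {x : ℝ | P c d x < 0} ∈ nhds (0:ℝ) :=
    (isOpen_lt (cont_P c d) continuous_const).mem_nhds hP0
  obtain ⟨l, u, hlu, hsub⟩ := mem_nhds_iff_exists_Ioo_subset.1 hopen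
  set δ : ℝ := min (u/2) (d/2) with hδdef
  have hu : 0 < u := hlu.2
  have hδpos : 0 < δ := by positivity
  have hδu : δ < u := by
    have : u/2 < u := by linarith
    exact lt_of_le_of_lt (min_le_left _ _) this
  have hδd : δ ≤ d := le_trans (min_le_right _ _) (by linarith)
  have hGδ : G c d δ < 0 := by
    have hanti : StrictAntiOn (G c d) (Icc 0 δ) := by
      apply strictAntiOn_of_deriv_neg (convex_Icc 0 δ) (cont_G c d).continuousOn
      intro s hs
      rw [interior_Icc] at hs
      rw [deriv_G]
      exact hsub ⟨lt_of_lt_of_le hlu.1 hs.1.le, lt_trans hs.2 hδu⟩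
    have := hanti (left_mem_Icc.2 hδpos.le) (right_mem_Icc.2 hδpos.le) hδpos
    rwa [G_zero] at this
  have hGd : 0 < G c d d := by
    unfold G
    have : (0:ℝ) < (d + d) * Real.exp (-(2*c*d*d)) := by positivity
    simpa using this
  obtain ⟨t2, ht2mem, ht2⟩ := intermediate_value_Icc hδd (cont_G c d).continuousOn
    (⟨hGδ.le, hGd.le⟩ : (0:ℝ) ∈ Icc (G c d δ) (G c d d))
  refine ⟨t2, ?_, ht2⟩
  rcases eq_or_lt_of_le ht2mem.1 with h | h
  · exact absurd (h ▸ ht2) (ne_of_lt hGδ)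
  · exact lt_trans hδpos h

/-- Supercritical: G is negative strictly between 0 and its zero t2. -/
lemma G_neg_of_lt_zero (hc : 0 < c) (hd : 0 < d) {t2 : ℝ} (ht2 : 0 < t2)
    (hGt2 : G c d t2 = 0) {t : ℝ} (ht : 0 < t) (htt2 : t < t2) : G c d t < 0 := by
  by_cases hcase : ∃ s, 0 < s ∧ s ≤ t ∧ 0 ≤ P c d s
  · obtain ⟨s, hs0, hst, hPs⟩ := hcase
    have hmono : StrictMonoOn (G c d) (Icc s t2) := by
      apply strictMonoOn_of_deriv_pos (convex_Icc s t2) (cont_G c d).continuousOn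
      intro r hr
      rw [interior_Icc] at hr
      rw [deriv_G]
      exact P_mono hc hd hs0 hr.1 hPs
    have := hmono ⟨hst, htt2.le⟩ (right_mem_Icc.2 (by linarith)) htt2
    rwa [hGt2] at this
  · push_neg at hcase
    have hanti : StrictAntiOn (G c d) (Icc 0 t) := by
      apply strictAntiOn_of_deriv_neg (convex_Icc 0 t) (cont_G c d).continuousOn
      intro s hs
      rw [interior_Icc] at hs
      rw [deriv_G]
      exact hcase s hs.1 hs.2.le
    have := hanti (left_mem_Icc.2 ht.le) (right_mem_Icc.2 ht.le) ht
    rwa [G_zero] at this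

/-- Supercritical: G is positive beyond its zero t2. -/
lemma G_pos_of_gt_zero (hc : 0 < c) (hd : 0 < d) {t2 : ℝ} (ht2 : 0 < t2)
    (hGt2 : G c d t2 = 0) {t : ℝ} (htt2 : t2 < t) : 0 < G c d t := by
  have hmono : StrictMonoOn (G c d) (Icc t2 t) := by
    apply strictMonoOn_of_deriv_pos (convex_Icc t2 t) (cont_G c d).continuousOn
    intro r hr
    rw [interior_Icc] at hr
    rw [deriv_G]
    exact P_mono hc hd ht2 hr.1 (P_pos_of_G_zero hc hd ht2 hGt2).le
  have := hmono (left_mem_Icc.2 htt2.le) (right_mem_Icc.2 htt2.le) htt2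
  rwa [hGt2] at this

/-- Subcritical: P is positive away from 0. -/
lemma P_pos_sub (hc : 0 < c) (hd : 0 < d) (hα : 0 ≤ 1 - 2*c*d*d) {t : ℝ} (ht : t ≠ 0) :
    0 < P c d t := by
  have hk : 0 < 2*c*d := by positivity
  rw [P_eq]
  have hct : 0 < Real.cosh (2*c*d*t) := Real.cosh_pos _
  have h2 : 0 < 2*c*d*t * Real.sinh (2*c*d*t) := by
    rcases lt_or_gt_of_ne ht with h | h
    · have hu : 2*c*d*t < 0 := by nlinarith
      exact mul_pos_of_neg_of_neg hu (Real.sinh_neg_iff.2 hu)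
    · have hu : 0 < 2*c*d*t := by positivity
      exact mul_pos hu (Real.sinh_pos_iff.2 hu)
  nlinarith [mul_nonneg hα hct.le]

/-- Subcritical: G is positive for positive t. -/
lemma G_pos_sub (hc : 0 < c) (hd : 0 < d) (hα : 0 ≤ 1 - 2*c*d*d) {t : ℝ} (ht : 0 < t) :
    0 < G c d t := by
  have hmono : StrictMonoOn (G c d) (Icc 0 t) := by
    apply strictMonoOn_of_deriv_pos (convex_Icc 0 t) (cont_G c d).continuousOn
    intro r hr
    rw [interior_Icc] at hr
    rw [deriv_G]
    exact P_pos_sub hc hd hα (ne_of_gt hr.1)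
  have := hmono (left_mem_Icc.2 ht.le) (right_mem_Icc.2 ht.le) ht
  rwa [G_zero] at this

lemma hasDerivAt_gSum1 (ξ₀ ξ₁ σ η : ℝ) :
    HasDerivAt (gSum1 ξ₀ ξ₁ σ)
      (-(2*(Real.pi^2*σ^2)) *
        Real.exp (-((Real.pi^2*σ^2)*((η-(ξ₀+ξ₁)/2)^2+((ξ₁-ξ₀)/2)^2))) *
        G (Real.pi^2*σ^2) ((ξ₁-ξ₀)/2) (η-(ξ₀+ξ₁)/2)) η := by
  set c := Real.pi^2*σ^2 with hc
  have mk : ∀ ξ : ℝ, HasDerivAt (fun η : ℝ => Real.exp (-(c * (η - ξ)^2)))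
      (Real.exp (-(c * (η - ξ)^2)) * (-(c * (2 * (η - ξ))))) η := by
    intro ξ
    have h1 : HasDerivAt (fun η : ℝ => η - ξ) 1 η := (hasDerivAt_id η).sub_const ξ
    have h2 : HasDerivAt (fun η : ℝ => (η - ξ)^2) (2 * (η - ξ)) η := by
      exact (h1.pow 2).congr_deriv (by norm_num)
    have h3 : HasDerivAt (fun η : ℝ => -(c * (η - ξ)^2)) (-(c * (2 * (η - ξ)))) η :=
      (h2.const_mul c).neg
    exact h3.exp
  have hsum := (mk ξ₀).add (mk ξ₁)
  have hfun : (fun η : ℝ => Real.exp (-(c * (η - ξ₀)^2)) + Real.exp (-(c * (η - ξ₁)^2)))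
      = gSum1 ξ₀ ξ₁ σ := by
    funext x; unfold gSum1; rw [hc]
  change HasDerivAt (fun η : ℝ => Real.exp (-(c * (η - ξ₀)^2)) + Real.exp (-(c * (η - ξ₁)^2))) _ η at hsum
  rw [hfun] at hsum
  convert hsum using 1
  have e0 : Real.exp (-(c * (η - ξ₀)^2))
      = Real.exp (-(c*((η-(ξ₀+ξ₁)/2)^2+((ξ₁-ξ₀)/2)^2)))
        * Real.exp (-(2*c*((ξ₁-ξ₀)/2)*(η-(ξ₀+ξ₁)/2))) := by
    rw [← Real.exp_add]; congr 1; ring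
  have e1 : Real.exp (-(c * (η - ξ₁)^2))
      = Real.exp (-(c*((η-(ξ₀+ξ₁)/2)^2+((ξ₁-ξ₀)/2)^2)))
        * Real.exp (2*c*((ξ₁-ξ₀)/2)*(η-(ξ₀+ξ₁)/2)) := by
    rw [← Real.exp_add]; congr 1; ring
  rw [e0, e1]; unfold G; ring

lemma not_isLocalMax_of_strictMonoOn {f : ℝ → ℝ} {x b : ℝ} (hxb : x < b)
    (h : StrictMonoOn f (Icc x b)) : ¬ IsLocalMax f x := by
  intro hm
  have h1 : ∀ᶠ y in nhdsWithin x (Ioi x), f y ≤ f x := hm.filter_mono nhdsWithin_le_nhds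
  have h2 : Ioo x b ∈ nhdsWithin x (Ioi x) := Ioo_mem_nhdsGT_of_mem ⟨le_refl x, hxb⟩
  obtain ⟨y, hy1, hy2⟩ := (h1.and (Filter.eventually_of_mem h2 (fun y hy => hy))).exists
  have := h (left_mem_Icc.2 hxb.le) ⟨hy2.1.le, hy2.2.le⟩ hy2.1
  linarith

end Stmt2Aux

open Stmt2Aux Set

theorem stmt2 (ξ₀ ξ₁ σ : ℝ) (hξ : ξ₀ < ξ₁) (hσ : 0 < σ) :
    ({η : ℝ | IsLocalMax (gSum1 ξ₀ ξ₁ σ) η} = {(ξ₀ + ξ₁) / 2} ↔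
      ξ₁ - ξ₀ ≤ Real.sqrt 2 / (Real.pi * σ)) ∧
    (Real.sqrt 2 / (Real.pi * σ) < ξ₁ - ξ₀ →
      (∃ η₁ η₂ : ℝ, η₁ ≠ η₂ ∧ IsLocalMax (gSum1 ξ₀ ξ₁ σ) η₁ ∧
          IsLocalMax (gSum1 ξ₀ ξ₁ σ) η₂ ∧ η₁ + η₂ = ξ₀ + ξ₁ ∧
          ∀ η : ℝ, IsLocalMax (gSum1 ξ₀ ξ₁ σ) η → η = η₁ ∨ η = η₂) ∧
      IsLocalMin (gSum1 ξ₀ ξ₁ σ) ((ξ₀ + ξ₁) / 2)) := by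
  have hπ : 0 < Real.pi := Real.pi_pos
  set c := Real.pi^2*σ^2 with hcdef
  have hc : 0 < c := by positivity
  set d := (ξ₁-ξ₀)/2 with hddef
  have hd : 0 < d := by rw [hddef]; linarith
  set m := (ξ₀+ξ₁)/2 with hmdef
  have hderiv : ∀ η : ℝ, HasDerivAt (gSum1 ξ₀ ξ₁ σ)
      (-(2*c) * Real.exp (-(c*((η-m)^2+d^2))) * G c d (η-m)) η :=
    fun η => hasDerivAt_gSum1 ξ₀ ξ₁ σ η
  have hg_deriv : ∀ η : ℝ, deriv (gSum1 ξ₀ ξ₁ σ) η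
      = -(2*c) * Real.exp (-(c*((η-m)^2+d^2))) * G c d (η-m) :=
    fun η => (hderiv η).deriv
  have hcont : Continuous (gSum1 ξ₀ ξ₁ σ) := by unfold gSum1; fun_prop
  -- local max implies critical point
  have hmax_zero : ∀ η : ℝ, IsLocalMax (gSum1 ξ₀ ξ₁ σ) η → G c d (η - m) = 0 := by
    intro η hη
    have h0 := hη.deriv_eq_zero
    rw [hg_deriv] at h0
    have hne : -(2*c) * Real.exp (-(c*((η-m)^2+d^2))) ≠ 0 :=
      mul_ne_zero (by intro h; nlinarith) (Real.exp_ne_zero _)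
    exact (mul_eq_zero.mp h0).resolve_left hne
  -- monotonicity tools
  have monoOn : ∀ a b : ℝ, (∀ η ∈ Ioo a b, G c d (η - m) < 0) →
      StrictMonoOn (gSum1 ξ₀ ξ₁ σ) (Icc a b) := by
    intro a b hG
    apply strictMonoOn_of_deriv_pos (convex_Icc a b) hcont.continuousOn
    intro x hx
    rw [interior_Icc] at hx
    rw [hg_deriv]
    have h1 : 0 < Real.exp (-(c*((x-m)^2+d^2))) := Real.exp_pos _
    nlinarith [mul_pos (mul_pos (show (0:ℝ) < 2*c by linarith) h1) (neg_pos.2 (hG x hx))]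
  have antiOn : ∀ a b : ℝ, (∀ η ∈ Ioo a b, 0 < G c d (η - m)) →
      StrictAntiOn (gSum1 ξ₀ ξ₁ σ) (Icc a b) := by
    intro a b hG
    apply strictAntiOn_of_deriv_neg (convex_Icc a b) hcont.continuousOn
    intro x hx
    rw [interior_Icc] at hx
    rw [hg_deriv]
    have h1 : 0 < Real.exp (-(c*((x-m)^2+d^2))) := Real.exp_pos _
    nlinarith [mul_pos (mul_pos (show (0:ℝ) < 2*c by linarith) h1) (hG x hx)]
  have mkmax : ∀ a p b : ℝ, a < p → p < b → (∀ η ∈ Ioo a p, G c d (η - m) < 0) →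
      (∀ η ∈ Ioo p b, 0 < G c d (η - m)) → IsLocalMax (gSum1 ξ₀ ξ₁ σ) p := by
    intro a p b hap hpb hneg hpos
    exact isLocalMax_of_mono_anti hap hpb
      (((monoOn a p hneg).monotoneOn).mono Ioc_subset_Icc_self)
      (((antiOn p b hpos).antitoneOn).mono Ico_subset_Icc_self)
  have mkmin : ∀ a p b : ℝ, a < p → p < b → (∀ η ∈ Ioo a p, 0 < G c d (η - m)) →
      (∀ η ∈ Ioo p b, G c d (η - m) < 0) → IsLocalMin (gSum1 ξ₀ ξ₁ σ) p := by
    intro a p b hap hpb hpos hneg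
    exact isLocalMin_of_anti_mono hap hpb
      (((antiOn a p hpos).antitoneOn).mono Ioc_subset_Icc_self)
      (((monoOn p b hneg).monotoneOn).mono Ico_subset_Icc_self)
  -- condition bridge
  have hbridge : (ξ₁ - ξ₀ ≤ Real.sqrt 2 / (Real.pi * σ)) ↔ 0 ≤ 1 - 2*c*d*d := by
    have hps : 0 < Real.pi * σ := by positivity
    rw [le_div_iff₀ hps]
    constructor
    · intro h
      have hnn : 0 ≤ (ξ₁ - ξ₀) * (Real.pi * σ) := mul_nonneg (by linarith) hps.le
      have h2 : ((ξ₁ - ξ₀) * (Real.pi * σ))^2 ≤ (Real.sqrt 2)^2 := pow_le_pow_left₀ hnn h 2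
      rw [Real.sq_sqrt (by norm_num : (0:ℝ) ≤ 2)] at h2
      rw [hcdef, hddef]
      nlinarith [h2]
    · intro h
      rw [hcdef, hddef] at h
      have h2 : ((ξ₁ - ξ₀) * (Real.pi * σ))^2 ≤ 2 := by nlinarith [h]
      exact Real.le_sqrt_of_sq_le h2
  by_cases hα : 0 ≤ 1 - 2*c*d*d
  · -- subcritical case
    have gpos : ∀ t : ℝ, 0 < t → 0 < G c d t := fun t ht => G_pos_sub hc hd hα ht
    have gneg : ∀ t : ℝ, t < 0 → G c d t < 0 := by
      intro t ht
      have := gpos (-t) (by linarith)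
      rw [G_odd] at this
      linarith
    have hmaxm : IsLocalMax (gSum1 ξ₀ ξ₁ σ) m :=
      mkmax (m-1) m (m+1) (by linarith) (by linarith)
        (fun η hη => gneg _ (by linarith [hη.2]))
        (fun η hη => gpos _ (by linarith [hη.1]))
    have hset : {η : ℝ | IsLocalMax (gSum1 ξ₀ ξ₁ σ) η} = {m} := by
      ext η
      simp only [Set.mem_setOf_eq, Set.mem_singleton_iff]
      constructor
      · intro hη
        have h0 := hmax_zero η hη
        by_contra hne
        rcases lt_or_gt_of_ne (sub_ne_zero.2 hne) with h | h
        · exact absurd h0 (ne_of_lt (gneg _ h))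
        · exact absurd h0 (ne_of_gt (gpos _ h))
      · rintro rfl; exact hmaxm
    refine ⟨iff_of_true hset (hbridge.mpr hα), ?_⟩
    intro hlt
    exact absurd (hbridge.mpr hα) (not_le.2 hlt)
  · -- supercritical case
    push_neg at hα
    obtain ⟨t2, ht2pos, ht2zero⟩ := exists_G_zero hc hd hα
    have s1 : ∀ t : ℝ, 0 < t → t < t2 → G c d t < 0 :=
      fun t h1 h2 => G_neg_of_lt_zero hc hd ht2pos ht2zero h1 h2
    have s2 : ∀ t : ℝ, t2 < t → 0 < G c d t :=
      fun t h => G_pos_of_gt_zero hc hd ht2pos ht2zero h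
    have s3 : ∀ t : ℝ, -t2 < t → t < 0 → 0 < G c d t := by
      intro t h1 h2
      have := s1 (-t) (by linarith) (by linarith)
      rw [G_odd] at this; linarith
    have s4 : ∀ t : ℝ, t < -t2 → G c d t < 0 := by
      intro t h
      have := s2 (-t) (by linarith)
      rw [G_odd] at this; linarith
    have hmax2 : IsLocalMax (gSum1 ξ₀ ξ₁ σ) (m+t2) :=
      mkmax m (m+t2) (m+t2+1) (by linarith) (by linarith)
        (fun η hη => s1 (η-m) (by linarith [hη.1]) (by linarith [hη.2]))
        (fun η hη => s2 (η-m) (by linarith [hη.1]))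
    have hmax1 : IsLocalMax (gSum1 ξ₀ ξ₁ σ) (m-t2) :=
      mkmax (m-t2-1) (m-t2) m (by linarith) (by linarith)
        (fun η hη => s4 (η-m) (by linarith [hη.2]))
        (fun η hη => s3 (η-m) (by linarith [hη.1]) (by linarith [hη.2]))
    have hminm : IsLocalMin (gSum1 ξ₀ ξ₁ σ) m :=
      mkmin (m-t2) m (m+t2) (by linarith) (by linarith)
        (fun η hη => s3 (η-m) (by linarith [hη.1]) (by linarith [hη.2]))
        (fun η hη => s1 (η-m) (by linarith [hη.1]) (by linarith [hη.2]))
    have hnotm : ¬ IsLocalMax (gSum1 ξ₀ ξ₁ σ) m :=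
      not_isLocalMax_of_strictMonoOn (show m < m+t2 by linarith)
        (monoOn m (m+t2) (fun η hη => s1 (η-m) (by linarith [hη.1]) (by linarith [hη.2])))
    have hclass : ∀ η : ℝ, IsLocalMax (gSum1 ξ₀ ξ₁ σ) η → η = m-t2 ∨ η = m+t2 := by
      intro η hη
      have h0 := hmax_zero η hη
      rcases lt_trichotomy (η-m) 0 with h | h | h
      · left
        rcases lt_trichotomy (η-m) (-t2) with h2 | h2 | h2
        · exact absurd h0 (ne_of_lt (s4 _ h2))
        · linarith
        · exact absurd h0 (ne_of_gt (s3 _ h2 h))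
      · exfalso
        apply hnotm
        have hη' : η = m := by linarith
        rwa [hη'] at hη
      · right
        rcases lt_trichotomy (η-m) t2 with h2 | h2 | h2
        · exact absurd h0 (ne_of_lt (s1 _ h h2))
        · linarith
        · exact absurd h0 (ne_of_gt (s2 _ h2))
    constructor
    · apply iff_of_false
      · intro hset
        have hmem : m ∈ ({η : ℝ | IsLocalMax (gSum1 ξ₀ ξ₁ σ) η}) := by rw [hset]; rfl
        exact hnotm hmem
      · intro h
        exact absurd (hbridge.mp h) (not_le.2 hα)
    · intro _
      refine ⟨⟨m-t2, m+t2, by intro h; linarith, hmax1, hmax2, by rw [hmdef]; ring, hclass⟩, hminm⟩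
end
end

section
/- Let s be the unique positive solution of ln(s/a) = (1/2)(s − 1/s) and set Δ_c = (1+s)/(πσ√(2s)). If Δ > Δ_c, then for every t ∈ ℝ the function η ↦ |V(t,η)| has exactly two local-maximum points and exactly one local-minimum point on ℝ. -/
noncomputable section

open MeasureTheory

open Real

set_option maxHeartbeats 1000000

lemma keyA {a s β : ℝ} (ha : 0 < a) (hs : 0 < s)
    (hseq : Real.log (s / a) = (1/2) * (s - 1/s))
    (hβ : (1 + s)^2 / (2*s) < β) :
    ∃ x : ℝ, -β < x ∧ x < -Real.log a ∧
      0 < (x + β) * Real.exp (-x) + a * (x - β) := by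
  have hls : Real.log s - Real.log a = (1/2) * (s - 1/s) := by
    rw [← Real.log_div hs.ne' ha.ne']; exact hseq
  set β₀ : ℝ := (1 + s)^2 / (2*s) with hβ₀def
  have hβ₀ : β₀ = (s + 2 + 1/s)/2 := by rw [hβ₀def]; field_simp; ring
  have hδ : 0 < β - β₀ := by linarith
  set δ := β - β₀ with hδdef
  have hed : δ + 1 < Real.exp δ := Real.add_one_lt_exp (ne_of_gt hδ)
  have hEpos : (0:ℝ) < Real.exp δ := Real.exp_pos δ
  rcases le_or_gt s 1 with hs1 | hs1
  · -- case s ≤ 1, x := s + 1 - β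
    refine ⟨s + 1 - β, by linarith, ?_, ?_⟩
    · have hlogs : Real.log s ≤ 0 := Real.log_nonpos hs.le hs1
      have h1 : s + 1 + Real.log a ≤ β₀ := by
        have hlA : Real.log a = Real.log s - (1/2)*(s - 1/s) := by linarith
        rw [hlA, hβ₀]
        have h1s : 0 < 1/s := by positivity
        have hss : s * (1/s) = 1 := by field_simp
        nlinarith
      linarith
    · have he0 : β₀ - s - 1 = Real.log a - Real.log s := by
        have : β₀ - s - 1 = -((1/2) * (s - 1/s)) := by rw [hβ₀]; field_simp; ring
        rw [this]; linarith
      have hexp : Real.exp (β₀ - s - 1) = a / s := by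
        rw [he0, Real.exp_sub, Real.exp_log ha, Real.exp_log hs]
      have hx : -(s + 1 - β) = β₀ - s - 1 + δ := by rw [hδdef]; ring
      rw [hx, Real.exp_add, hexp]
      have h2β' : s + 1 - β - β = -1 - 1/s - 2*δ := by
        rw [hδdef, hβ₀]; field_simp; ring
      have hfive : (s + 1 - β + β) * (a / s * Real.exp δ) = (a*(s+1)/s) * Real.exp δ := by
        ring
      rw [h2β', hfive]
      have step1 : (a*(s+1)/s) * Real.exp δ > (a*(s+1)/s) * (1+δ) := by
        apply mul_lt_mul_of_pos_left (by linarith) (by positivity)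
      have step2 : (a*(s+1)/s) * (1+δ) - a * (1 + 1/s + 2*δ) = a*δ*(1-s)/s := by
        field_simp; ring
      have step3 : 0 ≤ a*δ*(1-s)/s := by
        have : 0 ≤ 1 - s := by linarith
        positivity
      have : a * (-1 - 1/s - 2*δ) = -(a * (1 + 1/s + 2*δ)) := by ring
      rw [this]
      linarith
  · -- case 1 < s, x := 1/s + 1 - β
    have hlogs : 0 < Real.log s := Real.log_pos hs1
    have hsinh : Real.log s < (1/2) * (s - 1/s) := by
      have h := (Real.self_lt_sinh_iff (x := Real.log s)).mpr hlogs
      rw [Real.sinh_log hs] at h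
      have h2 : (s - s⁻¹)/2 = (1/2) * (s - 1/s) := by rw [one_div]; ring
      linarith [h, h2.le, h2.ge]
    have hla : Real.log a < 0 := by linarith
    have ha1 : a < 1 := by
      have := Real.exp_lt_exp.mpr hla
      rwa [Real.exp_log ha, Real.exp_zero] at this
    have h1spos : 0 < 1/s := by positivity
    refine ⟨1/s + 1 - β, by linarith, ?_, ?_⟩
    · have h1 : 1/s + 1 + Real.log a < β₀ := by
        have hlA : Real.log a = Real.log s - (1/2)*(s - 1/s) := by linarith
        rw [hlA, hβ₀]
        have hls2 : Real.log s < s - 1/s := by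
          have : 0 < (1/2) * (s - 1/s) := by linarith
          linarith
        have hss : s * (1/s) = 1 := by field_simp
        nlinarith
      linarith
    · have he0 : β₀ - 1/s - 1 = Real.log s - Real.log a := by
        have : β₀ - 1/s - 1 = (1/2) * (s - 1/s) := by rw [hβ₀]; field_simp; ring
        rw [this]; linarith
      have hexp : Real.exp (β₀ - 1/s - 1) = s / a := by
        rw [he0, Real.exp_sub, Real.exp_log ha, Real.exp_log hs]
      have hx : -(1/s + 1 - β) = β₀ - 1/s - 1 + δ := by rw [hδdef]; ring
      rw [hx, Real.exp_add, hexp]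
      have h2β' : 1/s + 1 - β - β = -(s+1) - 2*δ := by
        rw [hδdef, hβ₀]; field_simp; ring
      have hfive : (1/s + 1 - β + β) * (s / a * Real.exp δ) = ((1+s)/a) * Real.exp δ := by
        field_simp; ring
      rw [h2β', hfive]
      have step1 : ((1+s)/a) * Real.exp δ > ((1+s)/a) * (1+δ) := by
        apply mul_lt_mul_of_pos_left (by linarith) (by positivity)
      have hinv : a < 1/a := by
        rw [lt_div_iff₀ ha]; nlinarith
      have t1 : 0 < (1+s)*(1/a - a) := by
        have h' : 0 < 1/a - a := by linarith
        have : (0:ℝ) < 1 + s := by linarith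
        exact mul_pos this h'
      have t2 : 0 ≤ δ*((1+s)/a - 2*a) := by
        have haa : a * a < 1 := by nlinarith
        have h2a : 2*a ≤ (1+s)/a := by
          rw [le_div_iff₀ ha]; nlinarith
        have h' : 0 ≤ (1+s)/a - 2*a := by linarith
        exact mul_nonneg hδ.le h'
      have step2 : ((1+s)/a) * (1+δ) + (-(s+1) - 2*δ) * a
          = (1+s)*(1/a - a) + δ*((1+s)/a - 2*a) := by field_simp; ring
      have : a * (-(s+1) - 2*δ) = (-(s+1) - 2*δ) * a := by ring
      rw [this]
      linarith

lemma keyB {a s β : ℝ} (ha : 0 < a) (hs : 0 < s)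
    (hseq : Real.log (s / a) = (1/2) * (s - 1/s))
    (hβ : (1 + s)^2 / (2*s) < β) :
    ∃ x : ℝ, -Real.log a < x ∧ x < β ∧
      (x + β) * Real.exp (-x) + a * (x - β) < 0 := by
  have ha' : 0 < a⁻¹ := by positivity
  have hs' : 0 < s⁻¹ := by positivity
  have hseq' : Real.log (s⁻¹ / a⁻¹) = (1/2) * (s⁻¹ - 1/s⁻¹) := by
    have h1 : s⁻¹ / a⁻¹ = (s/a)⁻¹ := by field_simp
    rw [h1, Real.log_inv, hseq]
    field_simp
    ring
  have hβ' : (1 + s⁻¹)^2 / (2*s⁻¹) < β := by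
    have : (1 + s⁻¹)^2 / (2*s⁻¹) = (1 + s)^2 / (2*s) := by
      field_simp; ring
    rwa [this]
  obtain ⟨x', h1, h2, h3⟩ := keyA ha' hs' hseq' hβ'
  rw [Real.log_inv] at h2
  refine ⟨-x', by linarith, by linarith, ?_⟩
  have key : (-x' + β) * Real.exp (-(-x')) + a * (-x' - β)
      = -(a * Real.exp x') * ((x' + β) * Real.exp (-x') + a⁻¹ * (x' - β)) := by
    have hx : Real.exp x' * Real.exp (-x') = 1 := by
      rw [← Real.exp_add]; simp
    field_simp
    linear_combination (a*(x' + β)) * hx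
  rw [key]
  have hpos : 0 < a * Real.exp x' := by positivity
  nlinarith

/-- Zero between a positive point and a nonpositive point. -/
lemma exists_zero_between {f : ℝ → ℝ} (hf : Continuous f) {p v : ℝ}
    (hp : 0 < f p) (hv : f v ≤ 0) :
    ∃ z, f z = 0 ∧ min p v ≤ z ∧ z ≤ max p v := by
  rcases eq_or_lt_of_le hv with h | h
  · exact ⟨v, h.symm.symm ▸ h.symm, min_le_right _ _, le_max_right _ _⟩
  · rcases lt_trichotomy v p with hvp | hvp | hvp
    · have h0 : (0:ℝ) ∈ Set.Ioo (f v) (f p) := ⟨h, hp⟩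
      obtain ⟨z, hz, hz0⟩ := intermediate_value_Ioo hvp.le hf.continuousOn h0
      refine ⟨z, hz0, le_trans (min_le_right _ _) hz.1.le, le_trans hz.2.le (le_max_left _ _)⟩
    · exact absurd (hvp ▸ hp) (not_lt.mpr hv)
    · have h0 : (0:ℝ) ∈ Set.Ioo (f v) (f p) := ⟨h, hp⟩
      obtain ⟨z, hz, hz0⟩ := intermediate_value_Ioo' hvp.le hf.continuousOn h0
      refine ⟨z, hz0, le_trans (min_le_left _ _) hz.1.le, le_trans hz.2.le (le_max_right _ _)⟩

/-- Zero between a negative point and a nonnegative point. -/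
lemma exists_zero_between' {f : ℝ → ℝ} (hf : Continuous f) {p v : ℝ}
    (hp : f p < 0) (hv : 0 ≤ f v) :
    ∃ z, f z = 0 ∧ min p v ≤ z ∧ z ≤ max p v := by
  obtain ⟨z, hz0, hz1, hz2⟩ := exists_zero_between (f := fun x => -f x)
    (hf := hf.neg) (p := p) (v := v) (by simpa using hp) (by simpa using hv)
  exact ⟨z, by linarith [hz0, neg_eq_zero.mp hz0], hz1, hz2⟩

/-- From four alternating sample signs and an at-most-3-zeros bound, get the full
sign pattern `+,-,+,-` with three crossing points. -/
lemma pattern_of_samples {f : ℝ → ℝ} (hf : Continuous f)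
    {s0 s1 s2 s3 : ℝ} (h01 : s0 < s1) (h12 : s1 < s2) (h23 : s2 < s3)
    (hs0 : 0 < f s0) (hs1 : f s1 < 0) (hs2 : 0 < f s2) (hs3 : f s3 < 0)
    (hmax3 : ∀ z₁ z₂ z₃ z₄ : ℝ, z₁ < z₂ → z₂ < z₃ → z₃ < z₄ →
      f z₁ = 0 → f z₂ = 0 → f z₃ = 0 → f z₄ = 0 → False) :
    ∃ w₁ w₂ w₃ : ℝ, w₁ < w₂ ∧ w₂ < w₃ ∧
      (∀ v, v < w₁ → 0 < f v) ∧ (∀ v ∈ Set.Ioo w₁ w₂, f v < 0) ∧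
      (∀ v ∈ Set.Ioo w₂ w₃, 0 < f v) ∧ (∀ v, w₃ < v → f v < 0) := by
  obtain ⟨w₁, hw₁m, hw₁⟩ := intermediate_value_Ioo' h01.le hf.continuousOn
    (show (0:ℝ) ∈ Set.Ioo (f s1) (f s0) from ⟨hs1, hs0⟩)
  obtain ⟨w₂, hw₂m, hw₂⟩ := intermediate_value_Ioo h12.le hf.continuousOn
    (show (0:ℝ) ∈ Set.Ioo (f s1) (f s2) from ⟨hs1, hs2⟩)
  obtain ⟨w₃, hw₃m, hw₃⟩ := intermediate_value_Ioo' h23.le hf.continuousOn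
    (show (0:ℝ) ∈ Set.Ioo (f s3) (f s2) from ⟨hs3, hs2⟩)
  have hw12 : w₁ < w₂ := lt_trans hw₁m.2 hw₂m.1
  have hw23 : w₂ < w₃ := lt_trans hw₂m.2 hw₃m.1
  refine ⟨w₁, w₂, w₃, hw12, hw23, ?_, ?_, ?_, ?_⟩
  · intro v hv
    by_contra hle
    push_neg at hle
    obtain ⟨z, hz0, hzl, hzr⟩ := exists_zero_between hf hs0 hle
    have hzw : z < w₁ := lt_of_le_of_lt hzr (max_lt hw₁m.1 hv)
    exact hmax3 z w₁ w₂ w₃ hzw hw12 hw23 hz0 hw₁ hw₂ hw₃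
  · rintro v ⟨hv1, hv2⟩
    by_contra hle
    push_neg at hle
    obtain ⟨z, hz0, hzl, hzr⟩ := exists_zero_between' hf hs1 hle
    have hzw1 : w₁ < z := lt_of_lt_of_le (lt_min hw₁m.2 hv1) hzl
    have hzw2 : z < w₂ := lt_of_le_of_lt hzr (max_lt hw₂m.1 hv2)
    exact hmax3 w₁ z w₂ w₃ hzw1 hzw2 hw23 hw₁ hz0 hw₂ hw₃
  · rintro v ⟨hv1, hv2⟩
    by_contra hle
    push_neg at hle
    obtain ⟨z, hz0, hzl, hzr⟩ := exists_zero_between hf hs2 hle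
    have hzw1 : w₂ < z := lt_of_lt_of_le (lt_min hw₂m.2 hv1) hzl
    have hzw2 : z < w₃ := lt_of_le_of_lt hzr (max_lt hw₃m.1 hv2)
    exact hmax3 w₁ w₂ z w₃ hw12 hzw1 hzw2 hw₁ hw₂ hz0 hw₃
  · intro v hv
    by_contra hle
    push_neg at hle
    obtain ⟨z, hz0, hzl, hzr⟩ := exists_zero_between' hf hs3 hle
    have hzw : w₃ < z := lt_of_lt_of_le (lt_min hw₃m.2 hv) hzl
    exact hmax3 w₁ w₂ w₃ z hw12 hw23 hzw hw₁ hw₂ hw₃ hz0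

/-- At most three zeros for `ϕ v = β sinh v - (v-g)(cosh v + c)`. -/
lemma phi_max3 {β c g : ℝ} (hβ : 2 < β) (hc : -1 ≤ c) (hc1 : c ≤ 1) :
    ∀ z₁ z₂ z₃ z₄ : ℝ, z₁ < z₂ → z₂ < z₃ → z₃ < z₄ →
      β*Real.sinh z₁ - (z₁-g)*(Real.cosh z₁ + c) = 0 →
      β*Real.sinh z₂ - (z₂-g)*(Real.cosh z₂ + c) = 0 →
      β*Real.sinh z₃ - (z₃-g)*(Real.cosh z₃ + c) = 0 →
      β*Real.sinh z₄ - (z₄-g)*(Real.cosh z₄ + c) = 0 → False := by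
  intro z₁ z₂ z₃ z₄ h12 h23 h34 hz₁ hz₂ hz₃ hz₄
  set H : ℝ → ℝ := fun v => β * Real.sinh v / (Real.cosh v + c) - v + g with hHdef
  have hH : ∀ v : ℝ, Real.cosh v + c ≠ 0 →
      HasDerivAt H (β*(1 + c*Real.cosh v) / (Real.cosh v + c)^2 - 1) v := by
    intro v hne
    have h1 : HasDerivAt (fun v => β * Real.sinh v) (β * Real.cosh v) v :=
      (Real.hasDerivAt_sinh v).const_mul β
    have h2 : HasDerivAt (fun v => Real.cosh v + c) (Real.sinh v) v :=
      (Real.hasDerivAt_cosh v).add_const c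
    have hdiv := h1.div h2 hne
    have hfull := (hdiv.sub (hasDerivAt_id v)).add_const g
    have heq : (β * Real.cosh v * (Real.cosh v + c) - β * Real.sinh v * Real.sinh v) /
        (Real.cosh v + c)^2 - 1 = β*(1 + c*Real.cosh v) / (Real.cosh v + c)^2 - 1 := by
      congr 1
      congr 1
      linear_combination β * Real.cosh_sq_sub_sinh_sq v
    rw [← heq]
    exact hfull
  have hprod : ∀ v : ℝ, Real.cosh v + c ≠ 0 →
      β*Real.sinh v - (v-g)*(Real.cosh v + c) = (Real.cosh v + c) * H v := by
    intro v hne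
    rw [hHdef]
    field_simp
    ring
  have hzeroH : ∀ v : ℝ, Real.cosh v + c ≠ 0 →
      β*Real.sinh v - (v-g)*(Real.cosh v + c) = 0 → H v = 0 := by
    intro v hne hv
    rw [hprod v hne] at hv
    exact (mul_eq_zero.mp hv).resolve_left hne
  rcases eq_or_lt_of_le hc with hceq | hclt
  · -- c = -1
    have hceq' : c = -1 := hceq.symm
    subst hceq'
    have hden : ∀ v : ℝ, v ≠ 0 → 0 < Real.cosh v + -1 := by
      intro v hv
      have := Real.one_lt_cosh.mpr hv
      linarith
    have hdneg : ∀ v : ℝ, v ≠ 0 → deriv H v < 0 := by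
      intro v hv
      rw [(hH v (hden v hv).ne').deriv]
      have hC : 1 < Real.cosh v := Real.one_lt_cosh.mpr hv
      have hnum : β*(1 + -1*Real.cosh v) < 0 := by nlinarith
      have hd2 : 0 < (Real.cosh v + -1)^2 := pow_pos (hden v hv) 2
      have := div_neg_of_neg_of_pos hnum hd2
      linarith
    have hcont : ∀ (S : Set ℝ), (∀ v ∈ S, v ≠ 0) → ContinuousOn H S := by
      intro S hS v hv
      exact ((hH v (hden v (hS v hv)).ne').continuousAt).continuousWithinAt
    have A1 : StrictAntiOn H (Set.Iio 0) := by
      apply strictAntiOn_of_deriv_neg (convex_Iio _) (hcont _ (fun v hv => ne_of_lt hv))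
      intro v hv
      rw [interior_Iio] at hv
      exact hdneg v (ne_of_lt hv)
    have A2 : StrictAntiOn H (Set.Ioi 0) := by
      apply strictAntiOn_of_deriv_neg (convex_Ioi _) (hcont _ (fun v hv => ne_of_gt hv))
      intro v hv
      rw [interior_Ioi] at hv
      exact hdneg v (ne_of_gt hv)
    have hne0 : ∀ v : ℝ, v ≠ 0 → Real.cosh v + -1 ≠ 0 := fun v hv => (hden v hv).ne'
    rcases lt_trichotomy z₂ 0 with h | h | h
    · have e1 : H z₁ = 0 := hzeroH z₁ (hne0 z₁ (by linarith)) hz₁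
      have e2 : H z₂ = 0 := hzeroH z₂ (hne0 z₂ (by linarith)) hz₂
      have := A1 (show z₁ ∈ Set.Iio 0 by exact Set.mem_Iio.mpr (by linarith))
        (Set.mem_Iio.mpr h) h12
      rw [e1, e2] at this
      exact lt_irrefl 0 this
    · have e3 : H z₃ = 0 := hzeroH z₃ (hne0 z₃ (by linarith)) hz₃
      have e4 : H z₄ = 0 := hzeroH z₄ (hne0 z₄ (by linarith)) hz₄
      have := A2 (Set.mem_Ioi.mpr (by linarith : (0:ℝ) < z₃))
        (Set.mem_Ioi.mpr (by linarith)) h34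
      rw [e3, e4] at this
      exact lt_irrefl 0 this
    · have e2 : H z₂ = 0 := hzeroH z₂ (hne0 z₂ (by linarith)) hz₂
      have e3 : H z₃ = 0 := hzeroH z₃ (hne0 z₃ (by linarith)) hz₃
      have := A2 (Set.mem_Ioi.mpr h) (Set.mem_Ioi.mpr (by linarith)) h23
      rw [e2, e3] at this
      exact lt_irrefl 0 this
  · -- -1 < c
    have hden : ∀ v : ℝ, 0 < Real.cosh v + c := by
      intro v
      have := Real.one_le_cosh v
      linarith
    -- the quadratic Q y = β(1+cy) - (y+c)^2 and its root Ys > 1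
    have hQ1 : 0 < β*(1+c*1) - (1+c)^2 := by nlinarith
    have hQbig : β*(1+c*(β+3)) - ((β+3)+c)^2 < 0 := by
      have t1 : c*(β+3) ≤ 1*(β+3) := mul_le_mul_of_nonneg_right hc1 (by linarith)
      have t2 : (β+2)*(β+2) ≤ ((β+3)+c)*((β+3)+c) :=
        mul_self_le_mul_self (by linarith) (by linarith)
      nlinarith
    obtain ⟨Ys, hYsm, hYs0⟩ := intermediate_value_Ioo' (by linarith : (1:ℝ) ≤ β+3)
      (Continuous.continuousOn (by continuity : Continuous (fun y : ℝ => β*(1+c*y) - (y+c)^2)))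
      (show (0:ℝ) ∈ Set.Ioo (β*(1+c*(β+3)) - ((β+3)+c)^2) (β*(1+c*1) - (1+c)^2) from ⟨hQbig, hQ1⟩)
    have hYs1 : 1 < Ys := hYsm.1
    set Yb : ℝ := β*c - 2*c - Ys with hYbdef
    have hfact : ∀ y : ℝ, β*(1+c*y) - (y+c)^2 = (Ys - y)*(y - Yb) := by
      intro y
      rw [hYbdef]
      linear_combination hYs0
    have hYb1 : Yb < 1 := by
      have := hfact 1
      rw [this] at hQ1
      nlinarith
    set vs : ℝ := Real.arsinh (Real.sqrt (Ys^2 - 1)) with hvsdef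
    have hcoshvs : Real.cosh vs = Ys := by
      rw [hvsdef, Real.cosh_arsinh,
        Real.sq_sqrt (show (0:ℝ) ≤ Ys^2 - 1 by nlinarith),
        show 1 + (Ys^2 - 1) = Ys^2 by ring]
      exact Real.sqrt_sq (by linarith)
    have hvs0 : 0 < vs := by
      rcases lt_trichotomy vs 0 with h | h | h
      · exfalso
        have : (0:ℝ) ≤ vs := Real.arsinh_nonneg_iff.mpr (Real.sqrt_nonneg _)
        linarith
      · exfalso
        rw [h, Real.cosh_zero] at hcoshvs
        linarith
      · exact h
    have hdneg : ∀ v : ℝ, Ys < Real.cosh v → deriv H v < 0 := by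
      intro v hv
      rw [(hH v (hden v).ne').deriv]
      have hnum : β*(1 + c*Real.cosh v) - (Real.cosh v + c)^2 < 0 := by
        rw [hfact]
        have h1 : Real.cosh v - Yb > 0 := by linarith [Real.one_le_cosh v]
        nlinarith
      have hd2 : 0 < (Real.cosh v + c)^2 := pow_pos (hden v) 2
      rw [sub_neg, div_lt_one hd2]
      linarith
    have hdpos : ∀ v : ℝ, Real.cosh v < Ys → 0 < deriv H v := by
      intro v hv
      rw [(hH v (hden v).ne').deriv]
      have hnum : 0 < β*(1 + c*Real.cosh v) - (Real.cosh v + c)^2 := by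
        rw [hfact]
        have h1 : Real.cosh v - Yb > 0 := by linarith [Real.one_le_cosh v]
        nlinarith
      have hd2 : 0 < (Real.cosh v + c)^2 := pow_pos (hden v) 2
      rw [sub_pos, lt_div_iff₀ hd2]
      linarith
    have hcont : Continuous H := by
      rw [hHdef]
      exact (((continuous_const.mul Real.continuous_sinh).div
        (Real.continuous_cosh.add continuous_const) (fun v => (hden v).ne')).sub
        continuous_id).add continuous_const
    have A1 : StrictAntiOn H (Set.Iic (-vs)) := by
      apply strictAntiOn_of_deriv_neg (convex_Iic _) hcont.continuousOn
      intro v hv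
      rw [interior_Iic] at hv
      apply hdneg
      rw [← hcoshvs, Real.cosh_lt_cosh, abs_of_pos hvs0,
        abs_of_neg (show v < 0 by have := Set.mem_Iio.mp hv; linarith)]
      have := Set.mem_Iio.mp hv
      linarith
    have M : StrictMonoOn H (Set.Icc (-vs) vs) := by
      apply strictMonoOn_of_deriv_pos (convex_Icc _ _) hcont.continuousOn
      intro v hv
      rw [interior_Icc] at hv
      apply hdpos
      rw [← hcoshvs, Real.cosh_lt_cosh, abs_of_pos hvs0, abs_lt]
      exact ⟨hv.1, hv.2⟩
    have A2 : StrictAntiOn H (Set.Ici vs) := by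
      apply strictAntiOn_of_deriv_neg (convex_Ici _) hcont.continuousOn
      intro v hv
      rw [interior_Ici] at hv
      apply hdneg
      rw [← hcoshvs, Real.cosh_lt_cosh, abs_of_pos hvs0,
        abs_of_pos (show 0 < v by have := Set.mem_Ioi.mp hv; linarith)]
      exact Set.mem_Ioi.mp hv
    have e1 : H z₁ = 0 := hzeroH z₁ (hden z₁).ne' hz₁
    have e2 : H z₂ = 0 := hzeroH z₂ (hden z₂).ne' hz₂
    have e3 : H z₃ = 0 := hzeroH z₃ (hden z₃).ne' hz₃
    have e4 : H z₄ = 0 := hzeroH z₄ (hden z₄).ne' hz₄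
    rcases le_or_gt z₂ (-vs) with h | h
    · have := A1 (Set.mem_Iic.mpr (by linarith : z₁ ≤ -vs)) (Set.mem_Iic.mpr h) h12
      rw [e1, e2] at this
      exact lt_irrefl 0 this
    · rcases le_or_gt vs z₃ with h' | h'
      · have := A2 (Set.mem_Ici.mpr h') (Set.mem_Ici.mpr (by linarith)) h34
        rw [e3, e4] at this
        exact lt_irrefl 0 this
      · have := M (Set.mem_Icc.mpr ⟨h.le, by linarith⟩)
          (Set.mem_Icc.mpr ⟨by linarith, h'.le⟩) h23
        rw [e2, e3] at this
        exact lt_irrefl 0 this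

lemma cosh_big {v : ℝ} (hv : 1 ≤ |v|) : (3:ℝ)/2 ≤ Real.cosh v := by
  have h1 : Real.cosh 1 ≤ Real.cosh v := Real.cosh_le_cosh.mpr (by rwa [abs_one])
  have h2 : Real.cosh 1 = (Real.exp 1 + Real.exp (-1)) / 2 := Real.cosh_eq 1
  have he : (2.7182818283:ℝ) < Real.exp 1 := Real.exp_one_gt_d9
  have he2 : Real.exp 1 < 2.7182818286 := Real.exp_one_lt_d9
  have hen : Real.exp (-1) = (Real.exp 1)⁻¹ := by rw [Real.exp_neg]
  have hinv : (0.35:ℝ) < (Real.exp 1)⁻¹ := by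
    rw [lt_inv_comm₀ (by norm_num) (by positivity)]
    calc Real.exp 1 < 2.7182818286 := he2
      _ ≤ 0.35⁻¹ := by norm_num
  nlinarith

lemma phi_pos_far_left {β c g v : ℝ} (hβ : 0 < β) (hc : -1 ≤ c)
    (hv1 : v ≤ -1) (hv2 : v ≤ g - 3*β) :
    0 < β*Real.sinh v - (v-g)*(Real.cosh v + c) := by
  set C := Real.cosh v with hC
  set S := Real.sinh v with hS
  have hC32 : (3:ℝ)/2 ≤ C := cosh_big (by rw [abs_of_neg (by linarith : v < 0)]; linarith)
  have hSC : -C < S := by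
    have := Real.exp_pos v
    rw [hC, hS, Real.cosh_eq, Real.sinh_eq]
    nlinarith
  have h3 : 3*β ≤ g - v := by linarith
  have h4 : 3*β*(C/3) ≤ (g-v)*(C+c) :=
    mul_le_mul h3 (by linarith) (by linarith) (by linarith)
  have h5 : 0 < β*(C+S) := mul_pos hβ (by linarith)
  nlinarith

lemma phi_neg_far_right {β c g v : ℝ} (hβ : 0 < β) (hc : -1 ≤ c)
    (hv1 : 1 ≤ v) (hv2 : g + 3*β ≤ v) :
    β*Real.sinh v - (v-g)*(Real.cosh v + c) < 0 := by
  set C := Real.cosh v with hC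
  set S := Real.sinh v with hS
  have hC32 : (3:ℝ)/2 ≤ C := cosh_big (by rw [abs_of_pos (by linarith : 0 < v)]; linarith)
  have hSC : S < C := by
    have := Real.exp_pos (-v)
    rw [hC, hS, Real.cosh_eq, Real.sinh_eq]
    nlinarith
  have h3 : 3*β ≤ v - g := by linarith
  have h4 : 3*β*(C/3) ≤ (v-g)*(C+c) :=
    mul_le_mul h3 (by linarith) (by linarith) (by linarith)
  have h5 : 0 < β*(C-S) := mul_pos hβ (by linarith)
  nlinarith

/-- The key change of variables: `ψ u = -(2a/q) ϕ(qu + log a)`. -/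
lemma psi_eq_phi {a c q d u : ℝ} (ha : 0 < a) (hq : 0 < q) :
    (u+d)*Real.exp (-(q*u)) + a^2*(u-d)*Real.exp (q*u) + 2*a*c*u
      = -(2*a/q) * ((q*d)*Real.sinh (q*u + Real.log a)
          - (q*u + Real.log a - Real.log a)*(Real.cosh (q*u + Real.log a) + c)) := by
  have hea : Real.exp (Real.log a) = a := Real.exp_log ha
  have h1 : Real.exp (q*u + Real.log a) = a * Real.exp (q*u) := by
    rw [Real.exp_add, hea]; ring
  have h2 : Real.exp (-(q*u + Real.log a)) = Real.exp (-(q*u)) / a := by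
    rw [show -(q*u + Real.log a) = -(q*u) - Real.log a by ring, Real.exp_sub, hea]
  rw [Real.sinh_eq, Real.cosh_eq, h1, h2]
  field_simp
  ring

/-- Convex-combination decomposition gives positivity of ψ at the left sample point. -/
lemma psi_pos_mid {a c q d u : ℝ} (ha : 0 < a) (hq : 0 < q) (hd : 0 < d)
    (hc : -1 ≤ c) (hc1 : c ≤ 1) (hu1 : -d < u) (hu3 : u < d)
    (hu2 : q*u < -Real.log a)
    (hM : 0 < (u + d)*Real.exp (-(q*u)) + a*(u - d)) :
    0 < (u+d)*Real.exp (-(q*u)) + a^2*(u-d)*Real.exp (q*u) + 2*a*c*u := by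
  set E := Real.exp (q*u) with hE
  set X := Real.exp (-(q*u)) with hX
  have hEpos : 0 < E := Real.exp_pos _
  have hXpos : 0 < X := Real.exp_pos _
  have hXE : X * E = 1 := by rw [hX, hE, ← Real.exp_add]; simp
  have haE : a * E < 1 := by
    have h1 : E < Real.exp (Real.log a⁻¹) := by
      rw [hE]
      apply Real.exp_lt_exp.mpr
      rw [Real.log_inv]
      exact hu2
    rw [Real.exp_log (by positivity)] at h1
    calc a * E < a * a⁻¹ := by exact mul_lt_mul_of_pos_left h1 ha
      _ = 1 := by field_simp
  have hmp : 0 < (u + d)*X + a*(u - d) := hM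
  have hmm : 0 < (u + d)*X + a*(d - u) := by
    have h1 : 0 < (u+d)*X := mul_pos (by linarith) hXpos
    have h2 : 0 < a*(d-u) := mul_pos ha (by linarith)
    linarith
  have hid : (u+d)*X + a^2*(u-d)*E + 2*a*c*u
      = (1+c)/2 * ((1 + a*E) * ((u + d)*X + a*(u - d)))
        + (1-c)/2 * ((1 - a*E) * ((u + d)*X + a*(d - u))) := by
    linear_combination (-(a*c*(u+d))) * hXE
  rw [hid]
  have hp1 : 0 < (1 + a*E) * ((u + d)*X + a*(u - d)) :=
    mul_pos (by nlinarith) hmp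
  have hp2 : 0 < (1 - a*E) * ((u + d)*X + a*(d - u)) :=
    mul_pos (by linarith) hmm
  rcases le_or_gt c 0 with h | h
  · nlinarith
  · nlinarith

lemma psi_neg_mid {a c q d u : ℝ} (ha : 0 < a) (hq : 0 < q) (hd : 0 < d)
    (hc : -1 ≤ c) (hc1 : c ≤ 1) (hu1 : -d < u) (hu3 : u < d)
    (hu2 : -Real.log a < q*u)
    (hM : (u + d)*Real.exp (-(q*u)) + a*(u - d) < 0) :
    (u+d)*Real.exp (-(q*u)) + a^2*(u-d)*Real.exp (q*u) + 2*a*c*u < 0 := by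
  set E := Real.exp (q*u) with hE
  set X := Real.exp (-(q*u)) with hX
  have hEpos : 0 < E := Real.exp_pos _
  have hXpos : 0 < X := Real.exp_pos _
  have hXE : X * E = 1 := by rw [hX, hE, ← Real.exp_add]; simp
  have haE : 1 < a * E := by
    have h1 : Real.exp (Real.log a⁻¹) < E := by
      rw [hE]
      apply Real.exp_lt_exp.mpr
      rw [Real.log_inv]
      exact hu2
    rw [Real.exp_log (by positivity)] at h1
    calc 1 = a * a⁻¹ := by field_simp
      _ < a * E := by exact mul_lt_mul_of_pos_left h1 ha
  have hmm : 0 < (u + d)*X + a*(d - u) := by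
    have h1 : 0 < (u+d)*X := mul_pos (by linarith) hXpos
    have h2 : 0 < a*(d-u) := mul_pos ha (by linarith)
    linarith
  have hid : (u+d)*X + a^2*(u-d)*E + 2*a*c*u
      = (1+c)/2 * ((1 + a*E) * ((u + d)*X + a*(u - d)))
        + (1-c)/2 * ((1 - a*E) * ((u + d)*X + a*(d - u))) := by
    linear_combination (-(a*c*(u+d))) * hXE
  rw [hid]
  have hp1 : (1 + a*E) * ((u + d)*X + a*(u - d)) < 0 :=
    mul_neg_of_pos_of_neg (by nlinarith) hM
  have hp2 : (1 - a*E) * ((u + d)*X + a*(d - u)) < 0 :=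
    mul_neg_of_neg_of_pos (by linarith) hmm
  rcases le_or_gt c 0 with h | h
  · nlinarith
  · nlinarith


set_option maxHeartbeats 1000000 in
/-- Master sign-pattern lemma for the rescaled function
`W x = (x+β)e^{-x} + a²(x-β)eˣ + 2acx`. -/
lemma W_pattern {a c β s : ℝ} (ha : 0 < a) (hc : -1 ≤ c) (hc1 : c ≤ 1) (hs : 0 < s)
    (hseq : Real.log (s/a) = (1/2)*(s - 1/s))
    (hβ : (1+s)^2/(2*s) < β) :
    ∃ x₁ x₂ x₃ : ℝ, x₁ < x₂ ∧ x₂ < x₃ ∧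
      (∀ x, x < x₁ → (x+β)*Real.exp (-x) + a^2*(x-β)*Real.exp x + 2*a*c*x < 0) ∧
      (∀ x ∈ Set.Ioo x₁ x₂, 0 < (x+β)*Real.exp (-x) + a^2*(x-β)*Real.exp x + 2*a*c*x) ∧
      (∀ x ∈ Set.Ioo x₂ x₃, (x+β)*Real.exp (-x) + a^2*(x-β)*Real.exp x + 2*a*c*x < 0) ∧
      (∀ x, x₃ < x → 0 < (x+β)*Real.exp (-x) + a^2*(x-β)*Real.exp x + 2*a*c*x) := by
  have hls : Real.log s - Real.log a = (1/2) * (s - 1/s) := by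
    rw [← Real.log_div hs.ne' ha.ne']; exact hseq
  set g : ℝ := Real.log a with hgdef
  have hβ2 : 2 < β := by
    have h2 : 2 ≤ (1+s)^2/(2*s) := by
      rw [le_div_iff₀ (by positivity)]
      nlinarith [sq_nonneg (1-s)]
    linarith
  have hβpos : 0 < β := by linarith
  have hloginv : 1 - 1/s ≤ Real.log s := by
    have h1 : Real.log s⁻¹ ≤ s⁻¹ - 1 := Real.log_le_sub_one_of_pos (by positivity)
    rw [Real.log_inv] at h1
    rw [one_div]
    linarith
  have hlogub : Real.log s ≤ s - 1 := Real.log_le_sub_one_of_pos hs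
  have hβg1 : -g < β := by
    have he1 : (1+s)^2/(2*s) + g = Real.log s + 1/s + 1 := by
      have hga : g = Real.log s - (1/2)*(s - 1/s) := by rw [hgdef]; linarith
      rw [hga]; field_simp; ring
    have : 2 ≤ (1+s)^2/(2*s) + g := by
      rw [he1]
      have : 0 < 1/s := by positivity
      linarith
    linarith
  have hβg2 : g < β := by
    have he2 : (1+s)^2/(2*s) - g = 1 + s - Real.log s := by
      have hga : g = Real.log s - (1/2)*(s - 1/s) := by rw [hgdef]; linarith
      rw [hga]; field_simp; ring
    have : 2 ≤ (1+s)^2/(2*s) - g := by rw [he2]; linarith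
    linarith
  obtain ⟨x₁, hx₁l, hx₁r, hx₁M⟩ := keyA ha hs hseq hβ
  obtain ⟨x₂, hx₂l, hx₂r, hx₂M⟩ := keyB ha hs hseq hβ
  set W : ℝ → ℝ := fun x =>
    (x+β)*Real.exp (-x) + a^2*(x-β)*Real.exp x + 2*a*c*x with hWdef
  set F : ℝ → ℝ := fun x => β*Real.sinh (x+g) - x*(Real.cosh (x+g) + c) with hFdef
  have hWF : ∀ x : ℝ, W x = -(2*a) * F x := by
    intro x
    have hea : Real.exp g = a := Real.exp_log ha
    have h1 : Real.exp (x + g) = a * Real.exp x := by rw [Real.exp_add, hea]; ring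
    have h2 : Real.exp (-(x + g)) = Real.exp (-x) / a := by
      rw [show -(x + g) = -x - g by ring, Real.exp_sub, hea]
    rw [hWdef, hFdef]
    simp only
    rw [Real.sinh_eq, Real.cosh_eq, h1, h2]
    field_simp
    ring
  have hcontF : Continuous F := by
    rw [hFdef]
    continuity
  have hWx₁ : 0 < W x₁ := by
    have h := psi_pos_mid (a := a) (c := c) (q := 1) (d := β) (u := x₁)
      ha one_pos hβpos hc hc1 (by linarith) (by linarith)
      (by rw [one_mul]; exact hx₁r)
      (by rw [one_mul]; exact hx₁M)
    rw [hWdef]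
    simpa using h
  have hWx₂ : W x₂ < 0 := by
    have h := psi_neg_mid (a := a) (c := c) (q := 1) (d := β) (u := x₂)
      ha one_pos hβpos hc hc1 (by linarith) (by linarith)
      (by rw [one_mul]; exact hx₂l)
      (by rw [one_mul]; exact hx₂M)
    rw [hWdef]
    simpa using h
  have hFx₁ : F x₁ < 0 := by nlinarith [hWF x₁]
  have hFx₂ : 0 < F x₂ := by nlinarith [hWF x₂]
  set s0 : ℝ := -3*β - 1 - |g| with hs0def
  set s3 : ℝ := 3*β + 1 + |g| with hs3def
  have habs1 : g ≤ |g| := le_abs_self g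
  have habs2 : -|g| ≤ g := neg_abs_le g
  have hFs0 : 0 < F s0 := by
    have h := phi_pos_far_left (β := β) (c := c) (g := g) (v := s0 + g)
      hβpos hc (by rw [hs0def]; linarith) (by rw [hs0def]; linarith)
    rw [show s0 + g - g = s0 by ring] at h
    rw [hFdef]
    exact h
  have hFs3 : F s3 < 0 := by
    have h := phi_neg_far_right (β := β) (c := c) (g := g) (v := s3 + g)
      hβpos hc (by rw [hs3def]; linarith) (by rw [hs3def]; linarith)
    rw [show s3 + g - g = s3 by ring] at h
    rw [hFdef]
    exact h
  have hmax3 : ∀ z₁ z₂ z₃ z₄ : ℝ, z₁ < z₂ → z₂ < z₃ → z₃ < z₄ →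
      F z₁ = 0 → F z₂ = 0 → F z₃ = 0 → F z₄ = 0 → False := by
    intro z₁ z₂ z₃ z₄ h12 h23 h34 e1 e2 e3 e4
    rw [hFdef] at e1 e2 e3 e4
    apply phi_max3 hβ2 hc hc1 (z₁+g) (z₂+g) (z₃+g) (z₄+g)
      (by linarith) (by linarith) (by linarith)
    · rw [show z₁ + g - g = z₁ by ring]; exact e1
    · rw [show z₂ + g - g = z₂ by ring]; exact e2
    · rw [show z₃ + g - g = z₃ by ring]; exact e3
    · rw [show z₄ + g - g = z₄ by ring]; exact e4
  obtain ⟨w₁, w₂, w₃, hw12, hw23, P0, P1, P2, P3⟩ :=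
    pattern_of_samples hcontF
      (show s0 < x₁ by rw [hs0def]; linarith)
      (show x₁ < x₂ by linarith)
      (show x₂ < s3 by rw [hs3def]; linarith)
      hFs0 hFx₁ hFx₂ hFs3 hmax3
  refine ⟨w₁, w₂, w₃, hw12, hw23, ?_, ?_, ?_, ?_⟩
  · intro x hx
    have := P0 x hx
    show W x < 0
    nlinarith [hWF x]
  · intro x hx
    have := P1 x hx
    show 0 < W x
    nlinarith [hWF x]
  · intro x hx
    have := P2 x hx
    show W x < 0
    nlinarith [hWF x]
  · intro x hx
    have := P3 x hx
    show 0 < W x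
    nlinarith [hWF x]

lemma not_isLocalMax_right {f : ℝ → ℝ} {η b : ℝ} (hb : η < b)
    (h : ∀ z ∈ Set.Ioo η b, f η < f z) : ¬ IsLocalMax f η := by
  intro hm
  obtain ⟨ε, hε, hball⟩ := Metric.eventually_nhds_iff.mp hm
  set z := η + min (ε/2) ((b - η)/2) with hz
  have hmin : 0 < min (ε/2) ((b - η)/2) := lt_min (by linarith) (by linarith)
  have hz1 : η < z := by rw [hz]; linarith
  have hz2 : z < b := by
    have : min (ε/2) ((b - η)/2) ≤ (b - η)/2 := min_le_right _ _
    rw [hz]; linarith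
  have hd : dist z η < ε := by
    rw [Real.dist_eq, abs_of_pos (by linarith : (0:ℝ) < z - η)]
    have : min (ε/2) ((b - η)/2) ≤ ε/2 := min_le_left _ _
    rw [hz]; linarith
  exact absurd (hball hd) (not_le.mpr (h z ⟨hz1, hz2⟩))

lemma not_isLocalMax_left {f : ℝ → ℝ} {η a : ℝ} (ha : a < η)
    (h : ∀ z ∈ Set.Ioo a η, f η < f z) : ¬ IsLocalMax f η := by
  intro hm
  obtain ⟨ε, hε, hball⟩ := Metric.eventually_nhds_iff.mp hm
  set z := η - min (ε/2) ((η - a)/2) with hz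
  have hmin : 0 < min (ε/2) ((η - a)/2) := lt_min (by linarith) (by linarith)
  have hz1 : z < η := by rw [hz]; linarith
  have hz2 : a < z := by
    have : min (ε/2) ((η - a)/2) ≤ (η - a)/2 := min_le_right _ _
    rw [hz]; linarith
  have hd : dist z η < ε := by
    rw [Real.dist_eq, abs_of_neg (by linarith : z - η < 0)]
    have : min (ε/2) ((η - a)/2) ≤ ε/2 := min_le_left _ _
    rw [hz]; linarith
  exact absurd (hball hd) (not_le.mpr (h z ⟨hz2, hz1⟩))

lemma not_isLocalMin_right {f : ℝ → ℝ} {η b : ℝ} (hb : η < b)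
    (h : ∀ z ∈ Set.Ioo η b, f z < f η) : ¬ IsLocalMin f η := by
  intro hm
  have : ¬ IsLocalMax (fun x => -f x) η := by
    apply not_isLocalMax_right hb
    intro z hz
    simpa using h z hz
  exact this (hm.neg)

lemma not_isLocalMin_left {f : ℝ → ℝ} {η a : ℝ} (ha : a < η)
    (h : ∀ z ∈ Set.Ioo a η, f z < f η) : ¬ IsLocalMin f η := by
  intro hm
  have : ¬ IsLocalMax (fun x => -f x) η := by
    apply not_isLocalMax_left ha
    intro z hz
    simpa using h z hz
  exact this (hm.neg)

/-- From the up-down-up-down shape: local extrema are exactly `η₁, η₂, η₃`. -/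
lemma three_point_pattern {f : ℝ → ℝ} {η₁ η₂ η₃ : ℝ} (h12 : η₁ < η₂) (h23 : η₂ < η₃)
    (M1 : StrictMonoOn f (Set.Iic η₁)) (A1 : StrictAntiOn f (Set.Icc η₁ η₂))
    (M2 : StrictMonoOn f (Set.Icc η₂ η₃)) (A2 : StrictAntiOn f (Set.Ici η₃)) :
    IsLocalMax f η₁ ∧ IsLocalMin f η₂ ∧ IsLocalMax f η₃ ∧
    (∀ η, IsLocalMax f η → η = η₁ ∨ η = η₃) ∧ (∀ η, IsLocalMin f η → η = η₂) := by
  refine ⟨?_, ?_, ?_, ?_, ?_⟩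
  · have hset : Set.Ioo (η₁ - 1) η₂ ∈ nhds η₁ :=
      isOpen_Ioo.mem_nhds ⟨by linarith, h12⟩
    filter_upwards [hset] with z hz
    rcases le_or_gt z η₁ with h | h
    · exact M1.monotoneOn (Set.mem_Iic.mpr h) (Set.mem_Iic.mpr le_rfl) h
    · exact (A1.antitoneOn (Set.mem_Icc.mpr ⟨le_rfl, by linarith⟩)
        (Set.mem_Icc.mpr ⟨h.le, hz.2.le⟩) h.le)
  · have hset : Set.Ioo η₁ η₃ ∈ nhds η₂ := isOpen_Ioo.mem_nhds ⟨h12, h23⟩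
    filter_upwards [hset] with z hz
    rcases le_or_gt z η₂ with h | h
    · exact A1.antitoneOn (Set.mem_Icc.mpr ⟨hz.1.le, h⟩)
        (Set.mem_Icc.mpr ⟨h12.le, le_rfl⟩) h
    · exact M2.monotoneOn (Set.mem_Icc.mpr ⟨le_rfl, h23.le⟩)
        (Set.mem_Icc.mpr ⟨h.le, hz.2.le⟩) h.le
  · have hset : Set.Ioo η₂ (η₃ + 1) ∈ nhds η₃ :=
      isOpen_Ioo.mem_nhds ⟨h23, by linarith⟩
    filter_upwards [hset] with z hz
    rcases le_or_gt z η₃ with h | h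
    · exact M2.monotoneOn (Set.mem_Icc.mpr ⟨hz.1.le, h⟩)
        (Set.mem_Icc.mpr ⟨h23.le, le_rfl⟩) h
    · exact A2.antitoneOn (Set.mem_Ici.mpr le_rfl) (Set.mem_Ici.mpr h.le) h.le
  · intro η hmax
    rcases lt_trichotomy η η₁ with h | h | h
    · exfalso
      apply not_isLocalMax_right h ?_ hmax
      intro z hz
      exact M1 (Set.mem_Iic.mpr h.le) (Set.mem_Iic.mpr hz.2.le) hz.1
    · exact Or.inl h
    · rcases le_or_gt η η₂ with h2 | h2
      · exfalso
        apply not_isLocalMax_left h ?_ hmax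
        intro z hz
        exact A1 (Set.mem_Icc.mpr ⟨hz.1.le, by linarith [hz.2]⟩)
          (Set.mem_Icc.mpr ⟨h.le, h2⟩) hz.2
      · rcases lt_trichotomy η η₃ with h3 | h3 | h3
        · exfalso
          apply not_isLocalMax_right h3 ?_ hmax
          intro z hz
          exact M2 (Set.mem_Icc.mpr ⟨h2.le, h3.le⟩)
            (Set.mem_Icc.mpr ⟨by linarith [hz.1], hz.2.le⟩) hz.1
        · exact Or.inr h3
        · exfalso
          apply not_isLocalMax_left h3 ?_ hmax
          intro z hz
          exact A2 (Set.mem_Ici.mpr hz.1.le) (Set.mem_Ici.mpr (by linarith [hz.2])) hz.2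
  · intro η hmin
    rcases lt_trichotomy η η₂ with h | h | h
    · rcases le_or_gt η η₁ with h1 | h1
      · exfalso
        apply not_isLocalMin_left (show η - 1 < η by linarith) ?_ hmin
        intro z hz
        exact M1 (Set.mem_Iic.mpr (by linarith [hz.2] : z ≤ η₁)) (Set.mem_Iic.mpr h1) hz.2
      · exfalso
        apply not_isLocalMin_right h ?_ hmin
        intro z hz
        exact A1 (Set.mem_Icc.mpr ⟨h1.le, h.le⟩)
          (Set.mem_Icc.mpr ⟨by linarith [hz.1], hz.2.le⟩) hz.1
    · exact h
    · exfalso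
      rcases le_or_gt η η₃ with h3 | h3
      · apply not_isLocalMin_left h ?_ hmin
        intro z hz
        exact M2 (Set.mem_Icc.mpr ⟨hz.1.le, by linarith [hz.2]⟩)
          (Set.mem_Icc.mpr ⟨h.le, h3⟩) hz.2
      · apply not_isLocalMin_right (show η < η + 1 by linarith) ?_ hmin
        intro z hz
        exact A2 (Set.mem_Ici.mpr h3.le) (Set.mem_Ici.mpr (by linarith [hz.1])) hz.1


/-- Shape of `G(η) = |V|²` : increasing, decreasing, increasing, decreasing. -/
lemma G_shape {ξ₀ ξ₁ a p s c : ℝ} (hξ : ξ₀ < ξ₁) (ha : 0 < a) (hp : 0 < p)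
    (hs : 0 < s) (hseq : Real.log (s/a) = (1/2)*(s - 1/s))
    (hc : -1 ≤ c) (hc1 : c ≤ 1)
    (hβ : (1+s)^2/(2*s) < p*(ξ₁-ξ₀)^2) :
    ∃ η₁ η₂ η₃ : ℝ, η₁ < η₂ ∧ η₂ < η₃ ∧
      StrictMonoOn (fun η : ℝ => Real.exp (-(2*p*(η-ξ₀)^2)) + a^2*Real.exp (-(2*p*(η-ξ₁)^2))
          + 2*a*c*Real.exp (-(p*((η-ξ₀)^2+(η-ξ₁)^2)))) (Set.Iic η₁) ∧
      StrictAntiOn (fun η : ℝ => Real.exp (-(2*p*(η-ξ₀)^2)) + a^2*Real.exp (-(2*p*(η-ξ₁)^2))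
          + 2*a*c*Real.exp (-(p*((η-ξ₀)^2+(η-ξ₁)^2)))) (Set.Icc η₁ η₂) ∧
      StrictMonoOn (fun η : ℝ => Real.exp (-(2*p*(η-ξ₀)^2)) + a^2*Real.exp (-(2*p*(η-ξ₁)^2))
          + 2*a*c*Real.exp (-(p*((η-ξ₀)^2+(η-ξ₁)^2)))) (Set.Icc η₂ η₃) ∧
      StrictAntiOn (fun η : ℝ => Real.exp (-(2*p*(η-ξ₀)^2)) + a^2*Real.exp (-(2*p*(η-ξ₁)^2))
          + 2*a*c*Real.exp (-(p*((η-ξ₀)^2+(η-ξ₁)^2)))) (Set.Ici η₃) := by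
  set G : ℝ → ℝ := fun η => Real.exp (-(2*p*(η-ξ₀)^2)) + a^2*Real.exp (-(2*p*(η-ξ₁)^2))
      + 2*a*c*Real.exp (-(p*((η-ξ₀)^2+(η-ξ₁)^2))) with hGdef
  have hΔ : 0 < ξ₁ - ξ₀ := by linarith
  set q : ℝ := 2*p*(ξ₁-ξ₀) with hqdef
  have hq : 0 < q := by positivity
  set ξm : ℝ := (ξ₀+ξ₁)/2 with hξmdef
  set β : ℝ := p*(ξ₁-ξ₀)^2 with hβdef
  obtain ⟨x₁, x₂, x₃, h12, h23, P0, P1, P2, P3⟩ := W_pattern ha hc hc1 hs hseq hβ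
  set W : ℝ → ℝ := fun x =>
    (x+β)*Real.exp (-x) + a^2*(x-β)*Real.exp x + 2*a*c*x with hWdef
  set E : ℝ → ℝ := fun η => Real.exp (-(p*((η-ξ₀)^2+(η-ξ₁)^2))) with hEdef
  set D : ℝ → ℝ := fun η => -(4*p/q) * E η * W (q*(η-ξm)) with hDdef
  have hG : ∀ η : ℝ, HasDerivAt G (D η) η := by
    intro η
    have hX : HasDerivAt (fun η : ℝ => η - ξ₀) 1 η := (hasDerivAt_id η).sub_const ξ₀
    have hY : HasDerivAt (fun η : ℝ => η - ξ₁) 1 η := (hasDerivAt_id η).sub_const ξ₁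
    have hX2 : HasDerivAt (fun η : ℝ => (η-ξ₀)^2) (2*(η-ξ₀)) η := by
      simpa using hX.fun_pow 2
    have hY2 : HasDerivAt (fun η : ℝ => (η-ξ₁)^2) (2*(η-ξ₁)) η := by
      simpa using hY.fun_pow 2
    have he1 : HasDerivAt (fun η : ℝ => Real.exp (-(2*p*(η-ξ₀)^2)))
        (Real.exp (-(2*p*(η-ξ₀)^2)) * -(2*p*(2*(η-ξ₀)))) η := by
      exact (((hX2.const_mul (2*p)).neg).exp)
    have he2 : HasDerivAt (fun η : ℝ => Real.exp (-(2*p*(η-ξ₁)^2)))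
        (Real.exp (-(2*p*(η-ξ₁)^2)) * -(2*p*(2*(η-ξ₁)))) η := by
      exact (((hY2.const_mul (2*p)).neg).exp)
    have he3 : HasDerivAt (fun η : ℝ => Real.exp (-(p*((η-ξ₀)^2+(η-ξ₁)^2))))
        (Real.exp (-(p*((η-ξ₀)^2+(η-ξ₁)^2))) * -(p*(2*(η-ξ₀)+2*(η-ξ₁)))) η := by
      exact ((((hX2.add hY2).const_mul p).neg).exp)
    have total := (he1.add (he2.const_mul (a^2))).add (he3.const_mul (2*a*c))
    have key1 : Real.exp (-(2*p*(η-ξ₀)^2))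
        = E η * Real.exp (-(q*(η-ξm))) := by
      rw [hEdef, ← Real.exp_add]
      congr 1
      rw [hqdef, hξmdef]
      ring
    have key2 : Real.exp (-(2*p*(η-ξ₁)^2))
        = E η * Real.exp (q*(η-ξm)) := by
      rw [hEdef, ← Real.exp_add]
      congr 1
      rw [hqdef, hξmdef]
      ring
    have hDeq : D η = Real.exp (-(2*p*(η-ξ₀)^2)) * -(2*p*(2*(η-ξ₀)))
        + a^2 * (Real.exp (-(2*p*(η-ξ₁)^2)) * -(2*p*(2*(η-ξ₁))))
        + 2*a*c * (Real.exp (-(p*((η-ξ₀)^2+(η-ξ₁)^2))) * -(p*(2*(η-ξ₀)+2*(η-ξ₁)))) := by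
      rw [key1, key2, hDdef, hWdef, hEdef, hβdef, hqdef, hξmdef]
      field_simp
      ring
    rw [hGdef, hDeq]
    exact total
  have hcontG : Continuous G := by
    rw [hGdef]
    continuity
  have hDpos_left : ∀ η : ℝ, q*(η-ξm) < x₁ → 0 < D η := by
    intro η hη
    have hW := P0 _ hη
    rw [hDdef]
    have hE : 0 < E η := Real.exp_pos _
    have h4 : 0 < 4*p/q := by positivity
    rw [hWdef] at *
    nlinarith [mul_pos (mul_pos h4 hE) (neg_pos.mpr hW)]
  have hDneg_mid1 : ∀ η : ℝ, x₁ < q*(η-ξm) → q*(η-ξm) < x₂ → D η < 0 := by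
    intro η hη1 hη2
    have hW := P1 _ ⟨hη1, hη2⟩
    rw [hDdef]
    have hE : 0 < E η := Real.exp_pos _
    have h4 : 0 < 4*p/q := by positivity
    rw [hWdef] at *
    nlinarith [mul_pos (mul_pos h4 hE) hW]
  have hDpos_mid2 : ∀ η : ℝ, x₂ < q*(η-ξm) → q*(η-ξm) < x₃ → 0 < D η := by
    intro η hη1 hη2
    have hW := P2 _ ⟨hη1, hη2⟩
    rw [hDdef]
    have hE : 0 < E η := Real.exp_pos _
    have h4 : 0 < 4*p/q := by positivity
    rw [hWdef] at *
    nlinarith [mul_pos (mul_pos h4 hE) (neg_pos.mpr hW)]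
  have hDneg_right : ∀ η : ℝ, x₃ < q*(η-ξm) → D η < 0 := by
    intro η hη
    have hW := P3 _ hη
    rw [hDdef]
    have hE : 0 < E η := Real.exp_pos _
    have h4 : 0 < 4*p/q := by positivity
    rw [hWdef] at *
    nlinarith [mul_pos (mul_pos h4 hE) hW]
  refine ⟨ξm + x₁/q, ξm + x₂/q, ξm + x₃/q, ?_, ?_, ?_, ?_, ?_, ?_⟩
  · have : x₁/q < x₂/q := by
      rw [div_lt_div_iff₀ hq hq]
      nlinarith [mul_pos (sub_pos.mpr h12) hq]
    linarith
  · have : x₂/q < x₃/q := by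
      rw [div_lt_div_iff₀ hq hq]
      nlinarith [mul_pos (sub_pos.mpr h23) hq]
    linarith
  · apply strictMonoOn_of_deriv_pos (convex_Iic _) hcontG.continuousOn
    intro η hη
    rw [interior_Iic, Set.mem_Iio] at hη
    rw [(hG η).deriv]
    apply hDpos_left
    have h1 : η - ξm < x₁/q := by linarith
    have := (lt_div_iff₀ hq).mp h1
    nlinarith [this]
  · apply strictAntiOn_of_deriv_neg (convex_Icc _ _) hcontG.continuousOn
    intro η hη
    rw [interior_Icc, Set.mem_Ioo] at hη
    rw [(hG η).deriv]
    apply hDneg_mid1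
    · have h1 : x₁/q < η - ξm := by linarith [hη.1]
      have := (div_lt_iff₀ hq).mp h1
      nlinarith [this]
    · have h1 : η - ξm < x₂/q := by linarith [hη.2]
      have := (lt_div_iff₀ hq).mp h1
      nlinarith [this]
  · apply strictMonoOn_of_deriv_pos (convex_Icc _ _) hcontG.continuousOn
    intro η hη
    rw [interior_Icc, Set.mem_Ioo] at hη
    rw [(hG η).deriv]
    apply hDpos_mid2
    · have h1 : x₂/q < η - ξm := by linarith [hη.1]
      have := (div_lt_iff₀ hq).mp h1
      nlinarith [this]
    · have h1 : η - ξm < x₃/q := by linarith [hη.2]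
      have := (lt_div_iff₀ hq).mp h1
      nlinarith [this]
  · apply strictAntiOn_of_deriv_neg (convex_Ici _) hcontG.continuousOn
    intro η hη
    rw [interior_Ici, Set.mem_Ioi] at hη
    rw [(hG η).deriv]
    apply hDneg_right
    have h1 : x₃/q < η - ξm := by linarith
    have := (div_lt_iff₀ hq).mp h1
    nlinarith [this]


lemma norm_Vst_sq (ξ₀ ξ₁ a σ t η : ℝ) :
    ‖Vst ξ₀ ξ₁ a σ t η‖^2
      = Real.exp (-(2*(Real.pi^2*σ^2)*(η-ξ₀)^2))
        + a^2*Real.exp (-(2*(Real.pi^2*σ^2)*(η-ξ₁)^2))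
        + 2*a*(Real.cos (2*Real.pi*(ξ₁-ξ₀)*t))
            * Real.exp (-((Real.pi^2*σ^2)*((η-ξ₀)^2+(η-ξ₁)^2))) := by
  rw [Vst, norm_mul]
  have e0 : (2*(Real.pi:ℂ)*Complex.I*(ξ₀:ℂ)*(t:ℂ)) = ((2*Real.pi*ξ₀*t : ℝ):ℂ)*Complex.I := by
    push_cast; ring
  rw [e0, Complex.norm_exp_ofReal_mul_I, one_mul]
  have e1 : (2*(Real.pi:ℂ)*Complex.I*((ξ₁:ℂ)-(ξ₀:ℂ))*(t:ℂ))
      = ((2*Real.pi*(ξ₁-ξ₀)*t : ℝ):ℂ)*Complex.I := by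
    push_cast; ring
  rw [e1]
  set r : ℝ := 2*Real.pi*(ξ₁-ξ₀)*t with hrdef
  set x : ℝ := Real.exp (-(Real.pi ^ 2 * σ ^ 2 * (η - ξ₀) ^ 2)) with hxdef
  set y : ℝ := Real.exp (-(Real.pi ^ 2 * σ ^ 2 * (η - ξ₁) ^ 2)) with hydef
  have key : ‖(x:ℂ) + (a:ℂ)*Complex.exp ((r:ℂ)*Complex.I)*(y:ℂ)‖^2
      = x^2 + a^2*y^2 + 2*a*Real.cos r*(x*y) := by
    rw [Complex.sq_norm]
    simp [Complex.normSq_apply, Complex.add_re, Complex.add_im, Complex.mul_re,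
      Complex.mul_im, Complex.ofReal_re, Complex.ofReal_im,
      Complex.exp_ofReal_mul_I_re, Complex.exp_ofReal_mul_I_im]
    linear_combination (a^2*y^2) * Real.sin_sq_add_cos_sq r
  rw [key]
  have hx2 : x^2 = Real.exp (-(2*(Real.pi^2*σ^2)*(η-ξ₀)^2)) := by
    rw [hxdef, sq, ← Real.exp_add]
    congr 1
    ring
  have hy2 : y^2 = Real.exp (-(2*(Real.pi^2*σ^2)*(η-ξ₁)^2)) := by
    rw [hydef, sq, ← Real.exp_add]
    congr 1
    ring
  have hxy : x*y = Real.exp (-((Real.pi^2*σ^2)*((η-ξ₀)^2+(η-ξ₁)^2))) := by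
    rw [hxdef, hydef, ← Real.exp_add]
    congr 1
    ring
  rw [hx2, hy2, hxy]



/-- if `s` is the unique positive solution of `ln(s/a) = (1/2)(s − 1/s)` and
`Δ > Δ_c = (1+s)/(πσ√(2s))`, then for every `t` the map `η ↦ |V(t,η)|` has exactly two
local-maximum points and exactly one local-minimum point on `ℝ`. -/
theorem stmt3 (ξ₀ ξ₁ a σ s : ℝ) (hξ : ξ₀ < ξ₁) (ha : 0 < a) (hσ : 0 < σ)
    (hs : 0 < s) (hseq : Real.log (s / a) = (1 / 2) * (s - 1 / s))
    (hΔ : (1 + s) / (Real.pi * σ * Real.sqrt (2 * s)) < ξ₁ - ξ₀) :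
    ∀ t : ℝ,
      (∃ η₁ η₂ : ℝ, η₁ ≠ η₂ ∧ IsLocalMax (fun η => ‖Vst ξ₀ ξ₁ a σ t η‖) η₁ ∧
          IsLocalMax (fun η => ‖Vst ξ₀ ξ₁ a σ t η‖) η₂ ∧
          ∀ η : ℝ, IsLocalMax (fun η => ‖Vst ξ₀ ξ₁ a σ t η‖) η → η = η₁ ∨ η = η₂) ∧
      (∃! η : ℝ, IsLocalMin (fun η => ‖Vst ξ₀ ξ₁ a σ t η‖) η) := by
  intro t
  set c : ℝ := Real.cos (2*Real.pi*(ξ₁-ξ₀)*t) with hcdef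
  have hc : -1 ≤ c := Real.neg_one_le_cos _
  have hc1 : c ≤ 1 := Real.cos_le_one _
  set p : ℝ := Real.pi^2*σ^2 with hpdef
  have hπ := Real.pi_pos
  have hp : 0 < p := by rw [hpdef]; positivity
  have hsqpos : 0 < Real.sqrt (2*s) := Real.sqrt_pos.mpr (by positivity)
  have hRHS0 : 0 ≤ (1+s)/(Real.pi*σ*Real.sqrt (2*s)) := by positivity
  have h1 : ((1+s)/(Real.pi*σ*Real.sqrt (2*s)))^2 < (ξ₁-ξ₀)^2 :=
    pow_lt_pow_left₀ hΔ hRHS0 (by norm_num)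
  have hsq : Real.sqrt (2*s)^2 = 2*s := Real.sq_sqrt (by positivity)
  have hβ : (1+s)^2/(2*s) < p*(ξ₁-ξ₀)^2 := by
    rw [div_pow, mul_pow, mul_pow, hsq] at h1
    have e : (1+s)^2/(2*s) = p * ((1+s)^2/(Real.pi^2*σ^2*(2*s))) := by
      rw [hpdef]
      field_simp
    rw [e]
    calc p * ((1+s)^2/(Real.pi^2*σ^2*(2*s))) < p * (ξ₁-ξ₀)^2 := by
          apply mul_lt_mul_of_pos_left _ hp
          exact h1
      _ = p*(ξ₁-ξ₀)^2 := rfl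
  set Gf : ℝ → ℝ := fun η : ℝ => Real.exp (-(2*p*(η-ξ₀)^2)) + a^2*Real.exp (-(2*p*(η-ξ₁)^2))
      + 2*a*c*Real.exp (-(p*((η-ξ₀)^2+(η-ξ₁)^2))) with hGfdef
  set N : ℝ → ℝ := fun η => ‖Vst ξ₀ ξ₁ a σ t η‖ with hNdef
  have hseq' : Real.log (s/a) = (1/2)*(s - 1/s) := hseq
  have hnorm : ∀ η : ℝ, N η ^ 2 = Gf η := by
    intro η
    have h := norm_Vst_sq ξ₀ ξ₁ a σ t η
    rw [← hpdef, ← hcdef] at h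
    calc N η ^ 2 = ‖Vst ξ₀ ξ₁ a σ t η‖^2 := by rw [hNdef]
      _ = Real.exp (-(2*p*(η-ξ₀)^2)) + a^2*Real.exp (-(2*p*(η-ξ₁)^2))
          + 2*a*c*Real.exp (-(p*((η-ξ₀)^2+(η-ξ₁)^2))) := h
      _ = Gf η := rfl
  have hmax_iff : ∀ η : ℝ, IsLocalMax N η ↔ IsLocalMax Gf η := by
    intro η
    constructor
    · intro h
      filter_upwards [h] with z hz
      rw [← hnorm z, ← hnorm η]
      exact pow_le_pow_left₀ (norm_nonneg _) hz 2
    · intro h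
      filter_upwards [h] with z hz
      have h2 : N z ^ 2 ≤ N η ^ 2 := by rw [hnorm z, hnorm η]; exact hz
      exact (pow_le_pow_iff_left₀ (norm_nonneg _) (norm_nonneg _) (by norm_num)).mp h2
  have hmin_iff : ∀ η : ℝ, IsLocalMin N η ↔ IsLocalMin Gf η := by
    intro η
    constructor
    · intro h
      filter_upwards [h] with z hz
      rw [← hnorm z, ← hnorm η]
      exact pow_le_pow_left₀ (norm_nonneg _) hz 2
    · intro h
      filter_upwards [h] with z hz
      have h2 : N η ^ 2 ≤ N z ^ 2 := by rw [hnorm z, hnorm η]; exact hz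
      exact (pow_le_pow_iff_left₀ (norm_nonneg _) (norm_nonneg _) (by norm_num)).mp h2
  obtain ⟨η₁, η₂, η₃, h12, h23, M1, A1, M2, A2⟩ := G_shape hξ ha hp hs hseq' hc hc1 hβ
  obtain ⟨Hmax1, Hmin2, Hmax3, Huniqmax, Huniqmin⟩ :=
    three_point_pattern h12 h23 M1 A1 M2 A2
  constructor
  · refine ⟨η₁, η₃, ne_of_lt (lt_trans h12 h23), ?_, ?_, ?_⟩
    · exact (hmax_iff η₁).mpr Hmax1
    · exact (hmax_iff η₃).mpr Hmax3
    · intro η hη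
      exact Huniqmax η ((hmax_iff η).mp hη)
  · refine ⟨η₂, (hmin_iff η₂).mpr Hmin2, ?_⟩
    intro y hy
    exact Huniqmin y ((hmin_iff y).mp hy)
end
end

section
/- Let a = 1 and 0 < Δ ≤ √2/(πσ). For k ∈ ℤ define the bifurcation times t*^{L,k} = k/Δ + arccos(π²σ²Δ² − 1)/(2πΔ) and t*^{R,k} = (k+1)/Δ − arccos(π²σ²Δ² − 1)/(2πΔ). Then for every t ∈ (t*^{L,k}, t*^{R,k}) the function η ↦ |V(t,η)| has exactly two local-maximum points on ℝ, while for every t ∈ (t*^{R,k−1}, t*^{L,k}) it has exactly one local-maximum point, located at η = ξ̄. -/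
noncomputable section

open MeasureTheory

/-- The left bifurcation time `t*^{L,k} = k/Δ + arccos(π²σ²Δ² − 1)/(2πΔ)`. -/
def tL (ξ₀ ξ₁ σ : ℝ) (k : ℤ) : ℝ :=
  (k : ℝ) / (ξ₁ - ξ₀) +
    Real.arccos (Real.pi ^ 2 * σ ^ 2 * (ξ₁ - ξ₀) ^ 2 - 1) / (2 * Real.pi * (ξ₁ - ξ₀))

/-- The right bifurcation time `t*^{R,k} = (k+1)/Δ − arccos(π²σ²Δ² − 1)/(2πΔ)`. -/
def tR (ξ₀ ξ₁ σ : ℝ) (k : ℤ) : ℝ :=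
  ((k : ℝ) + 1) / (ξ₁ - ξ₀) -
    Real.arccos (Real.pi ^ 2 * σ ^ 2 * (ξ₁ - ξ₀) ^ 2 - 1) / (2 * Real.pi * (ξ₁ - ξ₀))

/-! ### Auxiliary development -/

open Real

/-- Squared modulus of the STFT as a real function of `η`. -/
def Gf (β ξ₀ ξ₁ c : ℝ) : ℝ → ℝ := fun η =>
  Real.exp (-(β*(η-ξ₀)^2))^2 + Real.exp (-(β*(η-ξ₁)^2))^2 +
    2*c*(Real.exp (-(β*(η-ξ₀)^2)) * Real.exp (-(β*(η-ξ₁)^2)))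

/-- The auxiliary transcendental function governing critical points. -/
def Hf (b c v : ℝ) : ℝ := v * Real.cosh v + c * v - b * Real.sinh v

lemma Hf_neg (b c v : ℝ) : Hf b c (-v) = - Hf b c v := by
  simp [Hf]; ring

lemma Hf_cont (b c : ℝ) : Continuous (Hf b c) := by
  unfold Hf; continuity

lemma Hf_hasDeriv (b c v : ℝ) :
    HasDerivAt (Hf b c) (Real.cosh v + v * Real.sinh v + c - b * Real.cosh v) v := by
  unfold Hf
  have := (((hasDerivAt_id v).mul (Real.hasDerivAt_cosh v)).add
    ((hasDerivAt_id v).const_mul c)).sub ((Real.hasDerivAt_sinh v).const_mul b)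
  refine this.congr_deriv ?_
  simp; try ring

private lemma Paux : ∀ v : ℝ, 0 ≤ v → 2 * Real.sinh v ≤ v * Real.cosh v + v := by
  have h1 : ∀ v : ℝ, 0 ≤ v → 0 ≤ v * Real.sinh v + 1 - Real.cosh v := by
    have hm : MonotoneOn (fun v : ℝ => v * Real.sinh v + 1 - Real.cosh v) (Set.Ici 0) := by
      have hd : ∀ v : ℝ, HasDerivAt (fun v : ℝ => v * Real.sinh v + 1 - Real.cosh v)
          (v * Real.cosh v) v := by
        intro v
        have := (((hasDerivAt_id v).mul (Real.hasDerivAt_sinh v)).add_const 1).sub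
          (Real.hasDerivAt_cosh v)
        refine this.congr_deriv ?_
        simp; try ring
      apply monotoneOn_of_deriv_nonneg (convex_Ici 0)
      · exact (Continuous.continuousOn (by continuity))
      · intro x hx
        exact ((hd x).differentiableAt).differentiableWithinAt
      · intro x hx
        rw [interior_Ici] at hx
        rw [(hd x).deriv]
        exact mul_nonneg (le_of_lt hx) (Real.cosh_pos x).le
    intro v hv
    have := hm (Set.self_mem_Ici) hv hv
    simpa using this
  intro v hv
  have hm : MonotoneOn (fun v : ℝ => v * Real.cosh v + v - 2 * Real.sinh v) (Set.Ici 0) := by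
    have hd : ∀ v : ℝ, HasDerivAt (fun v : ℝ => v * Real.cosh v + v - 2 * Real.sinh v)
        (v * Real.sinh v + 1 - Real.cosh v) v := by
      intro v
      have := (((hasDerivAt_id v).mul (Real.hasDerivAt_cosh v)).add (hasDerivAt_id v)).sub
        ((Real.hasDerivAt_sinh v).const_mul 2)
      refine this.congr_deriv ?_
      simp; try ring
    apply monotoneOn_of_deriv_nonneg (convex_Ici 0)
    · exact (Continuous.continuousOn (by continuity))
    · intro x hx; exact ((hd x).differentiableAt).differentiableWithinAt
    · intro x hx
      rw [interior_Ici] at hx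
      rw [(hd x).deriv]
      exact h1 x (le_of_lt hx)
  have := hm (Set.self_mem_Ici) hv hv
  simp at this
  linarith

lemma Hf_pos_of_gt (b c : ℝ) (hb2 : b ≤ 2) (hc : b - 1 < c) :
    ∀ v : ℝ, 0 < v → 0 < Hf b c v := by
  intro v hv
  have h1 := Paux v hv.le
  have h2 : v ≤ Real.sinh v := (Real.self_lt_sinh_iff.mpr hv).le
  have h3 : 0 ≤ Real.sinh v := Real.sinh_nonneg_iff.mpr hv.le
  unfold Hf
  nlinarith

lemma Hf_root (b c : ℝ) (hb2 : b ≤ 2) (hc1 : -1 ≤ c) (hc : c < b - 1) :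
    ∃ w : ℝ, 0 < w ∧ Hf b c w = 0 ∧ (∀ v, 0 < v → v < w → Hf b c v < 0) ∧
      (∀ v, w < v → 0 < Hf b c v) := by
  set Hd : ℝ → ℝ := fun v => Real.cosh v + v * Real.sinh v + c - b * Real.cosh v with hHd
  have hHdD : ∀ v : ℝ, HasDerivAt Hd
      (Real.sinh v + (Real.sinh v + v * Real.cosh v) - b * Real.sinh v) v := by
    intro v
    have := (((Real.hasDerivAt_cosh v).add
      ((hasDerivAt_id v).mul (Real.hasDerivAt_sinh v))).add_const c).sub
      ((Real.hasDerivAt_cosh v).const_mul b)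
    refine this.congr_deriv ?_
    simp; try ring
  have hmono : StrictMonoOn Hd (Set.Ici 0) := by
    apply strictMonoOn_of_deriv_pos (convex_Ici 0)
    · exact Continuous.continuousOn (by continuity)
    · intro x hx
      rw [interior_Ici, Set.mem_Ioi] at hx
      rw [(hHdD x).deriv]
      have h1 : 0 ≤ Real.sinh x := Real.sinh_nonneg_iff.mpr hx.le
      have h2 : 0 < Real.cosh x := Real.cosh_pos x
      nlinarith
  have hd0 : Hd 0 < 0 := by
    simp [hHd]; linarith
  have hd3 : 0 < Hd 3 := by
    have e3 : (3:ℝ) + 1 < Real.exp 3 := by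
      have := Real.add_one_lt_exp (x := 3) (by norm_num)
      linarith
    have e3' : Real.exp (-3 : ℝ) ≤ 1 := by
      rw [Real.exp_le_one_iff]; norm_num
    simp only [hHd, Real.cosh_eq, Real.sinh_eq]
    nlinarith
  have hcont : ContinuousOn Hd (Set.Icc 0 3) := Continuous.continuousOn (by continuity)
  obtain ⟨v₀, hv₀mem, hv₀⟩ : ∃ v₀ ∈ Set.Ioo (0:ℝ) 3, Hd v₀ = 0 := by
    have := intermediate_value_Ioo (by norm_num : (0:ℝ) ≤ 3) hcont
    have h0 : (0:ℝ) ∈ Set.Ioo (Hd 0) (Hd 3) := ⟨hd0, hd3⟩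
    obtain ⟨v₀, hmem, heq⟩ := this h0
    exact ⟨v₀, hmem, heq⟩
  have hdneg : ∀ v : ℝ, 0 ≤ v → v < v₀ → Hd v < 0 := by
    intro v hv hvlt
    have := hmono hv (Set.mem_Ici.mpr (hv.trans hvlt.le)) hvlt
    rwa [hv₀] at this
  have hdpos : ∀ v : ℝ, v₀ < v → 0 < Hd v := by
    intro v hvlt
    have h0 : (0:ℝ) ≤ v₀ := hv₀mem.1.le
    have := hmono (Set.mem_Ici.mpr h0) (Set.mem_Ici.mpr (h0.trans hvlt.le)) hvlt
    rwa [hv₀] at this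
  have hanti : StrictAntiOn (Hf b c) (Set.Icc 0 v₀) := by
    apply strictAntiOn_of_deriv_neg (convex_Icc 0 v₀)
    · exact (Hf_cont b c).continuousOn
    · intro x hx
      rw [interior_Icc, Set.mem_Ioo] at hx
      rw [(Hf_hasDeriv b c x).deriv]
      exact hdneg x hx.1.le hx.2
  have hmono2 : StrictMonoOn (Hf b c) (Set.Ici v₀) := by
    apply strictMonoOn_of_deriv_pos (convex_Ici v₀)
    · exact (Hf_cont b c).continuousOn
    · intro x hx
      rw [interior_Ici, Set.mem_Ioi] at hx
      rw [(Hf_hasDeriv b c x).deriv]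
      exact hdpos x hx
  have hf0 : Hf b c 0 = 0 := by simp [Hf]
  have hfv₀ : Hf b c v₀ < 0 := by
    have := hanti (Set.left_mem_Icc.mpr hv₀mem.1.le)
      (Set.right_mem_Icc.mpr hv₀mem.1.le) hv₀mem.1
    rwa [hf0] at this
  have hbig : ∀ v : ℝ, 6 ≤ v → 0 < Hf b c v := by
    intro v hv
    have hv0 : (0:ℝ) < v := by linarith
    have hA : v + 1 < Real.exp v := by
      have := Real.add_one_lt_exp (ne_of_gt hv0); linarith
    have hB0 : 0 < Real.exp (-v) := Real.exp_pos _
    have hB1 : Real.exp (-v) ≤ 1 := by rw [Real.exp_le_one_iff]; linarith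
    simp only [Hf, Real.cosh_eq, Real.sinh_eq]
    nlinarith [mul_nonneg (by linarith : (0:ℝ) ≤ v - 2) (by linarith : (0:ℝ) ≤ Real.exp v - (v+1))]
  have hfV : 0 < Hf b c (v₀ + 6) := hbig _ (by linarith [hv₀mem.1])
  obtain ⟨w, hwmem, hw⟩ : ∃ w ∈ Set.Ioo v₀ (v₀ + 6), Hf b c w = 0 := by
    have := intermediate_value_Ioo (by linarith : v₀ ≤ v₀ + 6) (Hf_cont b c).continuousOn
    obtain ⟨w, hmem, heq⟩ := this (⟨hfv₀, hfV⟩ : (0:ℝ) ∈ Set.Ioo (Hf b c v₀) (Hf b c (v₀+6)))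
    exact ⟨w, hmem, heq⟩
  refine ⟨w, hv₀mem.1.trans hwmem.1, hw, ?_, ?_⟩
  · intro v hv0' hvw
    rcases le_or_gt v v₀ with hle | hlt
    · have := hanti (Set.left_mem_Icc.mpr hv₀mem.1.le) ⟨hv0'.le, hle⟩ hv0'
      rwa [hf0] at this
    · have := hmono2 (Set.mem_Ici.mpr hlt.le) (Set.mem_Ici.mpr hwmem.1.le) hvw
      rwa [hw] at this
  · intro v hvw
    have := hmono2 (Set.mem_Ici.mpr hwmem.1.le)
      (Set.mem_Ici.mpr (hwmem.1.le.trans hvw.le)) hvw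
    rwa [hw] at this

lemma Gf_cont (β ξ₀ ξ₁ c : ℝ) : Continuous (Gf β ξ₀ ξ₁ c) := by
  unfold Gf; continuity

lemma Gf_nonneg (β ξ₀ ξ₁ c : ℝ) (hc1 : -1 ≤ c) (hc2 : c ≤ 1) (η : ℝ) :
    0 ≤ Gf β ξ₀ ξ₁ c η := by
  unfold Gf
  set A := Real.exp (-(β*(η-ξ₀)^2))
  set B := Real.exp (-(β*(η-ξ₁)^2))
  nlinarith [sq_nonneg (A - B), sq_nonneg (A + B)]

lemma norm_Vst (ξ₀ ξ₁ σ t η : ℝ) :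
    ‖Vst ξ₀ ξ₁ 1 σ t η‖ =
      Real.sqrt (Gf (Real.pi^2*σ^2) ξ₀ ξ₁ (Real.cos (2*Real.pi*(ξ₁-ξ₀)*t)) η) := by
  set A := Real.exp (-(Real.pi^2*σ^2*(η-ξ₀)^2)) with hA
  set B := Real.exp (-(Real.pi^2*σ^2*(η-ξ₁)^2)) with hB
  set θ := 2*Real.pi*(ξ₁-ξ₀)*t with hθ
  have h1 : Vst ξ₀ ξ₁ 1 σ t η = Complex.exp (2 * Real.pi * Complex.I * ξ₀ * t) *
      (((A + B*Real.cos θ : ℝ) : ℂ) + ((B*Real.sin θ : ℝ) : ℂ)*Complex.I) := by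
    rw [Vst]
    have h2 : (2*(Real.pi:ℂ)*Complex.I*((ξ₁:ℂ)-(ξ₀:ℂ))*(t:ℂ)) = ((θ:ℝ):ℂ)*Complex.I := by
      rw [hθ]; push_cast; ring
    rw [h2, Complex.exp_mul_I]
    simp only [← Complex.ofReal_cos, ← Complex.ofReal_sin, Complex.ofReal_add,
      Complex.ofReal_mul, Complex.ofReal_one, one_mul]
    rw [hA, hB]
    ring_nf
  rw [h1, norm_mul]
  have h2 : ‖Complex.exp (2 * (Real.pi:ℂ) * Complex.I * (ξ₀:ℂ) * (t:ℂ))‖ = 1 := by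
    rw [Complex.norm_exp]
    have : (2 * (Real.pi:ℂ) * Complex.I * (ξ₀:ℂ) * (t:ℂ)).re = 0 := by
      simp [Complex.mul_re, Complex.mul_im]
    rw [this, Real.exp_zero]
  rw [h2, one_mul, Complex.norm_add_mul_I]
  congr 1
  unfold Gf
  rw [← hA, ← hB]
  have := Real.sin_sq_add_cos_sq θ
  nlinarith [this]

lemma hasDerivAt_gauss (β ξ₀ η : ℝ) :
    HasDerivAt (fun η => Real.exp (-(β*(η-ξ₀)^2)))
      (-(β*(2*(η-ξ₀))) * Real.exp (-(β*(η-ξ₀)^2))) η := by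
  have h1 : HasDerivAt (fun η : ℝ => -(β*(η-ξ₀)^2)) (-(β*(2*(η-ξ₀)))) η := by
    have := (((hasDerivAt_id η).sub_const ξ₀).pow 2).const_mul β
    refine this.neg.congr_deriv ?_
    simp
  have := h1.exp
  rw [mul_comm] at this
  exact this

lemma hasDerivAt_Gf (β ξ₀ ξ₁ c : ℝ) (hξ : ξ₀ < ξ₁) (η : ℝ) :
    HasDerivAt (Gf β ξ₀ ξ₁ c)
      (-(4 * (Real.exp (-(β*(η-ξ₀)^2)) * Real.exp (-(β*(η-ξ₁)^2))) / (ξ₁-ξ₀)) *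
        Hf (β*(ξ₁-ξ₀)^2) c (β*(ξ₁-ξ₀)*(2*η-ξ₀-ξ₁))) η := by
  have hΔ : (ξ₁ - ξ₀) ≠ 0 := sub_ne_zero.mpr (ne_of_gt hξ)
  set A := Real.exp (-(β*(η-ξ₀)^2)) with hA
  set B := Real.exp (-(β*(η-ξ₁)^2)) with hB
  have hA0 : A ≠ 0 := (Real.exp_pos _).ne'
  have hB0 : B ≠ 0 := (Real.exp_pos _).ne'
  have hAd := hasDerivAt_gauss β ξ₀ η
  have hBd := hasDerivAt_gauss β ξ₁ η
  have hD := ((hAd.pow 2).add (hBd.pow 2)).add ((hAd.mul hBd).const_mul (2*c))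
  have hexp1 : Real.exp (β*(ξ₁-ξ₀)*(2*η-ξ₀-ξ₁)) = B / A := by
    rw [eq_div_iff hA0, hA, ← Real.exp_add, hB]
    congr 1
    ring
  have hexp2 : Real.exp (-(β*(ξ₁-ξ₀)*(2*η-ξ₀-ξ₁))) = A / B := by
    rw [eq_div_iff hB0, hB, ← Real.exp_add, hA]
    congr 1
    ring
  refine hD.congr_deriv ?_
  unfold Hf
  rw [Real.cosh_eq, Real.sinh_eq, hexp1, hexp2]
  field_simp
  ring

section core
variable (β ξ₀ ξ₁ c : ℝ)

lemma deriv_Gf (hξ : ξ₀ < ξ₁) (η : ℝ) :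
    deriv (Gf β ξ₀ ξ₁ c) η =
      -(4 * (Real.exp (-(β*(η-ξ₀)^2)) * Real.exp (-(β*(η-ξ₁)^2))) / (ξ₁-ξ₀)) *
        Hf (β*(ξ₁-ξ₀)^2) c (β*(ξ₁-ξ₀)*(2*η-ξ₀-ξ₁)) :=
  (hasDerivAt_Gf β ξ₀ ξ₁ c hξ η).deriv

lemma deriv_Gf_pos (hξ : ξ₀ < ξ₁) (η : ℝ)
    (h : Hf (β*(ξ₁-ξ₀)^2) c (β*(ξ₁-ξ₀)*(2*η-ξ₀-ξ₁)) < 0) :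
    0 < deriv (Gf β ξ₀ ξ₁ c) η := by
  rw [deriv_Gf β ξ₀ ξ₁ c hξ η]
  have hk : 0 < 4 * (Real.exp (-(β*(η-ξ₀)^2)) * Real.exp (-(β*(η-ξ₁)^2))) / (ξ₁-ξ₀) := by
    have := Real.exp_pos (-(β*(η-ξ₀)^2))
    have := Real.exp_pos (-(β*(η-ξ₁)^2))
    have : (0:ℝ) < ξ₁ - ξ₀ := sub_pos.mpr hξ
    positivity
  exact mul_pos_of_neg_of_neg (by linarith) h

lemma deriv_Gf_neg (hξ : ξ₀ < ξ₁) (η : ℝ)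
    (h : 0 < Hf (β*(ξ₁-ξ₀)^2) c (β*(ξ₁-ξ₀)*(2*η-ξ₀-ξ₁))) :
    deriv (Gf β ξ₀ ξ₁ c) η < 0 := by
  rw [deriv_Gf β ξ₀ ξ₁ c hξ η]
  have hk : 0 < 4 * (Real.exp (-(β*(η-ξ₀)^2)) * Real.exp (-(β*(η-ξ₁)^2))) / (ξ₁-ξ₀) := by
    have := Real.exp_pos (-(β*(η-ξ₀)^2))
    have := Real.exp_pos (-(β*(η-ξ₁)^2))
    have : (0:ℝ) < ξ₁ - ξ₀ := sub_pos.mpr hξ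
    positivity
  exact mul_neg_of_neg_of_pos (by linarith) h

lemma Hf_vm_zero (hξ : ξ₀ < ξ₁) (η : ℝ)
    (hmax : IsLocalMax (Gf β ξ₀ ξ₁ c) η) :
    Hf (β*(ξ₁-ξ₀)^2) c (β*(ξ₁-ξ₀)*(2*η-ξ₀-ξ₁)) = 0 := by
  have h0 := hmax.deriv_eq_zero
  rw [deriv_Gf β ξ₀ ξ₁ c hξ η] at h0
  have hk : 0 < 4 * (Real.exp (-(β*(η-ξ₀)^2)) * Real.exp (-(β*(η-ξ₁)^2))) / (ξ₁-ξ₀) := by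
    have := Real.exp_pos (-(β*(η-ξ₀)^2))
    have := Real.exp_pos (-(β*(η-ξ₁)^2))
    have : (0:ℝ) < ξ₁ - ξ₀ := sub_pos.mpr hξ
    positivity
  rcases mul_eq_zero.mp h0 with h | h
  · exact absurd h (by linarith)
  · exact h

lemma coreB (hβ : 0 < β) (hξ : ξ₀ < ξ₁) (hb2 : β*(ξ₁-ξ₀)^2 ≤ 2)
    (hc : β*(ξ₁-ξ₀)^2 - 1 < c) :
    IsLocalMax (Gf β ξ₀ ξ₁ c) ((ξ₀+ξ₁)/2) ∧
      ∀ η, IsLocalMax (Gf β ξ₀ ξ₁ c) η → η = (ξ₀+ξ₁)/2 := by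
  set b := β*(ξ₁-ξ₀)^2 with hb
  set G := Gf β ξ₀ ξ₁ c with hG
  set m := (ξ₀+ξ₁)/2 with hm
  have hΔ : (0:ℝ) < ξ₁ - ξ₀ := sub_pos.mpr hξ
  have hK : (0:ℝ) < β*(ξ₁-ξ₀) := mul_pos hβ hΔ
  have hHpos : ∀ η, m < η → 0 < Hf b c (β*(ξ₁-ξ₀)*(2*η-ξ₀-ξ₁)) := by
    intro η hη
    exact Hf_pos_of_gt b c hb2 hc _ (by nlinarith)
  have hHneg : ∀ η, η < m → Hf b c (β*(ξ₁-ξ₀)*(2*η-ξ₀-ξ₁)) < 0 := by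
    intro η hη
    have h1 : 0 < Hf b c (-(β*(ξ₁-ξ₀)*(2*η-ξ₀-ξ₁))) :=
      Hf_pos_of_gt b c hb2 hc _ (by nlinarith)
    rw [Hf_neg] at h1
    linarith
  have hmono : StrictMonoOn G (Set.Iic m) := by
    apply strictMonoOn_of_deriv_pos (convex_Iic m) (Gf_cont β ξ₀ ξ₁ c).continuousOn
    intro x hx
    rw [interior_Iic, Set.mem_Iio] at hx
    exact deriv_Gf_pos β ξ₀ ξ₁ c hξ x (hHneg x hx)
  have hanti : StrictAntiOn G (Set.Ici m) := by
    apply strictAntiOn_of_deriv_neg (convex_Ici m) (Gf_cont β ξ₀ ξ₁ c).continuousOn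
    intro x hx
    rw [interior_Ici, Set.mem_Ioi] at hx
    exact deriv_Gf_neg β ξ₀ ξ₁ c hξ x (hHpos x hx)
  constructor
  · have hle : ∀ x, G x ≤ G m := by
      intro x
      rcases le_or_gt x m with h | h
      · rcases eq_or_lt_of_le h with h' | h'
        · exact le_of_eq (by rw [h'])
        · exact (hmono (Set.mem_Iic.mpr h) (Set.mem_Iic.mpr le_rfl) h').le
      · exact (hanti (Set.mem_Ici.mpr le_rfl) (Set.mem_Ici.mpr h.le) h).le
    exact Filter.Eventually.of_forall hle
  · intro η hmax
    have h0 := Hf_vm_zero β ξ₀ ξ₁ c hξ η hmax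
    rcases lt_trichotomy η m with h | h | h
    · exact absurd h0 (ne_of_lt (hHneg η h))
    · exact h
    · exact absurd h0 (ne_of_gt (hHpos η h))

lemma coreA (hβ : 0 < β) (hξ : ξ₀ < ξ₁) (hb2 : β*(ξ₁-ξ₀)^2 ≤ 2)
    (hc1 : -1 ≤ c) (hc : c < β*(ξ₁-ξ₀)^2 - 1) :
    ∃ η₁ η₂ : ℝ, η₁ ≠ η₂ ∧ IsLocalMax (Gf β ξ₀ ξ₁ c) η₁ ∧ IsLocalMax (Gf β ξ₀ ξ₁ c) η₂ ∧
      ∀ η : ℝ, IsLocalMax (Gf β ξ₀ ξ₁ c) η → η = η₁ ∨ η = η₂ := by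
  set b := β*(ξ₁-ξ₀)^2 with hb
  set G := Gf β ξ₀ ξ₁ c with hG
  set m := (ξ₀+ξ₁)/2 with hm
  have hΔ : (0:ℝ) < ξ₁ - ξ₀ := sub_pos.mpr hξ
  have hK : (0:ℝ) < β*(ξ₁-ξ₀) := mul_pos hβ hΔ
  obtain ⟨w, hw0, hwz, hwneg, hwpos⟩ := Hf_root b c hb2 hc1 hc
  set δ := w / (2*(β*(ξ₁-ξ₀))) with hδ
  have hδ0 : 0 < δ := by positivity
  have hKδ : β*(ξ₁-ξ₀)*(2*δ) = w := by
    rw [hδ]; field_simp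
  set η₂ := m + δ with hη₂
  set η₁ := m - δ with hη₁
  have hne : η₁ ≠ η₂ := by rw [hη₁, hη₂]; intro h; nlinarith
  have hvm : ∀ η : ℝ, β*(ξ₁-ξ₀)*(2*η-ξ₀-ξ₁) = 2*(β*(ξ₁-ξ₀))*(η - m) := by
    intro η; rw [hm]; ring
  have s1 : ∀ η, m < η → η < η₂ → Hf b c (β*(ξ₁-ξ₀)*(2*η-ξ₀-ξ₁)) < 0 := by
    intro η h1 h2
    apply hwneg
    · rw [hvm]; nlinarith
    · rw [hvm]; nlinarith
  have s2 : ∀ η, η₂ < η → 0 < Hf b c (β*(ξ₁-ξ₀)*(2*η-ξ₀-ξ₁)) := by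
    intro η h1
    apply hwpos
    rw [hvm]; nlinarith
  have s3 : ∀ η, η₁ < η → η < m → 0 < Hf b c (β*(ξ₁-ξ₀)*(2*η-ξ₀-ξ₁)) := by
    intro η h1 h2
    have := hwneg (-(β*(ξ₁-ξ₀)*(2*η-ξ₀-ξ₁))) (by rw [hvm]; nlinarith) (by rw [hvm]; nlinarith)
    rw [Hf_neg] at this
    linarith
  have s4 : ∀ η, η < η₁ → Hf b c (β*(ξ₁-ξ₀)*(2*η-ξ₀-ξ₁)) < 0 := by
    intro η h1
    have := hwpos (-(β*(ξ₁-ξ₀)*(2*η-ξ₀-ξ₁))) (by rw [hvm]; nlinarith)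
    rw [Hf_neg] at this
    linarith
  have M1 : StrictMonoOn G (Set.Icc m η₂) := by
    apply strictMonoOn_of_deriv_pos (convex_Icc m η₂) (Gf_cont β ξ₀ ξ₁ c).continuousOn
    intro x hx
    rw [interior_Icc, Set.mem_Ioo] at hx
    exact deriv_Gf_pos β ξ₀ ξ₁ c hξ x (s1 x hx.1 hx.2)
  have M2 : StrictAntiOn G (Set.Ici η₂) := by
    apply strictAntiOn_of_deriv_neg (convex_Ici η₂) (Gf_cont β ξ₀ ξ₁ c).continuousOn
    intro x hx
    rw [interior_Ici, Set.mem_Ioi] at hx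
    exact deriv_Gf_neg β ξ₀ ξ₁ c hξ x (s2 x hx)
  have M3 : StrictAntiOn G (Set.Icc η₁ m) := by
    apply strictAntiOn_of_deriv_neg (convex_Icc η₁ m) (Gf_cont β ξ₀ ξ₁ c).continuousOn
    intro x hx
    rw [interior_Icc, Set.mem_Ioo] at hx
    exact deriv_Gf_neg β ξ₀ ξ₁ c hξ x (s3 x hx.1 hx.2)
  have M4 : StrictMonoOn G (Set.Iic η₁) := by
    apply strictMonoOn_of_deriv_pos (convex_Iic η₁) (Gf_cont β ξ₀ ξ₁ c).continuousOn
    intro x hx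
    rw [interior_Iic, Set.mem_Iio] at hx
    exact deriv_Gf_pos β ξ₀ ξ₁ c hξ x (s4 x hx)
  have hmη₂ : m < η₂ := by rw [hη₂]; linarith
  have hη₁m : η₁ < m := by rw [hη₁]; linarith
  have lmax2 : IsLocalMax G η₂ := by
    have hnb : Set.Ioo m (η₂+1) ∈ nhds η₂ := Ioo_mem_nhds hmη₂ (by linarith)
    filter_upwards [hnb] with x hx
    rcases lt_trichotomy x η₂ with h | h | h
    · exact (M1 ⟨hx.1.le, h.le⟩ ⟨hmη₂.le, le_rfl⟩ h).le
    · exact le_of_eq (by rw [h])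
    · exact (M2 (Set.mem_Ici.mpr le_rfl) (Set.mem_Ici.mpr h.le) h).le
  have lmax1 : IsLocalMax G η₁ := by
    have hnb : Set.Ioo (η₁-1) m ∈ nhds η₁ := Ioo_mem_nhds (by linarith) hη₁m
    filter_upwards [hnb] with x hx
    rcases lt_trichotomy x η₁ with h | h | h
    · exact (M4 (Set.mem_Iic.mpr h.le) (Set.mem_Iic.mpr le_rfl) h).le
    · exact le_of_eq (by rw [h])
    · exact (M3 ⟨le_rfl, hη₁m.le⟩ ⟨h.le, hx.2.le⟩ h).le
  refine ⟨η₁, η₂, hne, lmax1, lmax2, ?_⟩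
  intro η hmax
  have h0 := Hf_vm_zero β ξ₀ ξ₁ c hξ η hmax
  rcases lt_trichotomy η m with hlt | heq | hgt
  · rcases lt_trichotomy η η₁ with h | h | h
    · exact absurd h0 (ne_of_lt (s4 η h))
    · exact Or.inl h
    · exact absurd h0 (ne_of_gt (s3 η h hlt))
  · exfalso
    have h1 : ∀ᶠ x in nhdsWithin η (Set.Ioi η), G x ≤ G η :=
      hmax.filter_mono nhdsWithin_le_nhds
    have h2 : Set.Ioo η η₂ ∈ nhdsWithin η (Set.Ioi η) := by
      apply Ioo_mem_nhdsGT_of_mem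
      exact ⟨le_rfl, by rw [heq]; exact hmη₂⟩
    obtain ⟨x, hle, hmem⟩ := (h1.and (Filter.eventually_of_mem h2 (fun x hx => hx))).exists
    have : G η < G x := by
      subst heq
      exact M1 ⟨le_rfl, hmη₂.le⟩ ⟨hmem.1.le, hmem.2.le⟩ hmem.1
    linarith
  · rcases lt_trichotomy η η₂ with h | h | h
    · exact absurd h0 (ne_of_lt (s1 η hgt h))
    · exact Or.inr h
    · exact absurd h0 (ne_of_gt (s2 η h))

end core

lemma isLocalMax_sqrt_iff {g : ℝ → ℝ} (hg : ∀ x, 0 ≤ g x) (η : ℝ) :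
    IsLocalMax (fun x => Real.sqrt (g x)) η ↔ IsLocalMax g η := by
  constructor
  · intro h
    exact h.mono fun x hx => (Real.sqrt_le_sqrt_iff (hg η)).mp hx
  · intro h
    exact h.mono fun x hx => Real.sqrt_le_sqrt hx

lemma cos_lt_of (α x : ℝ) (hα0 : 0 ≤ α) (hαπ : α ≤ Real.pi) (h1 : α < x)
    (h2 : x < 2*Real.pi - α) : Real.cos x < Real.cos α := by
  rcases le_or_gt x Real.pi with h | h
  · exact Real.strictAntiOn_cos ⟨hα0, hαπ⟩ ⟨hα0.trans h1.le, h⟩ h1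
  · rw [← Real.cos_two_pi_sub]
    exact Real.strictAntiOn_cos ⟨hα0, hαπ⟩ ⟨by linarith, by linarith⟩ (by linarith)

lemma cos_gt_of (α x : ℝ) (hαπ : α ≤ Real.pi) (h1 : -α < x) (h2 : x < α) :
    Real.cos α < Real.cos x := by
  have hα0 : 0 < α := by linarith
  have habs : |x| < α := abs_lt.mpr ⟨h1, h2⟩
  rw [← Real.cos_abs x]
  exact Real.strictAntiOn_cos ⟨abs_nonneg x, (habs.le.trans hαπ)⟩ ⟨hα0.le, hαπ⟩ habs

/-- with `a = 1` and `0 < Δ ≤ √2/(πσ)`, for `t ∈ (t*^{L,k}, t*^{R,k})` the map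
`η ↦ |V(t,η)|` has exactly two local-maximum points, while for `t ∈ (t*^{R,k−1}, t*^{L,k})`
it has exactly one, located at `ξ̄`. -/
theorem stmt5 (ξ₀ ξ₁ σ : ℝ) (hξ : ξ₀ < ξ₁) (hσ : 0 < σ)
    (hΔ : ξ₁ - ξ₀ ≤ Real.sqrt 2 / (Real.pi * σ)) :
    ∀ k : ℤ,
      (∀ t : ℝ, tL ξ₀ ξ₁ σ k < t → t < tR ξ₀ ξ₁ σ k →
        ∃ η₁ η₂ : ℝ, η₁ ≠ η₂ ∧ IsLocalMax (fun η => ‖Vst ξ₀ ξ₁ 1 σ t η‖) η₁ ∧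
          IsLocalMax (fun η => ‖Vst ξ₀ ξ₁ 1 σ t η‖) η₂ ∧
          ∀ η : ℝ, IsLocalMax (fun η => ‖Vst ξ₀ ξ₁ 1 σ t η‖) η → η = η₁ ∨ η = η₂) ∧
      (∀ t : ℝ, tR ξ₀ ξ₁ σ (k - 1) < t → t < tL ξ₀ ξ₁ σ k →
        IsLocalMax (fun η => ‖Vst ξ₀ ξ₁ 1 σ t η‖) ((ξ₀ + ξ₁) / 2) ∧
        ∀ η : ℝ, IsLocalMax (fun η => ‖Vst ξ₀ ξ₁ 1 σ t η‖) η → η = (ξ₀ + ξ₁) / 2) := by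
  have hπ : (0:ℝ) < Real.pi := Real.pi_pos
  have hΔ0 : (0:ℝ) < ξ₁ - ξ₀ := sub_pos.mpr hξ
  set β := Real.pi^2*σ^2 with hβdef
  have hβ : 0 < β := by positivity
  set b := β*(ξ₁-ξ₀)^2 with hbdef
  have hb0 : 0 < b := by positivity
  have hb2 : b ≤ 2 := by
    have hπσ : (0:ℝ) < Real.pi*σ := by positivity
    have h2 : (ξ₁-ξ₀)*(Real.pi*σ) ≤ Real.sqrt 2 := by
      rw [← le_div_iff₀ hπσ]; exact hΔ
    have hs : Real.sqrt 2 ^ 2 = 2 := Real.sq_sqrt (by norm_num)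
    have h3 : ((ξ₁-ξ₀)*(Real.pi*σ))^2 ≤ (Real.sqrt 2)^2 :=
      pow_le_pow_left₀ (by positivity) h2 2
    rw [hs] at h3
    rw [hbdef, hβdef]
    nlinarith [h3]
  set α := Real.arccos (Real.pi ^ 2 * σ ^ 2 * (ξ₁ - ξ₀) ^ 2 - 1) with hαdef
  have hαb : Real.pi ^ 2 * σ ^ 2 * (ξ₁ - ξ₀) ^ 2 - 1 = b - 1 := by rw [hbdef, hβdef]
  have hα0 : 0 ≤ α := Real.arccos_nonneg _
  have hαπ : α ≤ Real.pi := Real.arccos_le_pi _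
  have hcosα : Real.cos α = b - 1 := by
    rw [hαdef, hαb, Real.cos_arccos (by linarith) (by linarith)]
  intro k
  constructor
  · -- two maxima regime
    intro t htL htR
    set c := Real.cos (2*Real.pi*(ξ₁-ξ₀)*t) with hcdef
    have hc1 : -1 ≤ c := Real.neg_one_le_cos _
    have hc2 : c ≤ 1 := Real.cos_le_one _
    -- bounds on x := 2πΔt - 2πk
    have e1 : 2*Real.pi*(ξ₁-ξ₀)*(tL ξ₀ ξ₁ σ k) = 2*Real.pi*k + α := by
      rw [tL, ← hαdef]; field_simp
    have e2 : 2*Real.pi*(ξ₁-ξ₀)*(tR ξ₀ ξ₁ σ k) = 2*Real.pi*(k+1) - α := by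
      rw [tR, ← hαdef]; field_simp
    have hmul : (0:ℝ) < 2*Real.pi*(ξ₁-ξ₀) := by positivity
    have h1' : 2*Real.pi*k + α < 2*Real.pi*(ξ₁-ξ₀)*t := by
      have := mul_lt_mul_of_pos_left htL hmul
      linarith [e1]
    have h2' : 2*Real.pi*(ξ₁-ξ₀)*t < 2*Real.pi*(k+1) - α := by
      have := mul_lt_mul_of_pos_left htR hmul
      linarith [e2]
    have hper : c = Real.cos (2*Real.pi*(ξ₁-ξ₀)*t - k*(2*Real.pi)) := by
      rw [hcdef]
      have harg : 2*Real.pi*(ξ₁-ξ₀)*t =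
          (2*Real.pi*(ξ₁-ξ₀)*t - k*(2*Real.pi)) + (k:ℤ)*(2*Real.pi) := by push_cast; ring
      conv_lhs => rw [harg]
      rw [Real.cos_add_int_mul_two_pi]
    have hclt : c < b - 1 := by
      rw [hper, ← hcosα]
      apply cos_lt_of α _ hα0 hαπ (by push_cast; linarith) (by push_cast; linarith)
    obtain ⟨η₁, η₂, hne, hm1, hm2, huniq⟩ := coreA β ξ₀ ξ₁ c hβ hξ hb2 hc1 (by rw [← hbdef]; exact hclt)
    have htrans : ∀ η : ℝ, IsLocalMax (fun η => ‖Vst ξ₀ ξ₁ 1 σ t η‖) η ↔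
        IsLocalMax (Gf β ξ₀ ξ₁ c) η := by
      intro η
      have hfun : (fun η => ‖Vst ξ₀ ξ₁ 1 σ t η‖) =
          fun η => Real.sqrt (Gf β ξ₀ ξ₁ c η) := by
        funext x
        rw [norm_Vst, hβdef, hcdef]
      rw [hfun]
      exact isLocalMax_sqrt_iff (Gf_nonneg β ξ₀ ξ₁ c hc1 hc2) η
    exact ⟨η₁, η₂, hne, (htrans η₁).mpr hm1, (htrans η₂).mpr hm2,
      fun η h => huniq η ((htrans η).mp h)⟩
  · -- one maximum regime
    intro t htR htL
    set c := Real.cos (2*Real.pi*(ξ₁-ξ₀)*t) with hcdef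
    have hc1 : -1 ≤ c := Real.neg_one_le_cos _
    have hc2 : c ≤ 1 := Real.cos_le_one _
    have e1 : 2*Real.pi*(ξ₁-ξ₀)*(tL ξ₀ ξ₁ σ k) = 2*Real.pi*k + α := by
      rw [tL, ← hαdef]; field_simp
    have e3 : 2*Real.pi*(ξ₁-ξ₀)*(tR ξ₀ ξ₁ σ (k-1)) = 2*Real.pi*k - α := by
      rw [tR, ← hαdef]; push_cast; field_simp; ring
    have hmul : (0:ℝ) < 2*Real.pi*(ξ₁-ξ₀) := by positivity
    have h1' : 2*Real.pi*k - α < 2*Real.pi*(ξ₁-ξ₀)*t := by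
      have := mul_lt_mul_of_pos_left htR hmul
      linarith [e3]
    have h2' : 2*Real.pi*(ξ₁-ξ₀)*t < 2*Real.pi*k + α := by
      have := mul_lt_mul_of_pos_left htL hmul
      linarith [e1]
    have hper : c = Real.cos (2*Real.pi*(ξ₁-ξ₀)*t - k*(2*Real.pi)) := by
      rw [hcdef]
      have harg : 2*Real.pi*(ξ₁-ξ₀)*t =
          (2*Real.pi*(ξ₁-ξ₀)*t - k*(2*Real.pi)) + (k:ℤ)*(2*Real.pi) := by push_cast; ring
      conv_lhs => rw [harg]
      rw [Real.cos_add_int_mul_two_pi]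
    have hcgt : b - 1 < c := by
      rw [hper, ← hcosα]
      apply cos_gt_of α _ hαπ (by push_cast; linarith) (by push_cast; linarith)
    obtain ⟨hm, huniq⟩ := coreB β ξ₀ ξ₁ c hβ hξ hb2 (by rw [← hbdef]; exact hcgt)
    have htrans : ∀ η : ℝ, IsLocalMax (fun η => ‖Vst ξ₀ ξ₁ 1 σ t η‖) η ↔
        IsLocalMax (Gf β ξ₀ ξ₁ c) η := by
      intro η
      have hfun : (fun η => ‖Vst ξ₀ ξ₁ 1 σ t η‖) =
          fun η => Real.sqrt (Gf β ξ₀ ξ₁ c η) := by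
        funext x
        rw [norm_Vst, hβdef, hcdef]
      rw [hfun]
      exact isLocalMax_sqrt_iff (Gf_nonneg β ξ₀ ξ₁ c hc1 hc2) η
    exact ⟨(htrans _).mpr hm, fun η h => huniq η ((htrans η).mp h)⟩
end
end

section
/- V(t,η) = 0 if and only if there exists k ∈ ℤ such that t = (k + 1/2)/Δ and η = η_AVG = ξ̄ − (ln a)/(2π²σ²Δ); that is, the zero set of V is exactly the set of points (t_k⁻, η_AVG) indexed by k ∈ ℤ. -/
noncomputable section

open MeasureTheory

/-- the zero set of `V` is exactly the set of points
`(t_k⁻, η_AVG) = ((k + 1/2)/Δ, ξ̄ − ln a/(2π²σ²Δ))`, `k ∈ ℤ`. -/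
theorem stmt8 (ξ₀ ξ₁ a σ : ℝ) (hξ : ξ₀ < ξ₁) (ha : 0 < a) (hσ : 0 < σ) (t η : ℝ) :
    Vst ξ₀ ξ₁ a σ t η = 0 ↔
      ∃ k : ℤ, t = ((k : ℝ) + 1 / 2) / (ξ₁ - ξ₀) ∧
        η = (ξ₀ + ξ₁) / 2 - Real.log a / (2 * Real.pi ^ 2 * σ ^ 2 * (ξ₁ - ξ₀)) := by
  have hΔ : (0:ℝ) < ξ₁ - ξ₀ := sub_pos.mpr hξ
  have hπ : (0:ℝ) < Real.pi := Real.pi_pos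
  set A := Real.exp (-(Real.pi ^ 2 * σ ^ 2 * (η - ξ₀) ^ 2)) with hA
  set C := Real.exp (-(Real.pi ^ 2 * σ ^ 2 * (η - ξ₁) ^ 2)) with hC
  have hA0 : 0 < A := Real.exp_pos _
  have hC0 : 0 < C := Real.exp_pos _
  set z : ℂ := 2 * Real.pi * Complex.I * (ξ₁ - ξ₀) * t with hz
  have hfac : Vst ξ₀ ξ₁ a σ t η = 0 ↔
      (A:ℂ) + (a:ℂ) * Complex.exp z * C = 0 := by
    unfold Vst
    rw [mul_eq_zero]
    simp [Complex.exp_ne_zero, ← hA, ← hC, hz]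
  rw [hfac]
  constructor
  · intro h
    have h2 : (a:ℂ) * Complex.exp z * C = -(A:ℂ) := by linear_combination h
    have habs : a * C = A := by
      have := congrArg (‖·‖) h2
      simp only [norm_mul, norm_neg, Complex.norm_exp, Complex.norm_real, Real.norm_eq_abs,
        abs_of_pos ha, abs_of_pos hA0, abs_of_pos hC0] at this
      have hre : z.re = 0 := by
        simp [hz]
      rw [hre, Real.exp_zero] at this
      linarith [this]
    have hexp : Complex.exp z = -1 := by
      have hAC : ((a*C : ℝ) : ℂ) = (A:ℂ) := by exact_mod_cast congrArg Complex.ofReal habs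
      push_cast at hAC
      have hAne : (A:ℂ) ≠ 0 := by exact_mod_cast hA0.ne'
      field_simp at h2
      have : Complex.exp z * (A:ℂ) = -(A:ℂ) := by
        calc Complex.exp z * (A:ℂ) = (a:ℂ) * Complex.exp z * C := by rw [← hAC]; ring
        _ = -(A:ℂ) := h2
      have := mul_right_cancel₀ hAne (by linear_combination this : Complex.exp z * (A:ℂ) = (-1) * (A:ℂ))
      exact this
    -- get t
    have h1 : Complex.exp (z - Real.pi * Complex.I) = 1 := by
      rw [Complex.exp_sub, hexp, Complex.exp_pi_mul_I]
      norm_num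
    rw [Complex.exp_eq_one_iff] at h1
    obtain ⟨n, hn⟩ := h1
    have him := congrArg Complex.im hn
    simp [hz, Complex.mul_im, Complex.ofReal_re, Complex.ofReal_im] at him
    -- him should be: 2π(ξ₁-ξ₀)t - π = n * 2π (roughly)
    refine ⟨n, ?_, ?_⟩
    · field_simp
      nlinarith [him, hπ]
    · have hlog := congrArg Real.log habs
      rw [Real.log_mul ha.ne' hC0.ne', hA, hC, Real.log_exp, Real.log_exp] at hlog
      have hd : Real.pi ^ 2 * σ ^ 2 * (ξ₁ - ξ₀) ≠ 0 := by positivity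
      field_simp
      nlinarith [hlog]
  · rintro ⟨k, ht, hη⟩
    have hexp : Complex.exp z = -1 := by
      have : z = (2 * k + 1) * (Real.pi * Complex.I) := by
        rw [hz, ht]
        push_cast
        have : ((ξ₁ : ℂ) - ξ₀) ≠ 0 := by
          exact_mod_cast (sub_ne_zero.mpr hξ.ne')
        field_simp
      rw [this]
      rw [show ((2:ℂ) * k + 1) * (Real.pi * Complex.I) = 2 * Real.pi * Complex.I * k + Real.pi * Complex.I by ring]
      rw [Complex.exp_add, Complex.exp_pi_mul_I]
      rw [show (2:ℂ) * Real.pi * Complex.I * k = (k:ℤ) * (2 * Real.pi * Complex.I) by ring]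
      rw [Complex.exp_int_mul_two_pi_mul_I]
      ring
    rw [hexp]
    have hAC : A = a * C := by
      rw [hA, hC, show (a : ℝ) = Real.exp (Real.log a) from (Real.exp_log ha).symm, ← Real.exp_add]
      congr 1
      rw [hη]
      have hd : Real.pi ^ 2 * σ ^ 2 * (ξ₁ - ξ₀) ≠ 0 := by positivity
      field_simp
      ring
    rw [hAC]
    push_cast
    ring
end
end
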